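/- arXiv:nlin/0004019 — 8 statements merged into one kernel-verified Lean document; each statement's English description precedes it below -/
import Mathlib

section
/- For every a ∈ Q and t ∈ [0,T₀), the function t ↦ g(a,t) is differentiable and satisfies the nonlocal conservative Riccati equation along Lagrangian labels: ∂_t g(a,t) = −g(a,t)² + (2/|Q|) ∫_Q g(b,t)² J(b,τ(t)) db; moreover g(a,0) = φ₀(a). -/
open MeasureTheory Real Set Filter Metric



lemma keyDeriv (Q : Set (ℝ × ℝ)) (hQm : MeasurableSet Q) (hQc : IsCompact Q)
    (u : ℝ × ℝ → ℝ) (hu : ContinuousOn u Q) (k m : ℕ) (τ₀ ε δ : ℝ) (hε : 0 < ε) (hδ : 0 < δ)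
    (hpos : ∀ τ ∈ Metric.ball τ₀ ε, ∀ a ∈ Q, δ ≤ 1 + τ * u a) :
    HasDerivAt (fun τ => ∫ a in Q, u a ^ k / (1 + τ * u a) ^ (m + 1))
      (∫ a in Q, -((m : ℝ) + 1) * u a ^ (k + 1) / (1 + τ₀ * u a) ^ (m + 2)) τ₀ := by
  obtain ⟨M, hM⟩ := hQc.exists_bound_of_continuousOn hu
  set M' : ℝ := max M 1 with hM'
  have hM1 : (1:ℝ) ≤ M' := le_max_right _ _
  have hMb : ∀ a ∈ Q, |u a| ≤ M' := fun a ha => (hM a ha).trans (le_max_left _ _)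
  have hum : AEMeasurable u (volume.restrict Q) := hu.aemeasurable hQm
  have hmeas : ∀ x : ℝ, AEStronglyMeasurable (fun a => u a ^ k / (1 + x * u a) ^ (m + 1))
      (volume.restrict Q) := fun x =>
    ((hum.pow_const k).div
      ((aemeasurable_const.add (aemeasurable_const.mul hum)).pow_const (m+1))).aestronglyMeasurable
  have hmeas' : AEStronglyMeasurable
      (fun a => -((m : ℝ) + 1) * u a ^ (k + 1) / (1 + τ₀ * u a) ^ (m + 2))
      (volume.restrict Q) :=
    ((aemeasurable_const.mul (hum.pow_const (k+1))).div
      ((aemeasurable_const.add (aemeasurable_const.mul hum)).pow_const (m+2))).aestronglyMeasurable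
  have hμfin : volume Q < ⊤ := hQc.measure_lt_top
  have hae : ∀ (p : ℝ × ℝ → Prop), (∀ a ∈ Q, p a) → ∀ᵐ a ∂(volume.restrict Q), p a :=
    fun p hp => (ae_restrict_iff' hQm).2 (Filter.Eventually.of_forall hp)
  have hPpos : ∀ x ∈ Metric.ball τ₀ ε, ∀ a ∈ Q, (0:ℝ) < 1 + x * u a :=
    fun x hx a ha => lt_of_lt_of_le hδ (hpos x hx a ha)
  have hdiff : ∀ a ∈ Q, ∀ x ∈ Metric.ball τ₀ ε,
      HasDerivAt (fun τ => u a ^ k / (1 + τ * u a) ^ (m + 1))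
        (-((m : ℝ) + 1) * u a ^ (k + 1) / (1 + x * u a) ^ (m + 2)) x := by
    intro a ha x hx
    have hP : (0:ℝ) < 1 + x * u a := hPpos x hx a ha
    have h0 : HasDerivAt (fun τ : ℝ => 1 + τ * u a) (u a) x := by
      simpa using (hasDerivAt_mul_const (u a)).const_add 1
    have hinv := (h0.pow (m+1)).inv (pow_ne_zero _ hP.ne')
    have hfin := hinv.const_mul (u a ^ k)
    have hfun : (fun τ : ℝ => u a ^ k * ((1 + τ * u a) ^ (m+1))⁻¹)
        = (fun τ => u a ^ k / (1 + τ * u a) ^ (m + 1)) := by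
      funext τ; rw [div_eq_mul_inv]
    simp only [Pi.inv_apply, Pi.pow_apply, Nat.cast_add, Nat.cast_one, Nat.add_sub_cancel] at hfin
    rw [hfun] at hfin
    refine hfin.congr_deriv ?_
    have hPP : ((1 + x * u a) ^ (m+1)) ^ 2 = (1 + x * u a) ^ (m+2) * (1 + x * u a) ^ m := by
      rw [← pow_mul, ← pow_add]; congr 1; omega
    rw [hPP]
    have h2 : (1 + x * u a) ^ (m+2) ≠ 0 := pow_ne_zero _ hP.ne'
    have h3 : (1 + x * u a) ^ m ≠ 0 := pow_ne_zero _ hP.ne'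
    field_simp
    ring_nf
  have : IsFiniteMeasure (volume.restrict Q) :=
    ⟨by rwa [Measure.restrict_apply_univ]⟩
  have key := hasDerivAt_integral_of_dominated_loc_of_deriv_le (x₀ := τ₀)
    (μ := volume.restrict Q)
    (F := fun x a => u a ^ k / (1 + x * u a) ^ (m + 1))
    (F' := fun x a => -((m : ℝ) + 1) * u a ^ (k + 1) / (1 + x * u a) ^ (m + 2))
    (bound := fun _ => ((m : ℝ) + 1) * M' ^ (k + 1) / δ ^ (m + 2)) (Metric.ball_mem_nhds τ₀ hε)
    (Filter.Eventually.of_forall hmeas)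
    ?hint hmeas' ?hbound (integrable_const _) ?hdiff
  · exact key.2
  case hint =>
    refine (integrable_const (M' ^ k / δ ^ (m+1))).mono' (hmeas τ₀) (hae _ ?_)
    intro a ha
    have h1 : δ ≤ 1 + τ₀ * u a := hpos τ₀ (mem_ball_self hε) a ha
    have h2 : (0:ℝ) < 1 + τ₀ * u a := lt_of_lt_of_le hδ h1
    rw [Real.norm_eq_abs, abs_div, abs_pow, abs_pow, abs_of_pos h2]
    refine div_le_div₀ (by positivity) (pow_le_pow_left₀ (abs_nonneg _) (hMb a ha) _)
      (by positivity) (pow_le_pow_left₀ hδ.le h1 _)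
  case hbound =>
    refine hae _ ?_
    intro a ha x hx
    have h1 : δ ≤ 1 + x * u a := hpos x hx a ha
    have h2 : (0:ℝ) < 1 + x * u a := lt_of_lt_of_le hδ h1
    rw [Real.norm_eq_abs, abs_div, abs_pow, abs_of_pos h2, abs_mul, abs_pow]
    refine div_le_div₀ (by positivity) ?_ (by positivity) (pow_le_pow_left₀ hδ.le h1 _)
    have : |(-((m:ℝ)+1))| = (m:ℝ)+1 := by rw [abs_neg, abs_of_pos]; positivity
    rw [this]
    exact mul_le_mul_of_nonneg_left (pow_le_pow_left₀ (abs_nonneg _) (hMb a ha) _) (by positivity)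
  case hdiff =>
    exact hae _ hdiff


lemma algJ (A B P φ l : ℝ) (hA : A ≠ 0) (hP : P ≠ 0) (hl : l ≠ 0) :
    ((((1/l^2) * A)^2)⁻¹ * (φ/P - B/A))^2 * (1/(P * (1/l^2 * A)))
      = l^10/A^5 * (φ^2/P^3) + ((-(2*l^10) * B/A^6) * (φ/P^2) + (l^10*B^2/A^7) * (1/P)) := by
  field_simp
  ring

set_option maxHeartbeats 1000000 in
/-- Along Lagrangian labels, `g(a,·)` is differentiable on `[0,T₀)` and solves the
nonlocal conservative Riccati equation
`∂ₜ g(a,t) = −g(a,t)² + (2/|Q|) ∫_Q g(b,t)² J(b,τ(t)) db`, with `g(a,0) = φ₀(a)`. -/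
theorem stmt_0
    (L : ℝ) (hL : 0 < L)
    (Q : Set (ℝ × ℝ)) (hQ : Q = Set.Icc (0, 0) (L, L))
    (φ₀ : ℝ × ℝ → ℝ) (hφcont : ContinuousOn φ₀ Q)
    (hmean : ∫ a in Q, φ₀ a = 0)
    (m₀ : ℝ) (hmin : ∀ a ∈ Q, m₀ ≤ φ₀ a) (hatt : ∃ a ∈ Q, φ₀ a = m₀)
    (hm₀ : m₀ < 0)
    (τstar : ℝ) (hτstar : τstar = -1 / m₀)
    (F φbar α : ℝ → ℝ)
    (hF : ∀ τ ∈ Set.Ico 0 τstar, F τ = (1 / L ^ 2) * ∫ a in Q, 1 / (1 + τ * φ₀ a))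
    (hφbar : ∀ τ ∈ Set.Ico 0 τstar,
      φbar τ = (∫ a in Q, φ₀ a / (1 + τ * φ₀ a) ^ 2) / (∫ a in Q, 1 / (1 + τ * φ₀ a)))
    (hα : ∀ τ ∈ Set.Ico 0 τstar, α τ = ((F τ) ^ 2)⁻¹)
    (J : ℝ × ℝ → ℝ → ℝ)
    (hJ : ∀ τ ∈ Set.Ico 0 τstar, ∀ a ∈ Q, J a τ = 1 / ((1 + τ * φ₀ a) * F τ))
    (T₀ : EReal) (hT₀ : 0 < T₀)
    (D : Set ℝ) (hD : D = {t : ℝ | 0 ≤ t ∧ (t : EReal) < T₀})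
    (τ : ℝ → ℝ) (hτ0 : τ 0 = 0)
    (hτmem : ∀ t ∈ D, τ t ∈ Set.Ico 0 τstar)
    (hτ' : ∀ t ∈ D, HasDerivWithinAt τ (α (τ t)) D t)
    (g : ℝ × ℝ → ℝ → ℝ)
    (hg : ∀ a ∈ Q, ∀ t ∈ D,
      g a t = α (τ t) * (φ₀ a / (1 + τ t * φ₀ a) - φbar (τ t))) :
    ∀ a ∈ Q, ∀ t ∈ D,
      HasDerivWithinAt (g a)
        (-(g a t) ^ 2 + (2 / L ^ 2) * ∫ b in Q, (g b t) ^ 2 * J b (τ t)) D t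
      ∧ g a 0 = φ₀ a := by
  have hQm : MeasurableSet Q := hQ ▸ measurableSet_Icc
  have hQc : IsCompact Q := hQ ▸ isCompact_Icc
  have hvol : (volume Q).toReal = L ^ 2 := by
    have : volume Q = ENNReal.ofReal L * ENNReal.ofReal L := by
      rw [hQ, ← Set.Icc_prod_Icc, MeasureTheory.Measure.volume_eq_prod, Measure.prod_prod,
        Real.volume_Icc, sub_zero]
    rw [this, ENNReal.toReal_mul, ENNReal.toReal_ofReal hL.le, sq]
  -- uniform bound on φ₀
  obtain ⟨M, hM⟩ := hQc.exists_bound_of_continuousOn hφcont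
  set M' : ℝ := max M 1 with hM'def
  have hM1 : (1:ℝ) ≤ M' := le_max_right _ _
  have hMb : ∀ a ∈ Q, |φ₀ a| ≤ M' := fun a ha => (hM a ha).trans (le_max_left _ _)
  have hτstar_pos : 0 < τstar := by
    rw [hτstar]; exact div_pos_of_neg_of_neg (by norm_num) hm₀
  have h0D : (0:ℝ) ∈ D := by
    rw [hD]; exact ⟨le_refl 0, by exact_mod_cast hT₀⟩
  have h0mem : (0:ℝ) ∈ Set.Ico 0 τstar := ⟨le_refl 0, hτstar_pos⟩
  -- the value at time zero
  have hg0 : ∀ a ∈ Q, g a 0 = φ₀ a := by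
    intro a ha
    have hF0 : F 0 = 1 := by
      rw [hF 0 h0mem]
      simp only [zero_mul, add_zero, div_one]
      rw [MeasureTheory.setIntegral_const, measureReal_def, hvol, smul_eq_mul]
      field_simp
    have hφbar0 : φbar 0 = 0 := by
      rw [hφbar 0 h0mem]
      simp only [zero_mul, add_zero, one_pow, div_one, hmean, zero_div]
    rw [hg a ha 0 h0D, hτ0, hα 0 h0mem, hF0, hφbar0]
    simp
  intro a ha t ht
  refine ⟨?_, hg0 a ha⟩
  obtain ⟨hs0, hs1⟩ := hτmem t ht
  -- positivity of denominators
  set d : ℝ := 1 + τ t * m₀ with hddef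
  have hd : 0 < d := by
    have h1 : τ t * m₀ > τstar * m₀ := by
      exact mul_lt_mul_of_neg_right hs1 hm₀
    have h2 : τstar * m₀ = -1 := by
      rw [hτstar]; field_simp; rw [div_self hm₀.ne]
    simp only [hddef]; linarith
  have hPQ : ∀ b ∈ Q, d ≤ 1 + τ t * φ₀ b := by
    intro b hb
    have := mul_le_mul_of_nonneg_left (hmin b hb) hs0
    simp only [hddef]; linarith
  have hPapos : ∀ b ∈ Q, (0:ℝ) < 1 + τ t * φ₀ b := fun b hb => lt_of_lt_of_le hd (hPQ b hb)
  set ε : ℝ := d / (2 * M') with hεdef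
  have hε : 0 < ε := by positivity
  have hball : ∀ τ' ∈ Metric.ball (τ t) ε, ∀ b ∈ Q, d / 2 ≤ 1 + τ' * φ₀ b := by
    intro τ' hτ'' b hb
    have h1 : d ≤ 1 + τ t * φ₀ b := hPQ b hb
    have h2 : |(τ' - τ t) * φ₀ b| ≤ ε * M' := by
      rw [abs_mul]
      exact mul_le_mul (le_of_lt (by simpa [Real.dist_eq] using hτ'')) (hMb b hb)
        (abs_nonneg _) (le_of_lt hε)
    have h3 : ε * M' = d / 2 := by
      rw [hεdef]; field_simp
    have h4 : -(d/2) ≤ (τ' - τ t) * φ₀ b := by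
      rw [← h3]; exact neg_le_of_abs_le h2
    have : 1 + τ' * φ₀ b = (1 + τ t * φ₀ b) + (τ' - τ t) * φ₀ b := by ring
    rw [this]; linarith
  -- continuity / integrability helpers
  have hcontP : ContinuousOn (fun b => 1 + τ t * φ₀ b) Q :=
    continuousOn_const.add (continuousOn_const.mul hφcont)
  have hintk : ∀ k n : ℕ, IntegrableOn (fun b => φ₀ b ^ k / (1 + τ t * φ₀ b) ^ n) Q := by
    intro k n
    exact ((hφcont.pow k).div (hcontP.pow n)
      (fun b hb => pow_ne_zero _ (hPapos b hb).ne')).integrableOn_compact hQc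
  have hintA : IntegrableOn (fun b => 1 / (1 + τ t * φ₀ b)) Q := by
    have := hintk 0 1
    simpa using this
  -- positivity of AA
  have hAA : 0 < (∫ b in Q, 1 / (1 + τ t * φ₀ b)) := by
    have hc : (0:ℝ) < (1 + τ t * M')⁻¹ := by
      have : (0:ℝ) < 1 + τ t * M' := by nlinarith
      positivity
    have hmono : ∀ b ∈ Q, (1 + τ t * M')⁻¹ ≤ 1 / (1 + τ t * φ₀ b) := by
      intro b hb
      rw [one_div]
      apply inv_anti₀ (hPapos b hb)
      have h := (hMb b hb)
      have := (abs_le.mp h).2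
      nlinarith
    have hle := MeasureTheory.setIntegral_mono_on
      (MeasureTheory.integrableOn_const hQc.measure_lt_top.ne) hintA hQm hmono
    rw [MeasureTheory.setIntegral_const, measureReal_def, hvol, smul_eq_mul] at hle
    have : 0 < L ^ 2 * (1 + τ t * M')⁻¹ := by positivity
    linarith
  have hAA' : (∫ b in Q, 1 / (1 + τ t * φ₀ b)) ≠ 0 := hAA.ne'
  have hL2 : (L:ℝ) ^ 2 ≠ 0 := by positivity
  have hFne : (1 / L ^ 2) * (∫ b in Q, 1 / (1 + τ t * φ₀ b)) ≠ 0 := (mul_pos (by positivity) hAA).ne'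
  have hPa : (0:ℝ) < 1 + τ t * φ₀ a := hPapos a ha
  -- derivative of A
  have hA' : HasDerivAt (fun r => ∫ b in Q, 1 / (1 + r * φ₀ b)) (-(∫ b in Q, φ₀ b / (1 + τ t * φ₀ b) ^ 2)) (τ t) := by
    have h := keyDeriv Q hQm hQc φ₀ hφcont 0 0 (τ t) ε (d/2) hε (by positivity) hball
    have hfun : (fun r : ℝ => ∫ b in Q, φ₀ b ^ 0 / (1 + r * φ₀ b) ^ (0+1))
        = fun r : ℝ => ∫ b in Q, 1 / (1 + r * φ₀ b) := by
      funext r; norm_num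
    rw [hfun] at h
    convert h using 1
    rw [← MeasureTheory.integral_neg]
    congr 1; funext b; push_cast; norm_num [neg_div]
  -- derivative of B
  have hB' : HasDerivAt (fun r => ∫ b in Q, φ₀ b / (1 + r * φ₀ b) ^ 2)
      (-2 * (∫ b in Q, φ₀ b ^ 2 / (1 + τ t * φ₀ b) ^ 3)) (τ t) := by
    have h := keyDeriv Q hQm hQc φ₀ hφcont 1 1 (τ t) ε (d/2) hε (by positivity) hball
    have hfun : (fun r : ℝ => ∫ b in Q, φ₀ b ^ 1 / (1 + r * φ₀ b) ^ (1+1))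
        = fun r : ℝ => ∫ b in Q, φ₀ b / (1 + r * φ₀ b) ^ 2 := by
      funext r; norm_num
    rw [hfun] at h
    convert h using 1
    rw [← MeasureTheory.integral_const_mul]
    congr 1; funext b; push_cast; norm_num; ring
  -- pointwise derivative
  have hψ' : HasDerivAt (fun r : ℝ => φ₀ a / (1 + r * φ₀ a))
      (-(φ₀ a ^ 2) / (1 + τ t * φ₀ a) ^ 2) (τ t) := by
    have h0 : HasDerivAt (fun r : ℝ => 1 + r * φ₀ a) (φ₀ a) (τ t) := by
      simpa using (hasDerivAt_mul_const (φ₀ a)).const_add 1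
    have h1 := (h0.inv hPa.ne').const_mul (φ₀ a)
    have hfun : (fun r : ℝ => φ₀ a * (1 + r * φ₀ a)⁻¹)
        = fun r => φ₀ a / (1 + r * φ₀ a) := by
      funext r; rw [div_eq_mul_inv]
    simp only [Pi.inv_apply] at h1
    rw [hfun] at h1
    refine h1.congr_deriv ?_
    field_simp
  -- assemble derivative of G
  have hAc : HasDerivAt (fun r => (1 / L ^ 2) * ∫ b in Q, 1 / (1 + r * φ₀ b))
      ((1 / L ^ 2) * -(∫ b in Q, φ₀ b / (1 + τ t * φ₀ b) ^ 2)) (τ t) := hA'.const_mul _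
  have hsq := hAc.pow 2
  have hinv := hsq.inv (pow_ne_zero 2 hFne)
  have hquot := hB'.div hA' hAA'
  have hdiff2 := hψ'.sub hquot
  have hGd := hinv.mul hdiff2
  have hcomp := hGd.comp_hasDerivWithinAt t (hτ' t ht)
  have hgG : ∀ x ∈ D, g a x =
      (((1 / L ^ 2) * ∫ b in Q, 1 / (1 + τ x * φ₀ b)) ^ 2)⁻¹ *
        (φ₀ a / (1 + τ x * φ₀ a) -
          (∫ b in Q, φ₀ b / (1 + τ x * φ₀ b) ^ 2) / (∫ b in Q, 1 / (1 + τ x * φ₀ b))) := by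
    intro x hx
    rw [hg a ha x hx, hα _ (hτmem x hx), hF _ (hτmem x hx), hφbar _ (hτmem x hx)]
  have hgd := hcomp.congr (fun x hx => hgG x hx) (hgG t ht)
  -- the nonlocal integral
  have hI : (∫ b in Q, g b t ^ 2 * J b (τ t)) =
      L ^ 10 / (∫ b in Q, 1 / (1 + τ t * φ₀ b)) ^ 5 * (∫ b in Q, φ₀ b ^ 2 / (1 + τ t * φ₀ b) ^ 3)
      + ((-(2 * L ^ 10) * (∫ b in Q, φ₀ b / (1 + τ t * φ₀ b) ^ 2) / (∫ b in Q, 1 / (1 + τ t * φ₀ b)) ^ 6) * (∫ b in Q, φ₀ b / (1 + τ t * φ₀ b) ^ 2)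
      + (L ^ 10 * (∫ b in Q, φ₀ b / (1 + τ t * φ₀ b) ^ 2) ^ 2 / (∫ b in Q, 1 / (1 + τ t * φ₀ b)) ^ 7) * (∫ b in Q, 1 / (1 + τ t * φ₀ b))) := by
    have hptw : Set.EqOn (fun b => g b t ^ 2 * J b (τ t))
        (fun b => L ^ 10 / (∫ b in Q, 1 / (1 + τ t * φ₀ b)) ^ 5 * (φ₀ b ^ 2 / (1 + τ t * φ₀ b) ^ 3)
          + ((-(2 * L ^ 10) * (∫ b in Q, φ₀ b / (1 + τ t * φ₀ b) ^ 2) / (∫ b in Q, 1 / (1 + τ t * φ₀ b)) ^ 6) * (φ₀ b / (1 + τ t * φ₀ b) ^ 2)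
          + (L ^ 10 * (∫ b in Q, φ₀ b / (1 + τ t * φ₀ b) ^ 2) ^ 2 / (∫ b in Q, 1 / (1 + τ t * φ₀ b)) ^ 7) * (1 / (1 + τ t * φ₀ b)))) Q := by
      intro b hb
      simp only
      rw [hg b hb t ht, hJ _ (hτmem t ht) b hb, hα _ (hτmem t ht), hF _ (hτmem t ht),
        hφbar _ (hτmem t ht)]
      exact algJ (∫ b in Q, 1 / (1 + τ t * φ₀ b)) (∫ b in Q, φ₀ b / (1 + τ t * φ₀ b) ^ 2) (1 + τ t * φ₀ b) (φ₀ b) L hAA' (hPapos b hb).ne' hL.ne'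
    have hint1 : IntegrableOn (fun b => φ₀ b ^ 2 / (1 + τ t * φ₀ b) ^ 3) Q := hintk 2 3
    have hint2 : IntegrableOn (fun b => φ₀ b / (1 + τ t * φ₀ b) ^ 2) Q := by
      have := hintk 1 2; simpa using this
    rw [MeasureTheory.setIntegral_congr_fun hQm hptw]
    have hg23 : IntegrableOn (fun b =>
        (-(2 * L ^ 10) * (∫ b in Q, φ₀ b / (1 + τ t * φ₀ b) ^ 2) / (∫ b in Q, 1 / (1 + τ t * φ₀ b)) ^ 6) * (φ₀ b / (1 + τ t * φ₀ b) ^ 2)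
        + (L ^ 10 * (∫ b in Q, φ₀ b / (1 + τ t * φ₀ b) ^ 2) ^ 2 / (∫ b in Q, 1 / (1 + τ t * φ₀ b)) ^ 7) * (1 / (1 + τ t * φ₀ b))) Q := by
      exact (hint2.const_mul _).add (hintA.const_mul _)
    rw [MeasureTheory.integral_add (hint1.const_mul _) hg23,
      MeasureTheory.integral_add (hint2.const_mul _) (hintA.const_mul _),
      MeasureTheory.integral_const_mul, MeasureTheory.integral_const_mul,
      MeasureTheory.integral_const_mul]
  simp only [Pi.inv_apply, Pi.pow_apply, Pi.mul_apply, Pi.sub_apply, Pi.div_apply] at hgd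
  refine hgd.congr_deriv ?_
  rw [hI, hgG t ht, hα _ (hτmem t ht), hF _ (hτmem t ht)]
  set IA := ∫ b in Q, 1 / (1 + τ t * φ₀ b) with hIAdef
  set IB := ∫ b in Q, φ₀ b / (1 + τ t * φ₀ b) ^ 2 with hIBdef
  set IC := ∫ b in Q, φ₀ b ^ 2 / (1 + τ t * φ₀ b) ^ 3 with hICdef
  push_cast
  set P := 1 + τ t * φ₀ a with hPdef
  have hPa' : P ≠ 0 := hPa.ne'
  field_simp
  ring
end

section
/- The function φ̄ is differentiable on [0,τ*) and satisfies φ̄'(τ) = φ̄(τ)² − (2/(|Q| F(τ))) ∫_Q φ₀(a)²/(1+τφ₀(a))³ da for every τ ∈ [0,τ*). -/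
open MeasureTheory Real Set Filter

open Metric

lemma aux_deriv_int (Q : Set (ℝ × ℝ)) (hQc : IsCompact Q) (hQm : MeasurableSet Q)
    (φ₀ : ℝ × ℝ → ℝ) (hφcont : ContinuousOn φ₀ Q)
    (p k : ℕ) (τ ε c : ℝ) (hε : 0 < ε) (hc : 0 < c)
    (hlow : ∀ a ∈ Q, ∀ t ∈ ball τ ε, c ≤ 1 + t * φ₀ a) :
    HasDerivAt (fun t => ∫ a in Q, φ₀ a ^ p / (1 + t * φ₀ a) ^ (k + 1))
      (∫ a in Q, -((k : ℝ) + 1) * φ₀ a ^ (p + 1) / (1 + τ * φ₀ a) ^ (k + 2)) τ := by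
  obtain ⟨C, hC⟩ := hQc.exists_bound_of_continuousOn hφcont
  set C0 : ℝ := max C 0 with hC0def
  have hC0 : 0 ≤ C0 := le_max_right _ _
  have hCb : ∀ a ∈ Q, |φ₀ a| ≤ C0 := fun a ha =>
    le_trans (by simpa [Real.norm_eq_abs] using hC a ha) (le_max_left _ _)
  have hτball : τ ∈ ball τ ε := mem_ball_self hε
  have hden : ∀ t ∈ ball τ ε, ∀ a ∈ Q, (0:ℝ) < 1 + t * φ₀ a := fun t ht a ha =>
    lt_of_lt_of_le hc (hlow a ha t ht)
  have hcont : ∀ t ∈ ball τ ε, ∀ m n : ℕ, ∀ r : ℝ,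
      ContinuousOn (fun a => r * φ₀ a ^ m / (1 + t * φ₀ a) ^ n) Q := by
    intro t ht m n r
    exact (continuousOn_const.mul (hφcont.pow m)).div
      ((continuousOn_const.add (continuousOn_const.mul hφcont)).pow n)
      (fun a ha => pow_ne_zero n (ne_of_gt (hden t ht a ha)))
  have key := hasDerivAt_integral_of_dominated_loc_of_deriv_le (μ := volume.restrict Q)
      (F := fun t a => φ₀ a ^ p / (1 + t * φ₀ a) ^ (k + 1))
      (F' := fun t a => -((k : ℝ) + 1) * φ₀ a ^ (p + 1) / (1 + t * φ₀ a) ^ (k + 2))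
      (bound := fun _ => ((k : ℝ) + 1) * C0 ^ (p + 1) / c ^ (k + 2))
      (ball_mem_nhds τ hε)
      (eventually_of_mem (ball_mem_nhds τ hε) (fun t ht => by
        simpa using ((hcont t ht p (k+1) 1).congr (fun a _ => by ring)).aestronglyMeasurable hQm))
      (by
        exact (((hcont τ hτball p (k+1) 1).congr (fun a _ => by ring)).integrableOn_compact hQc)
          )
      ((hcont τ hτball (p+1) (k+2) (-((k : ℝ) + 1))).aestronglyMeasurable hQm)
      (by
        filter_upwards [ae_restrict_mem hQm] with a ha
        intro t ht
        have hu : c ≤ 1 + t * φ₀ a := hlow a ha t ht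
        have hupos : (0:ℝ) < 1 + t * φ₀ a := lt_of_lt_of_le hc hu
        rw [Real.norm_eq_abs, abs_div, abs_mul, abs_neg,
          abs_of_nonneg (by positivity : (0:ℝ) ≤ (k:ℝ)+1), abs_pow,
          abs_of_pos (pow_pos hupos _)]
        apply div_le_div₀ (by positivity)
        · exact mul_le_mul_of_nonneg_left (pow_le_pow_left₀ (abs_nonneg _) (hCb a ha) _)
            (by positivity)
        · positivity
        · exact pow_le_pow_left₀ hc.le hu _)
      (integrableOn_const hQc.measure_lt_top.ne)
      (by
        filter_upwards [ae_restrict_mem hQm] with a ha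
        intro t ht
        have hupos : (0:ℝ) < 1 + t * φ₀ a := hden t ht a ha
        have hne : (1 + t * φ₀ a) ^ (k + 1) ≠ 0 := pow_ne_zero _ hupos.ne'
        have h1 : HasDerivAt (fun s => 1 + s * φ₀ a) (φ₀ a) t := by
          simpa using ((hasDerivAt_id t).mul_const (φ₀ a)).const_add 1
        have h3 := (hasDerivAt_const t ((φ₀ a) ^ p)).div (h1.pow (k+1)) hne
        refine h3.congr_deriv ?_
        have hne0 : (1 + t * φ₀ a) ≠ 0 := hupos.ne'
        simp only [Pi.pow_apply, Nat.add_sub_cancel]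
        rw [div_eq_div_iff (pow_ne_zero _ hne) (pow_ne_zero _ hne0)]; push_cast
        ring)
  exact key.2

/-- `φ̄` is differentiable on `[0,τ*)` with
`φ̄'(τ) = φ̄(τ)² − (2/(|Q| F(τ))) ∫_Q φ₀(a)²/(1+τφ₀(a))³ da`. -/

theorem stmt_3
    (L : ℝ) (hL : 0 < L)
    (Q : Set (ℝ × ℝ)) (hQ : Q = Set.Icc (0, 0) (L, L))
    (φ₀ : ℝ × ℝ → ℝ) (hφcont : ContinuousOn φ₀ Q)
    (hmean : ∫ a in Q, φ₀ a = 0)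
    (m₀ : ℝ) (hmin : ∀ a ∈ Q, m₀ ≤ φ₀ a) (hatt : ∃ a ∈ Q, φ₀ a = m₀)
    (hm₀ : m₀ < 0)
    (τstar : ℝ) (hτstar : τstar = -1 / m₀)
    (F φbar : ℝ → ℝ)
    (hF : ∀ τ ∈ Set.Ico 0 τstar, F τ = (1 / L ^ 2) * ∫ a in Q, 1 / (1 + τ * φ₀ a))
    (hφbar : ∀ τ ∈ Set.Ico 0 τstar,
      φbar τ = (∫ a in Q, φ₀ a / (1 + τ * φ₀ a) ^ 2) / (∫ a in Q, 1 / (1 + τ * φ₀ a))) :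
    ∀ τ ∈ Set.Ico 0 τstar,
      HasDerivWithinAt φbar
        ((φbar τ) ^ 2 - (2 / (L ^ 2 * F τ)) * ∫ a in Q, (φ₀ a) ^ 2 / (1 + τ * φ₀ a) ^ 3)
        (Set.Ico 0 τstar) τ := by
  intro τ hτ
  obtain ⟨hτ0, hτs⟩ := hτ
  have hQc : IsCompact Q := hQ ▸ isCompact_Icc
  have hQm : MeasurableSet Q := hQ ▸ measurableSet_Icc
  have hm' : (0:ℝ) < -m₀ := neg_pos.2 hm₀
  have hts : τstar = 1 / (-m₀) := by rw [hτstar]; ring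
  have hτstar_pos : 0 < τstar := by rw [hts]; positivity
  obtain ⟨C, hC⟩ := hQc.exists_bound_of_continuousOn hφcont
  set C0 : ℝ := max C 0 with hC0def
  have hC0 : 0 ≤ C0 := le_max_right _ _
  have hCb : ∀ a ∈ Q, |φ₀ a| ≤ C0 := fun a ha =>
    le_trans (by simpa [Real.norm_eq_abs] using hC a ha) (le_max_left _ _)
  set τ₁ : ℝ := (τ + τstar) / 2 with hτ₁def
  have hτ₁l : τ < τ₁ := by simp only [hτ₁def]; linarith
  have hτ₁u : τ₁ < τstar := by simp only [hτ₁def]; linarith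
  have hτ₁0 : 0 ≤ τ₁ := by linarith
  have hc₁ : 0 < 1 + τ₁ * m₀ := by
    have h1 : τ₁ < 1 / (-m₀) := hts ▸ hτ₁u
    have h2 : τ₁ * (-m₀) < 1 := (lt_div_iff₀ (by linarith)).1 h1
    nlinarith
  set ε : ℝ := min (τ₁ - τ) (1 / (2 * (C0 + 1))) with hεdef
  have hε : 0 < ε := lt_min (by linarith) (by positivity)
  set c : ℝ := min (1 + τ₁ * m₀) (1 / 2) with hcdef
  have hc : 0 < c := lt_min hc₁ (by norm_num)
  have hlow : ∀ a ∈ Q, ∀ t ∈ ball τ ε, c ≤ 1 + t * φ₀ a := by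
    intro a ha t ht
    rw [mem_ball, Real.dist_eq] at ht
    obtain ⟨ht1, ht2⟩ := abs_lt.1 ht
    have hεle1 : ε ≤ τ₁ - τ := min_le_left _ _
    have hεle2 : ε ≤ 1 / (2 * (C0 + 1)) := min_le_right _ _
    have hx := hmin a ha
    have hxC := hCb a ha
    rcases le_or_gt 0 t with h | h
    · have ht3 : t ≤ τ₁ := by linarith
      have hkey : τ₁ * m₀ ≤ t * φ₀ a := by
        rcases le_or_gt 0 (φ₀ a) with h2 | h2
        · nlinarith
        · nlinarith [mul_nonneg (sub_nonneg.2 ht3) (neg_nonneg.2 h2.le),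
            mul_nonneg hτ₁0 (sub_nonneg.2 hx)]
      have : c ≤ 1 + τ₁ * m₀ := min_le_left _ _
      linarith
    · have habs : |t| ≤ 1 / (2 * (C0 + 1)) := by
        rw [abs_of_neg h]; linarith
      have h2 : |t * φ₀ a| ≤ 1 / 2 := by
        rw [abs_mul]
        calc |t| * |φ₀ a| ≤ (1 / (2 * (C0 + 1))) * C0 :=
              mul_le_mul habs hxC (abs_nonneg _) (by positivity)
          _ ≤ 1 / 2 := by
              rw [div_mul_eq_mul_div, one_mul, div_le_div_iff₀ (by positivity) (by norm_num)]
              linarith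
      have h3 := neg_abs_le (t * φ₀ a)
      have : c ≤ 1 / 2 := min_le_right _ _
      linarith
  -- derivatives of D and N
  have hD := aux_deriv_int Q hQc hQm φ₀ hφcont 0 0 τ ε c hε hc hlow
  have hN := aux_deriv_int Q hQc hQm φ₀ hφcont 1 1 τ ε c hε hc hlow
  simp only [pow_zero, zero_add, pow_one, Nat.cast_zero, neg_mul, one_mul, neg_div,
    integral_neg] at hD
  simp only [Nat.cast_one, neg_mul, neg_div, integral_neg, mul_div_assoc] at hN
  norm_num at hN
  rw [integral_const_mul] at hN
  -- positivity of D τ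
  set D : ℝ := ∫ a in Q, 1 / (1 + τ * φ₀ a) with hDdef
  set N : ℝ := ∫ a in Q, φ₀ a / (1 + τ * φ₀ a) ^ 2 with hNdef
  set K : ℝ := ∫ a in Q, φ₀ a ^ 2 / (1 + τ * φ₀ a) ^ 3 with hKdef
  have hτball : τ ∈ ball τ ε := mem_ball_self hε
  have hden : ∀ a ∈ Q, (0:ℝ) < 1 + τ * φ₀ a := fun a ha =>
    lt_of_lt_of_le hc (hlow a ha τ hτball)
  have hcontD : ContinuousOn (fun a => 1 / (1 + τ * φ₀ a)) Q :=
    continuousOn_const.div (continuousOn_const.add (continuousOn_const.mul hφcont))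
      (fun a ha => (hden a ha).ne')
  have hvol : volume Q = ENNReal.ofReal L * ENNReal.ofReal L := by
    rw [hQ, Set.Icc_prod_eq, Measure.volume_eq_prod, Measure.prod_prod, Real.volume_Icc]
    simp
  have hvolpos : 0 < (volume Q).toReal := by
    rw [hvol, ENNReal.toReal_mul, ENNReal.toReal_ofReal hL.le]
    positivity
  have hDpos : 0 < D := by
    have hcst : 0 < 1 / (1 + τ * C0) := by positivity
    have hge : ∀ a ∈ Q, 1 / (1 + τ * C0) ≤ 1 / (1 + τ * φ₀ a) := by
      intro a ha
      apply one_div_le_one_div_of_le (hden a ha)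
      have : φ₀ a ≤ C0 := le_trans (le_abs_self _) (hCb a ha)
      nlinarith
    have := setIntegral_ge_of_const_le hQm
      (by rw [hvol]; exact ENNReal.mul_ne_top ENNReal.ofReal_ne_top ENNReal.ofReal_ne_top)
      hge (hcontD.integrableOn_compact hQc)
    calc (0:ℝ) < (1 / (1 + τ * C0)) * (volume Q).toReal := by positivity
      _ ≤ D := by rw [smul_eq_mul, mul_comm] at this; exact this
  have key := hN.div hD hDpos.ne'
  have hkey' : HasDerivWithinAt φbar
      (((-(2 * K)) * D - N * (-N)) / D ^ 2) (Set.Ico 0 τstar) τ :=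
    key.hasDerivWithinAt.congr (fun t ht => hφbar t ht) (hφbar τ ⟨hτ0, hτs⟩)
  convert hkey' using 1
  rw [hφbar τ ⟨hτ0, hτs⟩, hF τ ⟨hτ0, hτs⟩, ← hDdef, ← hNdef]
  have hD0 : D ≠ 0 := hDpos.ne'
  have hL2 : (L:ℝ) ^ 2 ≠ 0 := by positivity
  field_simp
  ring
end

section
/- The time-change function T satisfies T(0) = 0 and T is differentiable on [0,τ*) with T'(τ) = F(τ)² for every τ ∈ [0,τ*). -/
open MeasureTheory Real Set Filter Topology

private lemma pos_aux' {x τ s : ℝ} (hs : 0 ≤ s) (hsτ : s ≤ τ) (hx : 0 < 1 + τ * x) :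
    0 < 1 + s * x := by
  rcases le_or_gt 0 x with h | h
  · nlinarith
  · nlinarith

private lemma kernel_eq' {x y τ : ℝ} (hτ : 0 ≤ τ) (hx : 0 < 1 + τ * x) (hy : 0 < 1 + τ * y) :
    (if x ≠ y then Real.log ((1 + τ * x) / (1 + τ * y)) / (x - y) else τ / (1 + τ * x))
      = ∫ s in (0:ℝ)..τ, ((1 + s * x) * (1 + s * y))⁻¹ := by
  have hIcc : Set.uIcc (0:ℝ) τ = Set.Icc 0 τ := Set.uIcc_of_le hτ
  have hposx : ∀ s ∈ Set.Icc (0:ℝ) τ, 0 < 1 + s * x := fun s hs => pos_aux' hs.1 hs.2 hx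
  have hposy : ∀ s ∈ Set.Icc (0:ℝ) τ, 0 < 1 + s * y := fun s hs => pos_aux' hs.1 hs.2 hy
  have hcont : ContinuousOn (fun s : ℝ => ((1 + s * x) * (1 + s * y))⁻¹) (Set.Icc 0 τ) := by
    apply ContinuousOn.inv₀
    · fun_prop
    · intro s hs
      exact ne_of_gt (mul_pos (hposx s hs) (hposy s hs))
  have hint : IntervalIntegrable (fun s : ℝ => ((1 + s * x) * (1 + s * y))⁻¹) volume 0 τ := by
    exact (hcont.mono (by rw [hIcc])).intervalIntegrable
  by_cases hxy : x = y
  · subst hxy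
    rw [if_neg (by simp)]
    have := intervalIntegral.integral_eq_sub_of_hasDerivAt (f := fun s => s / (1 + s * x))
      (f' := fun s => ((1 + s * x) * (1 + s * x))⁻¹) (a := 0) (b := τ) ?_ hint
    · rw [this]; simp
    · intro s hs
      rw [hIcc] at hs
      have h1 := hposx s hs
      have : HasDerivAt (fun s : ℝ => s / (1 + s * x)) ((1*(1+s*x) - s*x)/(1+s*x)^2) s := by
        exact (hasDerivAt_id s).div
          (by simpa [mul_comm] using (hasDerivAt_id s).const_mul x |>.const_add 1) (ne_of_gt h1)
      refine this.congr_deriv ?_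
      ring
  · rw [if_pos hxy]
    have hsub : x - y ≠ 0 := sub_ne_zero.mpr hxy
    have := intervalIntegral.integral_eq_sub_of_hasDerivAt
      (f := fun s => (Real.log (1 + s * x) - Real.log (1 + s * y)) / (x - y))
      (f' := fun s => ((1 + s * x) * (1 + s * y))⁻¹) (a := 0) (b := τ) ?_ hint
    · rw [this]
      rw [Real.log_div (ne_of_gt hx) (ne_of_gt hy)]
      simp
    · intro s hs
      rw [hIcc] at hs
      have h1 := hposx s hs
      have h2 := hposy s hs
      have d1 : HasDerivAt (fun s : ℝ => Real.log (1 + s * x)) (x / (1 + s * x)) s := by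
        have := (Real.hasDerivAt_log (ne_of_gt h1)).comp s
          (by simpa [mul_comm] using (hasDerivAt_id s).const_mul x |>.const_add 1 :
            HasDerivAt (fun s : ℝ => 1 + s * x) x s)
        simpa [div_eq_inv_mul, Function.comp_def] using this
      have d2 : HasDerivAt (fun s : ℝ => Real.log (1 + s * y)) (y / (1 + s * y)) s := by
        have := (Real.hasDerivAt_log (ne_of_gt h2)).comp s
          (by simpa [mul_comm] using (hasDerivAt_id s).const_mul y |>.const_add 1 :
            HasDerivAt (fun s : ℝ => 1 + s * y) y s)
        simpa [div_eq_inv_mul, Function.comp_def] using this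
      have := (d1.sub d2).div_const (x - y)
      refine this.congr_deriv ?_
      rw [div_sub_div _ _ h1.ne' h2.ne', div_div, eq_comm, inv_eq_one_div,
        div_eq_div_iff (mul_ne_zero h1.ne' h2.ne') (mul_ne_zero (mul_ne_zero h1.ne' h2.ne') hsub)]
      ring

/-- The time-change function `T` satisfies `T(0) = 0` and is differentiable on
`[0,τ*)` with `T'(τ) = F(τ)²`. -/
theorem stmt_4
    (L : ℝ) (hL : 0 < L)
    (Q : Set (ℝ × ℝ)) (hQ : Q = Set.Icc (0, 0) (L, L))
    (φ₀ : ℝ × ℝ → ℝ) (hφcont : ContinuousOn φ₀ Q)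
    (hmean : ∫ a in Q, φ₀ a = 0)
    (m₀ : ℝ) (hmin : ∀ a ∈ Q, m₀ ≤ φ₀ a) (hatt : ∃ a ∈ Q, φ₀ a = m₀)
    (hm₀ : m₀ < 0)
    (τstar : ℝ) (hτstar : τstar = -1 / m₀)
    (F : ℝ → ℝ)
    (hF : ∀ τ ∈ Set.Ico 0 τstar, F τ = (1 / L ^ 2) * ∫ a in Q, 1 / (1 + τ * φ₀ a))
    (T : ℝ → ℝ)
    (hT : ∀ τ ∈ Set.Ico 0 τstar,
      T τ = (1 / L ^ 4) * ∫ a in Q, ∫ b in Q,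
        (if φ₀ a ≠ φ₀ b then
          Real.log ((1 + τ * φ₀ a) / (1 + τ * φ₀ b)) / (φ₀ a - φ₀ b)
        else τ / (1 + τ * φ₀ a))) :
    T 0 = 0 ∧
    ∀ τ ∈ Set.Ico 0 τstar, HasDerivWithinAt T ((F τ) ^ 2) (Set.Ico 0 τstar) τ := by
  -- basic facts
  have hτstar_pos : 0 < τstar := by
    rw [hτstar, neg_div]
    exact neg_pos.mpr (one_div_neg.mpr hm₀)
  have hQm : MeasurableSet Q := by rw [hQ]; exact measurableSet_Icc
  have hQc : IsCompact Q := by rw [hQ]; exact isCompact_Icc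
  set ν : Measure (ℝ × ℝ) := volume.restrict Q with hν
  have hνfin : IsFiniteMeasure ν := by
    constructor
    rw [hν, Measure.restrict_apply_univ]
    exact hQc.measure_lt_top
  have hφ : AEStronglyMeasurable φ₀ ν := hφcont.aestronglyMeasurable hQm
  -- bound on φ₀
  obtain ⟨M₀, hM₀⟩ := hQc.exists_bound_of_continuousOn hφcont
  set M : ℝ := max M₀ 1 with hM
  have hMpos : 0 < M := lt_of_lt_of_le one_pos (le_max_right _ _)
  have hMb : ∀ a ∈ Q, |φ₀ a| ≤ M := fun a ha =>
    le_trans (by simpa using hM₀ a ha) (le_max_left _ _)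
  set δ : ℝ := 1 / (2 * M) with hδ
  have hδpos : 0 < δ := by positivity
  set S : Set ℝ := Set.Ioo (-δ) τstar with hS
  have hSopen : IsOpen S := isOpen_Ioo
  -- lower bound lemma
  have lb : ∀ η ∈ Set.Ico (0:ℝ) τstar, ∀ x ∈ Set.Icc (-δ) η, ∀ a ∈ Q,
      min (1/2) (1 + η * m₀) ≤ 1 + x * φ₀ a := by
    intro η hη x hx a ha
    have h1 : 0 < 1 + η * m₀ := by
      have : η * (-m₀) < 1 := by
        have := hη.2
        rw [hτstar] at this
        calc η * (-m₀) < (-1/m₀) * (-m₀) := by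
              apply mul_lt_mul_of_pos_right this (by linarith)
          _ = 1 := by field_simp; exact div_self hm₀.ne
      linarith
    have hφa := hmin a ha
    have hφab := hMb a ha
    rw [abs_le] at hφab
    rcases le_or_gt 0 x with hx0 | hx0
    · rcases le_or_gt 0 (φ₀ a) with hp | hp
      · have : (1:ℝ) ≤ 1 + x * φ₀ a := by nlinarith
        exact le_trans (le_trans (min_le_left _ _) (by norm_num)) this
      · have : 1 + η * m₀ ≤ 1 + x * φ₀ a := by nlinarith [hx.2, hη.1]
        exact le_trans (min_le_right _ _) this
    · have hxd : -δ ≤ x := hx.1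
      have : 1 - δ * M ≤ 1 + x * φ₀ a := by nlinarith
      have hδM : δ * M = 1/2 := by rw [hδ]; field_simp
      exact le_trans (min_le_left _ _) (by linarith [hδM ▸ this])
  -- positivity on S
  have posS : ∀ x ∈ S, ∀ a ∈ Q, 0 < 1 + x * φ₀ a := by
    intro x hx a ha
    rcases le_or_gt 0 x with hx0 | hx0
    · obtain ⟨η, hη1, hη2⟩ := exists_between hx.2
      have hη0 : (0:ℝ) ≤ η := le_trans hx0 hη1.le
      have := lb η ⟨hη0, hη2⟩ x ⟨by linarith [hx.1], hη1.le⟩ a ha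
      have h1 : 0 < 1 + η * m₀ := by
        have : η * (-m₀) < 1 := by
          rw [hτstar] at hη2
          calc η * (-m₀) < (-1/m₀) * (-m₀) := by
                apply mul_lt_mul_of_pos_right hη2 (by linarith)
            _ = 1 := by field_simp; exact div_self hm₀.ne
        linarith
      have := lt_of_lt_of_le (lt_min (by norm_num) h1) this
      linarith
    · have hφab := hMb a ha
      rw [abs_le] at hφab
      have hxd : -δ ≤ x := hx.1.le
      have : 1 - δ * M ≤ 1 + x * φ₀ a := by nlinarith
      have hδM : δ * M = 1/2 := by rw [hδ]; field_simp
      linarith [hδM ▸ this]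
  -- the parameter integral
  set I : ℝ → ℝ := fun s => ∫ a, (1 + s * φ₀ a)⁻¹ ∂ν with hI
  -- measurability of the integrand, for each fixed s
  have hmeas1 : ∀ s : ℝ, AEStronglyMeasurable (fun a => (1 + s * φ₀ a)⁻¹) ν := by
    intro s
    exact (((hφ.aemeasurable.const_mul s).const_add 1).inv).aestronglyMeasurable
  -- continuity of I on S
  have hIcont : ∀ s ∈ S, ContinuousAt I s := by
    intro s hs
    set η : ℝ := (max s 0 + τstar) / 2 with hη
    have hsη : max s 0 < η := by
      rw [hη]
      have : max s 0 < τstar := max_lt hs.2 hτstar_pos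
      linarith
    have hητ : η < τstar := by
      rw [hη]
      have : max s 0 < τstar := max_lt hs.2 hτstar_pos
      linarith
    have hη0 : (0:ℝ) ≤ η := le_trans (le_max_right s 0) hsη.le
    set c : ℝ := min (1/2) (1 + η * m₀) with hc
    have hcpos : 0 < c := by
      apply lt_min (by norm_num)
      have : η * (-m₀) < 1 := by
        rw [hτstar] at hητ
        calc η * (-m₀) < (-1/m₀) * (-m₀) := by
              apply mul_lt_mul_of_pos_right hητ (by linarith)
          _ = 1 := by field_simp; exact div_self hm₀.ne
      linarith
    have hU : Set.Ioo (-δ) η ∈ 𝓝 s := by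
      apply Ioo_mem_nhds hs.1 (lt_of_le_of_lt (le_max_left s 0) hsη)
    apply MeasureTheory.continuousAt_of_dominated (bound := fun _ => c⁻¹)
    · filter_upwards [hU] with x hx
      exact hmeas1 x
    · filter_upwards [hU] with x hx
      filter_upwards [ae_restrict_mem hQm] with a ha
      have := lb η ⟨hη0, hητ⟩ x ⟨hx.1.le, hx.2.le⟩ a ha
      rw [Real.norm_eq_abs, abs_inv, abs_of_pos (lt_of_lt_of_le hcpos this)]
      exact inv_anti₀ hcpos this
    · exact integrable_const _
    · filter_upwards [ae_restrict_mem hQm] with a ha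
      have hpos : 0 < 1 + s * φ₀ a := posS s hs a ha
      exact ((continuousAt_const.add (continuousAt_id.mul continuousAt_const)).inv₀
        (ne_of_gt hpos))
  have hIcontOn : ContinuousOn I S := fun s hs => (hIcont s hs).continuousWithinAt
  -- key identity: T τ' = ∫ s in 0..τ', (1/L^4) * (I s)^2
  have key : ∀ τ' ∈ Set.Ico 0 τstar, T τ' = ∫ s in (0:ℝ)..τ', (1/L^4) * (I s)^2 := by
    intro τ' hτ'
    have hτ'0 : 0 ≤ τ' := hτ'.1
    have hposτ' : ∀ a ∈ Q, 0 < 1 + τ' * φ₀ a := fun a ha =>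
      posS τ' ⟨lt_of_lt_of_le (neg_neg_of_pos hδpos) hτ'0, hτ'.2⟩ a ha
    set μI : Measure ℝ := volume.restrict (Set.Ioc 0 τ') with hμI
    have hμIfin : IsFiniteMeasure μI := by
      constructor
      rw [hμI, Measure.restrict_apply_univ]
      exact measure_Ioc_lt_top
    haveI := hνfin
    haveI := hμIfin
    -- lower bound constant on [0, τ']
    set c : ℝ := min (1/2) (1 + τ' * m₀) with hc
    have hcpos : 0 < c := by
      apply lt_min (by norm_num)
      have : τ' * (-m₀) < 1 := by
        have h2 := hτ'.2
        rw [hτstar] at h2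
        calc τ' * (-m₀) < (-1/m₀) * (-m₀) := by
              apply mul_lt_mul_of_pos_right h2 (by linarith)
          _ = 1 := by field_simp; exact div_self hm₀.ne
      linarith
    have hbnd : ∀ s ∈ Set.Ioc (0:ℝ) τ', ∀ a ∈ Q, ‖(1 + s * φ₀ a)⁻¹‖ ≤ c⁻¹ := by
      intro s hs a ha
      have h := lb τ' hτ' s ⟨by linarith [hs.1, hδpos], hs.2⟩ a ha
      rw [Real.norm_eq_abs, abs_inv, abs_of_pos (lt_of_lt_of_le hcpos h)]
      exact inv_anti₀ hcpos h
    -- kernel identity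
    have hker : ∀ a ∈ Q, ∀ b ∈ Q,
        (if φ₀ a ≠ φ₀ b then Real.log ((1 + τ' * φ₀ a) / (1 + τ' * φ₀ b)) / (φ₀ a - φ₀ b)
          else τ' / (1 + τ' * φ₀ a))
        = ∫ s, (1 + s * φ₀ a)⁻¹ * (1 + s * φ₀ b)⁻¹ ∂μI := by
      intro a ha b hb
      rw [kernel_eq' hτ'0 (hposτ' a ha) (hposτ' b hb),
        intervalIntegral.integral_of_le hτ'0]
      rw [hμI]
      congr 1
      ext s
      rw [mul_inv]
    -- a.e. membership on the product
    have hprod_ae : ∀ᵐ p ∂(ν.prod μI), p.1 ∈ Q ∧ p.2 ∈ Set.Ioc 0 τ' := by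
      rw [hν, hμI, Measure.prod_restrict]
      filter_upwards [ae_restrict_mem (hQm.prod measurableSet_Ioc)] with p hp
      exact ⟨hp.1, hp.2⟩
    -- measurability pieces on the product
    have hmeasφfst : AEMeasurable (fun p : (ℝ × ℝ) × ℝ => φ₀ p.1) (ν.prod μI) :=
      hφ.aemeasurable.comp_quasiMeasurePreserving Measure.quasiMeasurePreserving_fst
    have hu : AEStronglyMeasurable (fun p : (ℝ × ℝ) × ℝ => (1 + p.2 * φ₀ p.1)⁻¹)
        (ν.prod μI) :=
      (((measurable_snd.aemeasurable.mul hmeasφfst).const_add 1).inv).aestronglyMeasurable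
    -- first swap (for each a ∈ Q)
    have hint1 : ∀ a ∈ Q, Integrable
        (Function.uncurry fun b s => (1 + s * φ₀ a)⁻¹ * (1 + s * φ₀ b)⁻¹) (ν.prod μI) := by
      intro a ha
      apply Integrable.mono' (g := fun _ => c⁻¹ * c⁻¹) (integrable_const _)
      · have hva : AEStronglyMeasurable (fun p : (ℝ × ℝ) × ℝ => (1 + p.2 * φ₀ a)⁻¹)
            (ν.prod μI) :=
          (((measurable_snd.mul_const (φ₀ a)).const_add 1).inv).aestronglyMeasurable
        exact hva.mul hu
      · filter_upwards [hprod_ae] with p hp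
        rw [Function.uncurry, norm_mul]
        exact mul_le_mul (hbnd p.2 hp.2 a ha) (hbnd p.2 hp.2 p.1 hp.1) (norm_nonneg _)
          (inv_nonneg.mpr hcpos.le)
    have swap1 : ∀ a ∈ Q,
        (∫ b, ∫ s, (1 + s * φ₀ a)⁻¹ * (1 + s * φ₀ b)⁻¹ ∂μI ∂ν)
          = ∫ s, (∫ b, (1 + s * φ₀ a)⁻¹ * (1 + s * φ₀ b)⁻¹ ∂ν) ∂μI :=
      fun a ha => MeasureTheory.integral_integral_swap (hint1 a ha)
    -- the inner `b`-integral factorizes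
    have hfact : ∀ s : ℝ, ∀ a : ℝ × ℝ,
        (∫ b, (1 + s * φ₀ a)⁻¹ * (1 + s * φ₀ b)⁻¹ ∂ν) = (1 + s * φ₀ a)⁻¹ * I s := by
      intro s a
      rw [MeasureTheory.integral_const_mul]
    -- second swap
    have hIsub : Set.Ioc (0:ℝ) τ' ⊆ S := by
      intro x hx
      exact ⟨by linarith [hx.1, hδpos], lt_of_le_of_lt hx.2 hτ'.2⟩
    have hIae : AEStronglyMeasurable I μI := by
      rw [hμI]
      exact (hIcontOn.mono hIsub).aestronglyMeasurable measurableSet_Ioc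
    have hIbnd : ∀ s ∈ Set.Ioc (0:ℝ) τ', ‖I s‖ ≤ c⁻¹ * (ν Set.univ).toReal := by
      intro s hs
      rw [hI]
      apply MeasureTheory.norm_integral_le_of_norm_le_const
      filter_upwards [ae_restrict_mem hQm] with a ha
      exact hbnd s hs a ha
    have hint2 : Integrable
        (Function.uncurry fun (a : ℝ × ℝ) (s : ℝ) => (1 + s * φ₀ a)⁻¹ * I s) (ν.prod μI) := by
      apply Integrable.mono' (g := fun _ => c⁻¹ * (c⁻¹ * (ν Set.univ).toReal))
        (integrable_const _)
      · exact hu.mul (hIae.comp_quasiMeasurePreserving Measure.quasiMeasurePreserving_snd)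
      · filter_upwards [hprod_ae] with p hp
        rw [Function.uncurry, norm_mul]
        exact mul_le_mul (hbnd p.2 hp.2 p.1 hp.1) (hIbnd p.2 hp.2) (norm_nonneg _)
          (inv_nonneg.mpr hcpos.le)
    have swap2 : (∫ a, ∫ s, (1 + s * φ₀ a)⁻¹ * I s ∂μI ∂ν)
        = ∫ s, (∫ a, (1 + s * φ₀ a)⁻¹ * I s ∂ν) ∂μI :=
      MeasureTheory.integral_integral_swap hint2
    -- assemble
    rw [hT τ' hτ']
    have step1 : (∫ a, (∫ b,
        (if φ₀ a ≠ φ₀ b then Real.log ((1 + τ' * φ₀ a) / (1 + τ' * φ₀ b)) / (φ₀ a - φ₀ b)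
          else τ' / (1 + τ' * φ₀ a)) ∂ν) ∂ν)
        = ∫ a, (∫ s, (1 + s * φ₀ a)⁻¹ * I s ∂μI) ∂ν := by
      rw [hν]
      apply MeasureTheory.setIntegral_congr_fun hQm
      intro a ha
      dsimp only
      have : (∫ b, (if φ₀ a ≠ φ₀ b then
            Real.log ((1 + τ' * φ₀ a) / (1 + τ' * φ₀ b)) / (φ₀ a - φ₀ b)
          else τ' / (1 + τ' * φ₀ a)) ∂ν)
          = ∫ b, (∫ s, (1 + s * φ₀ a)⁻¹ * (1 + s * φ₀ b)⁻¹ ∂μI) ∂ν := by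
        rw [hν]
        apply MeasureTheory.setIntegral_congr_fun hQm
        intro b hb
        exact hker a ha b hb
      rw [this, swap1 a ha]
      refine MeasureTheory.integral_congr_ae (Filter.Eventually.of_forall fun s => ?_)
      exact hfact s a
    rw [step1, swap2]
    have step3 : ∀ s : ℝ, (∫ a, (1 + s * φ₀ a)⁻¹ * I s ∂ν) = I s * I s := by
      intro s
      rw [MeasureTheory.integral_mul_const, hI]
    rw [intervalIntegral.integral_of_le hτ'0, ← hμI,
      MeasureTheory.integral_const_mul]
    congr 1
    refine MeasureTheory.integral_congr_ae (Filter.Eventually.of_forall fun s => ?_)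
    dsimp only
    rw [step3 s, sq]
  -- conclusion
  constructor
  · have h0 := hT 0 ⟨le_refl 0, hτstar_pos⟩
    rw [h0]
    simp
  · intro τ hτ
    have hτS : τ ∈ S := ⟨by linarith [hτ.1, hδpos], hτ.2⟩
    have hGcont : ContinuousOn (fun s => (1/L^4) * (I s)^2) S :=
      continuousOn_const.mul (hIcontOn.pow 2)
    have hsub : Set.uIcc (0:ℝ) τ ⊆ S := by
      rw [Set.uIcc_of_le hτ.1]
      intro x hx
      exact ⟨by linarith [hx.1, hδpos], lt_of_le_of_lt hx.2 hτ.2⟩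
    have hInt : IntervalIntegrable (fun s => (1/L^4) * (I s)^2) volume 0 τ :=
      (hGcont.mono hsub).intervalIntegrable
    have hderiv : HasDerivAt (fun t => ∫ s in (0:ℝ)..t, (1/L^4) * (I s)^2)
        ((1/L^4) * (I τ)^2) τ :=
      intervalIntegral.integral_hasDerivAt_right hInt
        (hGcont.stronglyMeasurableAtFilter hSopen τ hτS)
        (hGcont.continuousAt (hSopen.mem_nhds hτS))
    have hDW : HasDerivWithinAt T ((1/L^4) * (I τ)^2) (Set.Ico 0 τstar) τ :=
      (hderiv.hasDerivWithinAt).congr (fun t ht => key t ht) (key τ hτ)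
    convert hDW using 1
    rw [hF τ hτ]
    have hIτ : I τ = ∫ a, 1 / (1 + τ * φ₀ a) ∂ν := by
      rw [hI]
      refine MeasureTheory.integral_congr_ae (Filter.Eventually.of_forall fun a => ?_)
      dsimp only
      rw [one_div]
    rw [← hIτ]
    ring
end

section
/- T is a strictly increasing continuous bijection from [0,τ*) onto [0,T*), where T* = sup_{τ∈[0,τ*)} T(τ) ∈ (0,∞], and its inverse function τ : [0,T*) → [0,τ*) is differentiable with τ(0) = 0 and τ'(t) = α(τ(t)) for all t ∈ [0,T*). -/
open MeasureTheory Real Set Filter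

lemma aux_hasDerivAt_k (A B s : ℝ) (hA : 0 < 1 + s * A) (hB : 0 < 1 + s * B) :
    HasDerivAt (fun u => if A ≠ B then Real.log ((1 + u * A) / (1 + u * B)) / (A - B)
      else u / (1 + u * A)) (((1 + s * A) * (1 + s * B))⁻¹) s := by
  by_cases h : A = B
  · subst h
    simp only [ne_eq, not_true_eq_false, if_false]
    have h1 : HasDerivAt (fun u : ℝ => 1 + u * A) A s := by
      simpa using ((hasDerivAt_id s).mul_const A).const_add 1
    have hd : HasDerivAt (fun u : ℝ => u / (1 + u * A))
        ((1 * (1 + s * A) - s * A) / (1 + s * A) ^ 2) s := (hasDerivAt_id s).div h1 hA.ne'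
    convert hd using 1
    field_simp
    ring
  · simp only [ne_eq, h, not_false_eq_true, if_true]
    have hq : HasDerivAt (fun u : ℝ => (1 + u * A) / (1 + u * B))
        ((A * (1 + s * B) - (1 + s * A) * B) / (1 + s * B) ^ 2) s := by
      have h1 : HasDerivAt (fun u : ℝ => 1 + u * A) A s := by
        simpa using ((hasDerivAt_id s).mul_const A).const_add 1
      have h2 : HasDerivAt (fun u : ℝ => 1 + u * B) B s := by
        simpa using ((hasDerivAt_id s).mul_const B).const_add 1
      exact h1.div h2 hB.ne'
    have hlog := (hq.log (div_ne_zero hA.ne' hB.ne')).div_const (A - B)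
    refine hlog.congr_deriv (Eq.symm ?_)
    have hAB : A - B ≠ 0 := sub_ne_zero.mpr h
    have hA' := hA.ne'
    have hB' := hB.ne'
    rw [show A * (1 + s * B) - (1 + s * A) * B = A - B by ring]
    field_simp

lemma aux_k_eq (A B τ c : ℝ) (hc : 0 < c)
    (hp : ∀ s ∈ Set.uIcc 0 τ, c ≤ 1 + s * A ∧ c ≤ 1 + s * B) :
    (if A ≠ B then Real.log ((1 + τ * A) / (1 + τ * B)) / (A - B) else τ / (1 + τ * A))
      = ∫ s in (0:ℝ)..τ, ((1 + s * A) * (1 + s * B))⁻¹ := by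
  have hpos : ∀ s ∈ Set.uIcc 0 τ, 0 < 1 + s * A ∧ 0 < 1 + s * B :=
    fun s hs => ⟨lt_of_lt_of_le hc (hp s hs).1, lt_of_lt_of_le hc (hp s hs).2⟩
  have hint : IntervalIntegrable (fun s => ((1 + s * A) * (1 + s * B))⁻¹) volume 0 τ := by
    apply ContinuousOn.intervalIntegrable
    exact (((continuous_const.add (continuous_id.mul continuous_const)).continuousOn).mul
      ((continuous_const.add (continuous_id.mul continuous_const)).continuousOn)).inv₀
      fun s hs => (mul_pos (hpos s hs).1 (hpos s hs).2).ne'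
  have := intervalIntegral.integral_eq_sub_of_hasDerivAt
    (f := fun u => if A ≠ B then Real.log ((1 + u * A) / (1 + u * B)) / (A - B)
      else u / (1 + u * A))
    (fun s hs => aux_hasDerivAt_k A B s (hpos s hs).1 (hpos s hs).2) hint
  rw [this]
  split_ifs <;> simp

lemma aux_k_bound (A B τ c : ℝ) (hc : 0 < c)
    (hp : ∀ s ∈ Set.uIcc 0 τ, c ≤ 1 + s * A ∧ c ≤ 1 + s * B) :
    |if A ≠ B then Real.log ((1 + τ * A) / (1 + τ * B)) / (A - B) else τ / (1 + τ * A)|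
      ≤ (c⁻¹) ^ 2 * |τ| := by
  rw [aux_k_eq A B τ c hc hp]
  have := intervalIntegral.norm_integral_le_of_norm_le_const (C := (c⁻¹) ^ 2)
    (f := fun s => ((1 + s * A) * (1 + s * B))⁻¹) (a := 0) (b := τ) ?_
  · simpa using this
  · intro x hx
    have hx' := Set.uIoc_subset_uIcc hx
    have h1 := (hp x hx').1; have h2 := (hp x hx').2
    rw [Real.norm_eq_abs, abs_inv, abs_of_pos (mul_pos (hc.trans_le h1) (hc.trans_le h2)),
      pow_two, ← mul_inv]
    exact inv_anti₀ (mul_pos hc hc)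
      (mul_le_mul h1 h2 hc.le (by linarith [hc.trans_le h1]))

/-- `T` is a strictly increasing continuous bijection from `[0,τ*)` onto
`[0,T*)`, `T* = sup_{τ∈[0,τ*)} T(τ) ∈ (0,∞]`, and its inverse `τ : [0,T*) → [0,τ*)` is
differentiable with `τ(0) = 0` and `τ'(t) = α(τ(t))`. -/
theorem stmt_5
    (L : ℝ) (hL : 0 < L)
    (Q : Set (ℝ × ℝ)) (hQ : Q = Set.Icc (0, 0) (L, L))
    (φ₀ : ℝ × ℝ → ℝ) (hφcont : ContinuousOn φ₀ Q)
    (hmean : ∫ a in Q, φ₀ a = 0)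
    (m₀ : ℝ) (hmin : ∀ a ∈ Q, m₀ ≤ φ₀ a) (hatt : ∃ a ∈ Q, φ₀ a = m₀)
    (hm₀ : m₀ < 0)
    (τstar : ℝ) (hτstar : τstar = -1 / m₀)
    (F α : ℝ → ℝ)
    (hF : ∀ τ ∈ Set.Ico 0 τstar, F τ = (1 / L ^ 2) * ∫ a in Q, 1 / (1 + τ * φ₀ a))
    (hα : ∀ τ ∈ Set.Ico 0 τstar, α τ = ((F τ) ^ 2)⁻¹)
    (T : ℝ → ℝ)
    (hT : ∀ τ ∈ Set.Ico 0 τstar,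
      T τ = (1 / L ^ 4) * ∫ a in Q, ∫ b in Q,
        (if φ₀ a ≠ φ₀ b then
          Real.log ((1 + τ * φ₀ a) / (1 + τ * φ₀ b)) / (φ₀ a - φ₀ b)
        else τ / (1 + τ * φ₀ a)))
    (Tstar : EReal)
    (hTstar : Tstar = sSup ((fun τ => ((T τ : ℝ) : EReal)) '' Set.Ico 0 τstar))
    (D : Set ℝ) (hD : D = {t : ℝ | 0 ≤ t ∧ (t : EReal) < Tstar}) :
    0 < Tstar ∧
    StrictMonoOn T (Set.Ico 0 τstar) ∧
    ContinuousOn T (Set.Ico 0 τstar) ∧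
    T '' Set.Ico 0 τstar = D ∧
    ∀ τinv : ℝ → ℝ,
      (∀ t ∈ D, τinv t ∈ Set.Ico 0 τstar ∧ T (τinv t) = t) →
      τinv 0 = 0 ∧ ∀ t ∈ D, HasDerivWithinAt τinv (α (τinv t)) D t := by
  have hτs : 0 < τstar := by
    rw [hτstar]
    have : (0:ℝ) < -1 / m₀ := by
      rw [div_pos_iff]; right; constructor <;> linarith
    linarith
  have hmτ : m₀ * τstar = -1 := by rw [hτstar, mul_div_assoc', mul_neg_one, neg_div, div_self hm₀.ne]
  have hQc : IsCompact Q := hQ ▸ isCompact_Icc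
  have hQm : MeasurableSet Q := hQc.measurableSet
  have hQvol : volume Q = ENNReal.ofReal L * ENNReal.ofReal L := by
    rw [hQ, Set.Icc_prod_eq, Measure.volume_eq_prod, Measure.prod_prod, Real.volume_Icc]
    simp
  have hQv : (volume Q).toReal = L ^ 2 := by
    rw [hQvol, ENNReal.toReal_mul, ENNReal.toReal_ofReal hL.le, sq]
  have hQfin : volume Q < ⊤ := by rw [hQvol]; exact ENNReal.mul_lt_top ENNReal.ofReal_lt_top ENNReal.ofReal_lt_top
  obtain ⟨M₀, hM₀⟩ := hQc.exists_bound_of_continuousOn hφcont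
  set M : ℝ := max M₀ 1 with hMdef
  have hM1 : (1:ℝ) ≤ M := le_max_right _ _
  have hM : ∀ a ∈ Q, |φ₀ a| ≤ M := fun a ha => (hM₀ a ha).trans (le_max_left _ _)
  set δ : ℝ := (2 * M)⁻¹ with hδdef
  have hδpos : 0 < δ := by positivity
  set U : Set ℝ := Set.Ioo (-δ) τstar with hUdef
  have hUopen : IsOpen U := isOpen_Ioo
  have hIU : Set.Ico 0 τstar ⊆ U := fun x hx => ⟨lt_of_lt_of_le (neg_lt_zero.mpr hδpos) hx.1, hx.2⟩
  -- uniform lower bound on compact pieces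
  have hcbound : ∀ hi < τstar, ∀ τ ∈ Set.Icc (-δ) hi, ∀ a ∈ Q,
      min (1 - hi / τstar) 2⁻¹ ≤ 1 + τ * φ₀ a := by
    intro hi hhi τ hτ a ha
    have hm' : m₀ = -(1 / τstar) := by
      rw [hτstar, one_div_div, div_neg, neg_neg, div_one]
    rcases le_or_gt 0 τ with hτ0 | hτ0
    · have h1 : τ * m₀ ≤ τ * φ₀ a := mul_le_mul_of_nonneg_left (hmin a ha) hτ0
      have h2 : τ / τstar ≤ hi / τstar := (div_le_div_iff_of_pos_right hτs).mpr hτ.2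
      have h3 : τ * m₀ = -(τ / τstar) := by rw [hm']; ring
      have h4 : min (1 - hi / τstar) 2⁻¹ ≤ 1 - hi / τstar := min_le_left _ _
      linarith
    · have habs : |τ| ≤ δ := abs_le.mpr ⟨hτ.1, by linarith⟩
      have h1 : |τ * φ₀ a| ≤ δ * M := by
        rw [abs_mul]
        exact mul_le_mul habs (hM a ha) (abs_nonneg _) hδpos.le
      have h2 : δ * M = 2⁻¹ := by
        rw [hδdef]
        field_simp
      have h3 := neg_abs_le (τ * φ₀ a)
      have h4 : min (1 - hi / τstar) 2⁻¹ ≤ 2⁻¹ := min_le_right _ _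
      linarith
  have hcpos : ∀ hi < τstar, 0 < min (1 - hi / τstar) 2⁻¹ := by
    intro hi hhi
    apply lt_min
    · have : hi / τstar < 1 := (div_lt_one hτs).mpr hhi
      linarith
    · norm_num
  have hposU : ∀ τ ∈ U, ∀ a ∈ Q, 0 < 1 + τ * φ₀ a := by
    intro τ hτ a ha
    exact lt_of_lt_of_le (hcpos τ hτ.2) (hcbound τ hτ.2 τ ⟨hτ.1.le, le_refl _⟩ a ha)
  set Kb : ℝ := 1 + (τstar + δ) * M with hKbdef
  have hKbpos : 0 < Kb := by positivity
  have hub : ∀ τ ∈ U, ∀ a ∈ Q, 1 + τ * φ₀ a ≤ Kb := by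
    intro τ hτ a ha
    have habs : |τ| ≤ τstar + δ := abs_le.mpr ⟨by linarith [hτ.1], by linarith [hτ.2]⟩
    have h1 : τ * φ₀ a ≤ |τ * φ₀ a| := le_abs_self _
    have h2 : |τ * φ₀ a| ≤ (τstar + δ) * M := by
      rw [abs_mul]
      exact mul_le_mul habs (hM a ha) (abs_nonneg _) (by linarith)
    rw [hKbdef]
    linarith
  set S : ℝ → ℝ := fun τ => ∫ a in Q, (1 + τ * φ₀ a)⁻¹ with hSdef
  have hSint : ∀ τ ∈ U, IntegrableOn (fun a => (1 + τ * φ₀ a)⁻¹) Q volume := by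
    intro τ hτ
    apply ContinuousOn.integrableOn_compact hQc
    exact (continuousOn_const.add (continuousOn_const.mul hφcont)).inv₀
      (fun a ha => (hposU τ hτ a ha).ne')
  have hSpos : ∀ τ ∈ U, 0 < S τ := by
    intro τ hτ
    have hmono := setIntegral_mono_on (integrableOn_const hQfin.ne) (hSint τ hτ) hQm
      (fun a ha => inv_anti₀ (hposU τ hτ a ha) (hub τ hτ a ha))
    rw [setIntegral_const] at hmono
    have h0 : 0 < (volume Q).toReal • Kb⁻¹ := by
      rw [hQv, smul_eq_mul]; positivity
    exact lt_of_lt_of_le h0 hmono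
  have hScont : ∀ τ ∈ U, ContinuousAt S τ := by
    intro τ hτ
    obtain ⟨hτl, hτr⟩ := hτ
    set lo : ℝ := (τ + -δ) / 2 with hlodef
    set hi : ℝ := (τ + τstar) / 2 with hhidef
    have hlo : lo < τ := by rw [hlodef]; linarith
    have hhi : τ < hi := by rw [hhidef]; linarith
    have hhi' : hi < τstar := by rw [hhidef]; linarith
    have hlo' : -δ ≤ lo := by rw [hlodef]; linarith
    set c : ℝ := min (1 - hi / τstar) 2⁻¹ with hcdef
    have hc := hcpos hi hhi'
    have hcb : ∀ s ∈ Set.Icc lo hi, ∀ a ∈ Q, c ≤ 1 + s * φ₀ a := fun s hs =>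
      hcbound hi hhi' s ⟨le_trans hlo' hs.1, hs.2⟩
    have hcont : ContinuousOn S (Set.Icc lo hi) := by
      apply continuousOn_of_dominated (bound := fun _ => c⁻¹)
      · intro s hs
        exact (hSint s ⟨lt_of_lt_of_le (by linarith) hs.1, lt_of_le_of_lt hs.2 hhi'⟩).aestronglyMeasurable
      · intro s hs
        filter_upwards [ae_restrict_mem hQm] with a ha
        rw [Real.norm_eq_abs, abs_inv, abs_of_pos (lt_of_lt_of_le hc (hcb s hs a ha))]
        exact inv_anti₀ hc (hcb s hs a ha)
      · exact integrableOn_const hQfin.ne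
      · filter_upwards [ae_restrict_mem hQm] with a ha
        exact ((continuous_const.add (continuous_id.mul continuous_const)).continuousOn).inv₀
          (fun s hs => (lt_of_lt_of_le hc (hcb s hs a ha)).ne')
    exact hcont.continuousAt (Icc_mem_nhds hlo hhi)
  set g : ℝ → ℝ := fun τ => (1 / L ^ 2) * S τ with hgdef
  have hgF : ∀ τ ∈ Set.Ico 0 τstar, F τ = g τ := by
    intro τ hτ
    rw [hF τ hτ, hgdef]
    simp only [one_div, hSdef]
  have hgpos : ∀ τ ∈ U, 0 < g τ := fun τ hτ =>
    mul_pos (by positivity) (hSpos τ hτ)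
  have hgcont : ∀ τ ∈ U, ContinuousAt g τ := fun τ hτ =>
    continuousAt_const.mul (hScont τ hτ)
  -- the key identity
  haveI hfinQ : IsFiniteMeasure (volume.restrict Q) :=
    ⟨by rwa [Measure.restrict_apply_univ]⟩
  have hφae : AEMeasurable φ₀ (volume.restrict Q) := hφcont.aemeasurable hQm
  have hTeq : ∀ τ ∈ Set.Ico 0 τstar, T τ = ∫ s in (0:ℝ)..τ, (g s) ^ 2 := by
    intro τ hτ
    haveI hfinI : IsFiniteMeasure (volume.restrict (Set.Ioc 0 τ)) :=
      ⟨by rw [Measure.restrict_apply_univ, Real.volume_Ioc]; exact ENNReal.ofReal_lt_top⟩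
    obtain ⟨c, hc, hcb0⟩ : ∃ c : ℝ, 0 < c ∧ ∀ s ∈ Set.Icc (-δ) τ, ∀ a ∈ Q, c ≤ 1 + s * φ₀ a :=
      ⟨min (1 - τ / τstar) 2⁻¹, hcpos τ hτ.2, hcbound τ hτ.2⟩
    have hcb : ∀ s ∈ Set.uIcc 0 τ, ∀ a ∈ Q, c ≤ 1 + s * φ₀ a := by
      intro s hs a ha
      rw [Set.uIcc_of_le hτ.1] at hs
      exact hcb0 s ⟨le_trans (by linarith [hδpos]) hs.1, hs.2⟩ a ha
    have hsIoc : ∀ s ∈ Set.Ioc 0 τ, s ∈ Set.uIcc 0 τ := by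
      intro s hs
      rw [Set.uIcc_of_le hτ.1]
      exact Set.Ioc_subset_Icc_self hs
    -- step 1 : pointwise kernel identity
    have hstep1 : ∀ a ∈ Q, (∫ b in Q, (if φ₀ a ≠ φ₀ b then
        Real.log ((1 + τ * φ₀ a) / (1 + τ * φ₀ b)) / (φ₀ a - φ₀ b) else τ / (1 + τ * φ₀ a)))
        = ∫ b in Q, ∫ s in (0:ℝ)..τ, ((1 + s * φ₀ a) * (1 + s * φ₀ b))⁻¹ := by
      intro a ha
      apply setIntegral_congr_fun hQm
      intro b hb
      exact aux_k_eq (φ₀ a) (φ₀ b) τ c hc (fun s hs => ⟨hcb s hs a ha, hcb s hs b hb⟩)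
    -- integrability on the product for fixed a
    have hint1 : ∀ a ∈ Q, Integrable
        (Function.uncurry fun b s => ((1 + s * φ₀ a) * (1 + s * φ₀ b))⁻¹)
        ((volume.restrict Q).prod (volume.restrict (Set.Ioc 0 τ))) := by
      intro a ha
      have hmeas : AEStronglyMeasurable
          (Function.uncurry fun b s => ((1 + s * φ₀ a) * (1 + s * φ₀ b))⁻¹)
          ((volume.restrict Q).prod (volume.restrict (Set.Ioc 0 τ))) := by
        apply AEMeasurable.aestronglyMeasurable
        apply AEMeasurable.inv
        exact ((aemeasurable_const.add (measurable_snd.aemeasurable.mul aemeasurable_const)).mul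
          (aemeasurable_const.add (measurable_snd.aemeasurable.mul
            (hφae.comp_quasiMeasurePreserving Measure.quasiMeasurePreserving_fst))))
      apply Integrable.mono' (integrable_const (c⁻¹ * c⁻¹)) hmeas
      rw [Measure.prod_restrict]
      filter_upwards [ae_restrict_mem (hQm.prod measurableSet_Ioc)] with p hp
      obtain ⟨hp1, hp2⟩ := hp
      have h1 := hcb p.2 (hsIoc p.2 hp2) a ha
      have h2 := hcb p.2 (hsIoc p.2 hp2) p.1 hp1
      simp only [Function.uncurry]
      rw [Real.norm_eq_abs, abs_inv, abs_of_pos (mul_pos (hc.trans_le h1) (hc.trans_le h2)),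
        ← mul_inv]
      exact inv_anti₀ (mul_pos hc hc)
        (mul_le_mul h1 h2 hc.le (by linarith [hc.trans_le h1]))
    -- swap for fixed a
    have hswap1 : ∀ a ∈ Q, (∫ b in Q, ∫ s in (0:ℝ)..τ, ((1 + s * φ₀ a) * (1 + s * φ₀ b))⁻¹)
        = ∫ s in Set.Ioc 0 τ, (1 + s * φ₀ a)⁻¹ * S s := by
      intro a ha
      simp_rw [intervalIntegral.integral_of_le hτ.1]
      rw [MeasureTheory.integral_integral_swap (hint1 a ha)]
      apply setIntegral_congr_fun measurableSet_Ioc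
      intro s hs
      simp_rw [mul_inv]
      rw [integral_const_mul]
    -- integrability for the outer swap
    have hScontOn : ContinuousOn S (Set.Icc 0 τ) := fun x hx =>
      (hScont x (hIU ⟨hx.1, lt_of_le_of_lt hx.2 hτ.2⟩)).continuousWithinAt
    have hSae : AEMeasurable S (volume.restrict (Set.Ioc 0 τ)) :=
      (hScontOn.mono Set.Ioc_subset_Icc_self).aemeasurable measurableSet_Ioc
    have hSb : ∀ s ∈ Set.Ioc 0 τ, |S s| ≤ c⁻¹ * L ^ 2 := by
      intro s hs
      have := norm_setIntegral_le_of_norm_le_const hQfin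
        (f := fun a => (1 + s * φ₀ a)⁻¹) (C := c⁻¹) ?_
      · rw [Real.norm_eq_abs] at this
        rw [← hQv]
        exact this
      · intro a ha
        have h1 := hcb s (hsIoc s hs) a ha
        rw [Real.norm_eq_abs, abs_inv, abs_of_pos (hc.trans_le h1)]
        exact inv_anti₀ hc h1
    have hint2 : Integrable (Function.uncurry fun a s => (1 + s * φ₀ a)⁻¹ * S s)
        ((volume.restrict Q).prod (volume.restrict (Set.Ioc 0 τ))) := by
      have hmeas : AEStronglyMeasurable (Function.uncurry fun a s => (1 + s * φ₀ a)⁻¹ * S s)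
          ((volume.restrict Q).prod (volume.restrict (Set.Ioc 0 τ))) := by
        apply AEMeasurable.aestronglyMeasurable
        exact ((aemeasurable_const.add (measurable_snd.aemeasurable.mul
          (hφae.comp_quasiMeasurePreserving Measure.quasiMeasurePreserving_fst))).inv.mul
          (hSae.comp_quasiMeasurePreserving Measure.quasiMeasurePreserving_snd))
      apply Integrable.mono' (integrable_const (c⁻¹ * (c⁻¹ * L ^ 2))) hmeas
      rw [Measure.prod_restrict]
      filter_upwards [ae_restrict_mem (hQm.prod measurableSet_Ioc)] with p hp
      obtain ⟨hp1, hp2⟩ := hp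
      have h1 := hcb p.2 (hsIoc p.2 hp2) p.1 hp1
      simp only [Function.uncurry]
      rw [Real.norm_eq_abs, abs_mul]
      apply mul_le_mul _ (hSb p.2 hp2) (abs_nonneg _) (by positivity)
      rw [abs_inv, abs_of_pos (hc.trans_le h1)]
      exact inv_anti₀ hc h1
    -- main computation
    have hmain : (∫ a in Q, ∫ b in Q, (if φ₀ a ≠ φ₀ b then
        Real.log ((1 + τ * φ₀ a) / (1 + τ * φ₀ b)) / (φ₀ a - φ₀ b) else τ / (1 + τ * φ₀ a)))
        = ∫ s in Set.Ioc 0 τ, S s * S s := by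
      rw [setIntegral_congr_fun hQm (fun a ha => (hstep1 a ha).trans (hswap1 a ha))]
      rw [MeasureTheory.integral_integral_swap hint2]
      apply setIntegral_congr_fun measurableSet_Ioc
      intro s hs
      beta_reduce
      rw [integral_mul_const]
    rw [hT τ hτ, hmain, intervalIntegral.integral_of_le hτ.1, ← integral_const_mul]
    apply setIntegral_congr_fun measurableSet_Ioc
    intro s hs
    beta_reduce
    simp only [hgdef]
    ring
  set Tg : ℝ → ℝ := fun τ => ∫ s in (0:ℝ)..τ, (g s) ^ 2 with hTgdef
  have hgsqcont : ContinuousOn (fun s => (g s) ^ 2) U := fun x hx =>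
    ((hgcont x hx).pow 2).continuousWithinAt
  have hTgd : ∀ τ ∈ U, HasDerivAt Tg ((g τ) ^ 2) τ := by
    intro τ hτ
    have h0U : (0:ℝ) ∈ U := ⟨neg_lt_zero.mpr hδpos, hτs⟩
    have hsub : Set.uIcc 0 τ ⊆ U := (Set.ordConnected_Ioo).uIcc_subset h0U hτ
    exact intervalIntegral.integral_hasDerivAt_right
      ((hgsqcont.mono hsub).intervalIntegrable)
      (ContinuousOn.stronglyMeasurableAtFilter hUopen hgsqcont τ hτ)
      ((hgcont τ hτ).pow 2)
  have hTgcont : ContinuousOn Tg U := fun x hx => (hTgd x hx).continuousAt.continuousWithinAt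
  have hTgmono : StrictMonoOn Tg (Set.Ico 0 τstar) := by
    apply strictMonoOn_of_deriv_pos (convex_Ico 0 τstar) (hTgcont.mono hIU)
    intro x hx
    rw [interior_Ico] at hx
    have hxU : x ∈ U := hIU ⟨hx.1.le, hx.2⟩
    rw [(hTgd x hxU).deriv]
    exact pow_pos (hgpos x hxU) 2
  have hTTg : Set.EqOn T Tg (Set.Ico 0 τstar) := fun x hx => hTeq x hx
  have hTmono : StrictMonoOn T (Set.Ico 0 τstar) := fun a ha b hb hab => by
    rw [hTTg ha, hTTg hb]; exact hTgmono ha hb hab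
  have hTcont : ContinuousOn T (Set.Ico 0 τstar) := (hTgcont.mono hIU).congr hTTg
  have h0mem : (0:ℝ) ∈ Set.Ico 0 τstar := ⟨le_refl _, hτs⟩
  have hT0 : T 0 = 0 := by rw [hTeq 0 h0mem, intervalIntegral.integral_same]
  have hhalf : τstar / 2 ∈ Set.Ico 0 τstar := ⟨by linarith, by linarith⟩
  have hThalf : 0 < T (τstar / 2) := by
    rw [← hT0]; exact hTmono h0mem hhalf (by linarith)
  have hTstarpos : 0 < Tstar := by
    rw [hTstar]
    have hmem : ((T (τstar / 2) : ℝ) : EReal) ∈ (fun τ => ((T τ : ℝ) : EReal)) '' Set.Ico 0 τstar :=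
      ⟨τstar / 2, hhalf, rfl⟩
    have h0 : (0 : EReal) < ((T (τstar / 2) : ℝ) : EReal) := by exact_mod_cast hThalf
    exact h0.trans_le (le_sSup hmem)
  have hlt : ∀ τ ∈ Set.Ico 0 τstar, (T τ : EReal) < Tstar := by
    intro τ hτ
    have hmid : (τ + τstar) / 2 ∈ Set.Ico 0 τstar := ⟨by linarith [hτ.1], by linarith [hτ.2]⟩
    have h1 : T τ < T ((τ + τstar) / 2) := hTmono hτ hmid (by linarith [hτ.2, hτ.1])
    have h2 : ((T ((τ + τstar) / 2) : ℝ) : EReal) ≤ Tstar :=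
      hTstar ▸ le_sSup ⟨_, hmid, rfl⟩
    exact lt_of_lt_of_le (by exact_mod_cast h1) h2
  have himg : T '' Set.Ico 0 τstar = D := by
    ext t
    rw [hD]
    constructor
    · rintro ⟨τ, hτ, rfl⟩
      refine ⟨?_, hlt τ hτ⟩
      rw [← hT0]
      exact hTmono.monotoneOn h0mem hτ hτ.1
    · rintro ⟨ht0, htlt⟩
      rw [hTstar] at htlt
      obtain ⟨y, ⟨τ', hτ', rfl⟩, hty⟩ := lt_sSup_iff.mp htlt
      have hty' : t < T τ' := by
        exact_mod_cast show (t : EReal) < ((T τ' : ℝ) : EReal) from hty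
      have hsub : Set.Icc 0 τ' ⊆ Set.Ico 0 τstar := fun x hx => ⟨hx.1, lt_of_le_of_lt hx.2 hτ'.2⟩
      have hmem : t ∈ Set.Icc (T 0) (T τ') := ⟨by rw [hT0]; exact ht0, hty'.le⟩
      obtain ⟨τ, hτ, hTτ⟩ := intermediate_value_Icc hτ'.1 (hTcont.mono hsub) hmem
      exact ⟨τ, hsub hτ, hTτ⟩
  refine ⟨hTstarpos, hTmono, hTcont, himg, ?_⟩
  intro τinv hinv
  have h0D : (0:ℝ) ∈ D := by
    rw [hD]; exact ⟨le_refl _, by exact_mod_cast hTstarpos⟩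
  have hinj := hTmono.injOn
  have hτinv0 : τinv 0 = 0 :=
    hinj (hinv 0 h0D).1 h0mem (by rw [(hinv 0 h0D).2, hT0])
  refine ⟨hτinv0, ?_⟩
  intro t ht
  have hτ₀ : τinv t ∈ Set.Ico 0 τstar := (hinv t ht).1
  have hTt : T (τinv t) = t := (hinv t ht).2
  have hU₀ : τinv t ∈ U := hIU hτ₀
  have hmonoinv : StrictMonoOn τinv D := by
    intro t1 h1 t2 h2 h12
    rw [← hTmono.lt_iff_lt (hinv t1 h1).1 (hinv t2 h2).1, (hinv t1 h1).2, (hinv t2 h2).2]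
    exact h12
  have hcont_inv : ContinuousWithinAt τinv D t := by
    have ht0' : 0 ≤ t := by rw [hD] at ht; exact ht.1
    have htlt : (t : EReal) < Tstar := by rw [hD] at ht; exact ht.2
    have hexr : ∀ b > τinv t, ∃ c ∈ D, τinv c ∈ Set.Ioc (τinv t) b := by
      intro b hb
      set τ' : ℝ := min b ((τinv t + τstar) / 2) with hτ'def
      have hτ'1 : τinv t < τ' := lt_min hb (by linarith [hτ₀.1, hτ₀.2])
      have hτ'2 : τ' < τstar := lt_of_le_of_lt (min_le_right _ _) (by linarith [hτ₀.2, hτ₀.1])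
      have hτ'mem : τ' ∈ Set.Ico 0 τstar := ⟨le_trans hτ₀.1 hτ'1.le, hτ'2⟩
      have hcD : T τ' ∈ D := himg ▸ ⟨τ', hτ'mem, rfl⟩
      have heq2 : τinv (T τ') = τ' := hinj (hinv _ hcD).1 hτ'mem (hinv _ hcD).2
      exact ⟨T τ', hcD, by rw [heq2]; exact ⟨hτ'1, min_le_left _ _⟩⟩
    have hDr : D ∈ nhdsWithin t (Set.Ici t) := by
      obtain ⟨z, hz1, hz2⟩ := exists_between htlt
      have hzbot : z ≠ ⊥ := ((EReal.bot_lt_coe t).trans hz1).ne'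
      have hztop : z ≠ ⊤ := (hz2.trans_le le_top).ne
      have hz' : ((z.toReal : ℝ) : EReal) = z := EReal.coe_toReal hztop hzbot
      refine mem_nhdsWithin.mpr ⟨Set.Iio z.toReal, isOpen_Iio, ?_, ?_⟩
      · exact EReal.coe_lt_coe_iff.mp (hz' ▸ hz1)
      · intro x hx
        rw [hD]
        refine ⟨le_trans ht0' hx.2, ?_⟩
        have : ((x : ℝ) : EReal) < z := by
          rw [← hz']
          exact_mod_cast hx.1
        exact this.trans hz2
    have hr : ContinuousWithinAt τinv (Set.Ici t) t :=
      hmonoinv.continuousWithinAt_right_of_exists_between hDr hexr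
    rcases eq_or_lt_of_le ht0' with h0t | h0t
    · exact hr.mono (fun x hx => by rw [hD] at hx; rw [← h0t]; exact hx.1)
    · have hτ₀pos : 0 < τinv t := by
        rcases eq_or_lt_of_le hτ₀.1 with h | h
        · exfalso
          rw [← h, hT0] at hTt
          exact h0t.ne hTt
        · exact h
      have hexl : ∀ b < τinv t, ∃ c ∈ D, τinv c ∈ Set.Ico b (τinv t) := by
        intro b hb
        set τ' : ℝ := max b 0 with hτ'def
        have hτ'lt : τ' < τinv t := max_lt hb hτ₀pos
        have hτ'mem : τ' ∈ Set.Ico 0 τstar := ⟨le_max_right _ _, hτ'lt.trans hτ₀.2⟩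
        have hcD : T τ' ∈ D := himg ▸ ⟨τ', hτ'mem, rfl⟩
        have heq2 : τinv (T τ') = τ' := hinj (hinv _ hcD).1 hτ'mem (hinv _ hcD).2
        exact ⟨T τ', hcD, by rw [heq2]; exact ⟨le_max_left _ _, hτ'lt⟩⟩
      have hDl : D ∈ nhdsWithin t (Set.Iic t) := by
        refine mem_nhdsWithin.mpr ⟨Set.Ioi 0, isOpen_Ioi, h0t, ?_⟩
        intro x hx
        rw [hD]
        refine ⟨le_of_lt hx.1, ?_⟩
        exact lt_of_le_of_lt (EReal.coe_le_coe_iff.mpr hx.2) htlt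
      have hl : ContinuousWithinAt τinv (Set.Iic t) t :=
        hmonoinv.continuousWithinAt_left_of_exists_between hDl hexl
      exact (hl.union hr).mono (fun x _ => (le_total x t).imp (fun h => h) (fun h => h))
  have htendsto : Tendsto τinv (nhdsWithin t (D \ {t})) (nhdsWithin (τinv t) {x | x ≠ τinv t}) := by
    rw [tendsto_nhdsWithin_iff]
    constructor
    · exact hcont_inv.mono Set.diff_subset
    · filter_upwards [self_mem_nhdsWithin] with t' ht'
      intro heq
      apply ht'.2
      have : t' = t := by rw [← (hinv t' ht'.1).2, heq, hTt]
      exact Set.mem_singleton_iff.mpr this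
  have hslopeT := hasDerivAt_iff_tendsto_slope.mp (hTgd (τinv t) hU₀)
  have hne : (g (τinv t)) ^ 2 ≠ 0 := (pow_pos (hgpos _ hU₀) 2).ne'
  have hcomp : Tendsto (fun t' => (slope Tg (τinv t) (τinv t'))⁻¹) (nhdsWithin t (D \ {t}))
      (nhds (((g (τinv t)) ^ 2)⁻¹)) := by
    exact ((hslopeT.comp htendsto).inv₀ hne)
  rw [hasDerivWithinAt_iff_tendsto_slope]
  have hα' : α (τinv t) = (((g (τinv t))) ^ 2)⁻¹ := by rw [hα _ hτ₀, hgF _ hτ₀]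
  rw [hα']
  have heq : (fun t' => (slope Tg (τinv t) (τinv t'))⁻¹) =ᶠ[nhdsWithin t (D \ {t})]
      slope τinv t := by
    filter_upwards [self_mem_nhdsWithin] with t' ht'
    have ht'D := ht'.1
    have hτ' : τinv t' ∈ Set.Ico 0 τstar := (hinv t' ht'D).1
    have hTgt' : Tg (τinv t') = t' := by rw [← hTTg hτ', (hinv t' ht'D).2]
    have hTgt : Tg (τinv t) = t := by rw [← hTTg hτ₀, hTt]
    rw [slope_def_field, slope_def_field, hTgt', hTgt, inv_div]
  exact hcomp.congr' heq
end

section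
/- If φ₀ is nondegenerate, then the blow-up time T* := lim_{τ→τ*⁻} T(τ) is finite and is given by T* = (1/|Q|²) ∫_Q ∫_Q K(a,b) da db, where K(a,b) = log((φ₀(a)−m₀)/(φ₀(b)−m₀))/(φ₀(a)−φ₀(b)) if φ₀(a) ≠ φ₀(b) and K(a,b) = 1/(φ₀(a)−m₀) if φ₀(a) = φ₀(b); in particular this double integral is finite. -/
open MeasureTheory Real Set Filter

/-- `φ₀` is nondegenerate on `Q`: its minimum `m₀` is attained at finitely many points, all in
the open interior of `Q`, and near each minimum point `φ₀ − m₀` is comparable to the squared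
distance to that point. -/
def Nondegenerate (Q : Set (ℝ × ℝ)) (φ₀ : ℝ × ℝ → ℝ) (m₀ : ℝ) : Prop :=
  ∃ S : Finset (ℝ × ℝ),
    (↑S : Set (ℝ × ℝ)) = {a ∈ Q | φ₀ a = m₀} ∧
    (↑S : Set (ℝ × ℝ)) ⊆ interior Q ∧
    ∃ r > (0 : ℝ), ∃ c₁ c₂ : ℝ, 0 < c₁ ∧ c₁ ≤ c₂ ∧
      ∀ aᵢ ∈ S, ∀ a ∈ Q, ‖a - aᵢ‖ ≤ r →
        c₁ * ‖a - aᵢ‖ ^ 2 ≤ φ₀ a - m₀ ∧ φ₀ a - m₀ ≤ c₂ * ‖a - aᵢ‖ ^ 2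

noncomputable def Fk (x y : ℝ) : ℝ := if x ≠ y then Real.log (x / y) / (x - y) else x⁻¹

lemma aux_log_le {t : ℝ} (ht : 1 ≤ t) : 2 * Real.log t ≤ t - t⁻¹ := by
  have hder : ∀ x ∈ interior (Set.Ici (1:ℝ)),
      HasDerivAt (fun t : ℝ => t - t⁻¹ - 2 * Real.log t) (1 - (-(x^2)⁻¹) - 2 * x⁻¹) x := by
    intro x hx
    rw [interior_Ici] at hx
    have hx0 : x ≠ 0 := by have : (1:ℝ) < x := hx; positivity
    exact ((hasDerivAt_id x).sub (hasDerivAt_inv hx0)).sub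
      ((Real.hasDerivAt_log hx0).const_mul 2)
  have hmono : MonotoneOn (fun t : ℝ => t - t⁻¹ - 2 * Real.log t) (Set.Ici 1) := by
    apply monotoneOn_of_deriv_nonneg (convex_Ici 1)
    · apply ContinuousOn.sub
      · exact continuousOn_id.sub (continuousOn_id.inv₀ (fun x hx => by
          have : (1:ℝ) ≤ x := hx; positivity))
      · exact continuousOn_const.mul (Real.continuousOn_log.mono (fun x hx => by
          have : (1:ℝ) ≤ x := hx; simp; positivity))
    · intro x hx
      exact (hder x hx).differentiableAt.differentiableWithinAt
    · intro x hx
      rw [(hder x hx).deriv]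
      rw [interior_Ici] at hx
      have hx1 : (1:ℝ) < x := hx
      have h1 : (1 - x⁻¹)^2 = 1 - (-(x^2)⁻¹) - 2 * x⁻¹ := by
        field_simp
        ring
      rw [← h1]; positivity
  have h := hmono (by simp : (1:ℝ) ∈ Set.Ici 1) (by exact ht : t ∈ Set.Ici 1) ht
  simp [Real.log_one] at h
  linarith

lemma aux_le_log {t : ℝ} (ht : 1 ≤ t) : 2 * (t - 1) / (t + 1) ≤ Real.log t := by
  have hder : ∀ x ∈ interior (Set.Ici (1:ℝ)),
      HasDerivAt (fun t : ℝ => Real.log t + 4 * (t + 1)⁻¹) (x⁻¹ + 4 * (-1 / (x+1)^2)) x := by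
    intro x hx
    rw [interior_Ici] at hx
    have hx1 : (1:ℝ) < x := hx
    have hx0 : x ≠ 0 := by positivity
    have hx10 : x + 1 ≠ 0 := by positivity
    refine (Real.hasDerivAt_log hx0).add ?_
    have : HasDerivAt (fun t : ℝ => (t + 1)⁻¹) (-1 / (x+1)^2) x := by
      simpa using ((hasDerivAt_id x).add_const 1).fun_inv hx10
    simpa using this.const_mul 4
  have hmono : MonotoneOn (fun t : ℝ => Real.log t + 4 * (t + 1)⁻¹) (Set.Ici 1) := by
    apply monotoneOn_of_deriv_nonneg (convex_Ici 1)
    · apply ContinuousOn.add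
      · exact Real.continuousOn_log.mono (fun x hx => by
          have : (1:ℝ) ≤ x := hx; simp; positivity)
      · exact continuousOn_const.mul ((continuousOn_id.add continuousOn_const).inv₀
          (fun x hx => by have : (1:ℝ) ≤ x := hx; show x + 1 ≠ 0; positivity))
    · intro x hx
      exact (hder x hx).differentiableAt.differentiableWithinAt
    · intro x hx
      rw [(hder x hx).deriv]
      rw [interior_Ici] at hx
      have hx1 : (1:ℝ) < x := hx
      have h0 : (0:ℝ) < x := by linarith
      have h1 : ((x-1)^2) / (x * (x+1)^2) = x⁻¹ + 4 * (-1 / (x+1)^2) := by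
        field_simp
        ring
      rw [← h1]; positivity
  have h := hmono (by simp : (1:ℝ) ∈ Set.Ici 1) (by exact ht : t ∈ Set.Ici 1) ht
  simp [Real.log_one] at h
  have ht1 : (0:ℝ) < t + 1 := by linarith
  rw [div_le_iff₀ ht1]
  have h2 : 2 - 4 / (t + 1) ≤ Real.log t := by
    have e : 4 * ((1:ℝ)+1)⁻¹ = 2 := by norm_num
    have e2 : 4 * (t+1)⁻¹ = 4/(t+1) := by ring
    norm_num at h
    linarith [h]
  calc 2 * (t - 1) = (2 - 4/(t+1)) * (t+1) := by field_simp; ring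
    _ ≤ Real.log t * (t+1) := mul_le_mul_of_nonneg_right h2 (le_of_lt ht1)

lemma Fk_symm {x y : ℝ} (hx : 0 < x) (hy : 0 < y) : Fk x y = Fk y x := by
  unfold Fk
  rcases eq_or_ne x y with h | h
  · simp [h]
  · rw [if_pos h, if_pos (Ne.symm h)]
    rw [Real.log_div (ne_of_gt hx) (ne_of_gt hy), Real.log_div (ne_of_gt hy) (ne_of_gt hx)]
    rw [div_eq_div_iff (sub_ne_zero.mpr h) (sub_ne_zero.mpr (Ne.symm h))]
    ring

lemma Fk_le_of_lt {x y : ℝ} (hy : 0 < y) (hxy : y < x) : Fk x y ≤ (Real.sqrt (x * y))⁻¹ := by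
  have hx : 0 < x := hy.trans hxy
  have hsx : 0 < Real.sqrt x := Real.sqrt_pos.mpr hx
  have hsy : 0 < Real.sqrt y := Real.sqrt_pos.mpr hy
  have ht : 1 ≤ Real.sqrt x / Real.sqrt y := by
    rw [le_div_iff₀ hsy, one_mul]
    exact Real.sqrt_le_sqrt (le_of_lt hxy)
  have hlog : Real.log (x / y) = 2 * Real.log (Real.sqrt x / Real.sqrt y) := by
    rw [Real.log_div (ne_of_gt hx) (ne_of_gt hy),
        Real.log_div (ne_of_gt hsx) (ne_of_gt hsy),
        Real.log_sqrt (le_of_lt hx), Real.log_sqrt (le_of_lt hy)]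
    ring
  have key := aux_log_le ht
  rw [← hlog] at key
  have e1 : Real.sqrt x * Real.sqrt x = x := Real.mul_self_sqrt (le_of_lt hx)
  have e2 : Real.sqrt y * Real.sqrt y = y := Real.mul_self_sqrt (le_of_lt hy)
  have hts : Real.sqrt x / Real.sqrt y - (Real.sqrt x / Real.sqrt y)⁻¹
      = (x - y) / (Real.sqrt x * Real.sqrt y) := by
    rw [inv_div, div_sub_div _ _ (ne_of_gt hsy) (ne_of_gt hsx), e1, e2,
      mul_comm (Real.sqrt y) (Real.sqrt x)]
  rw [hts] at key
  unfold Fk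
  rw [if_pos (ne_of_gt hxy), Real.sqrt_mul (le_of_lt hx) y,
    div_le_iff₀ (sub_pos.mpr hxy), inv_mul_eq_div]
  exact key

lemma le_Fk_of_lt {x y : ℝ} (hy : 0 < y) (hxy : y < x) : 2 / (x + y) ≤ Fk x y := by
  have hx : 0 < x := hy.trans hxy
  have ht : 1 ≤ x / y := (one_le_div hy).mpr (le_of_lt hxy)
  have key := aux_le_log ht
  have e : 2 * (x/y - 1) / (x/y + 1) = 2 * (x - y) / (x + y) := by
    rw [div_eq_div_iff (by positivity) (by positivity)]
    field_simp
  rw [e] at key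
  unfold Fk
  rw [if_pos (ne_of_gt hxy), le_div_iff₀ (sub_pos.mpr hxy)]
  calc 2 / (x + y) * (x - y) = 2 * (x - y) / (x + y) := by ring
    _ ≤ Real.log (x / y) := key

lemma Fk_le {x y : ℝ} (hx : 0 < x) (hy : 0 < y) : Fk x y ≤ (Real.sqrt (x * y))⁻¹ := by
  rcases lt_trichotomy x y with h | h | h
  · rw [Fk_symm hx hy, mul_comm]
    exact Fk_le_of_lt hx h
  · subst h
    rw [Fk, if_neg (by simp), Real.sqrt_mul_self (le_of_lt hx)]
  · exact Fk_le_of_lt hy h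

lemma le_Fk {x y : ℝ} (hx : 0 < x) (hy : 0 < y) : 2 / (x + y) ≤ Fk x y := by
  rcases lt_trichotomy x y with h | h | h
  · rw [Fk_symm hx hy, add_comm]
    exact le_Fk_of_lt hx h
  · subst h
    rw [Fk, if_neg (by simp)]
    rw [div_le_iff₀ (by positivity), inv_mul_eq_div, le_div_iff₀ hx]
    ring_nf
    nlinarith
  · exact le_Fk_of_lt hy h

lemma Fk_pos {x y : ℝ} (hx : 0 < x) (hy : 0 < y) : 0 < Fk x y :=
  lt_of_lt_of_le (by positivity) (le_Fk hx hy)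

lemma Fk_continuousAt {p : ℝ × ℝ} (hx : 0 < p.1) (hy : 0 < p.2) :
    ContinuousAt (fun q : ℝ × ℝ => Fk q.1 q.2) p := by
  rcases ne_or_eq p.1 p.2 with h | h
  · have hopen : IsOpen {q : ℝ × ℝ | q.1 ≠ q.2} :=
      isOpen_ne_fun continuous_fst continuous_snd
    have hc : ContinuousAt (fun q : ℝ × ℝ => Real.log (q.1 / q.2) / (q.1 - q.2)) p := by
      apply ContinuousAt.div
      · exact (Real.continuousAt_log (by positivity)).comp
          (continuousAt_fst.div continuousAt_snd (ne_of_gt hy))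
      · exact continuousAt_fst.sub continuousAt_snd
      · exact sub_ne_zero.mpr h
    apply hc.congr
    filter_upwards [hopen.mem_nhds h] with q hq
    rw [Fk, if_pos hq]
  · have hval : Fk p.1 p.2 = (p.1)⁻¹ := by rw [Fk, if_neg (not_ne_iff.mpr h)]
    unfold ContinuousAt
    have hbeta : (fun q : ℝ × ℝ => Fk q.1 q.2) p = (p.1)⁻¹ := hval
    rw [hbeta]
    have hev : ∀ᶠ q : ℝ × ℝ in nhds p, (0:ℝ) < q.1 ∧ 0 < q.2 := by
      have ho : IsOpen {q : ℝ × ℝ | 0 < q.1 ∧ 0 < q.2} :=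
        (isOpen_lt continuous_const continuous_fst).inter
          (isOpen_lt continuous_const continuous_snd)
      exact ho.mem_nhds ⟨hx, hy⟩
    apply tendsto_of_tendsto_of_tendsto_of_le_of_le'
      (g := fun q : ℝ × ℝ => 2 / (q.1 + q.2))
      (h := fun q : ℝ × ℝ => (Real.sqrt (q.1 * q.2))⁻¹)
    · have hc : ContinuousAt (fun q : ℝ × ℝ => 2 / (q.1 + q.2)) p :=
        continuousAt_const.div (continuousAt_fst.add continuousAt_snd)
          (by rw [← h]; positivity)
      have hval2 : 2 / (p.1 + p.2) = (p.1)⁻¹ := by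
        rw [← h, show p.1 + p.1 = 2 * p.1 from by ring]
        field_simp
      have ht := hc.tendsto
      rw [hval2] at ht
      exact ht
    · have hcu : ContinuousAt (fun q : ℝ × ℝ => (Real.sqrt (q.1 * q.2))⁻¹) p := by
        apply ContinuousAt.inv₀
        · exact Real.continuous_sqrt.continuousAt.comp (continuousAt_fst.mul continuousAt_snd)
        · exact ne_of_gt (Real.sqrt_pos.mpr (by positivity))
      have hvalu : (Real.sqrt (p.1 * p.2))⁻¹ = (p.1)⁻¹ := by
        rw [← h, Real.sqrt_mul_self (le_of_lt hx)]
      have ht := hcu.tendsto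
      rw [hvalu] at ht
      exact ht
    · filter_upwards [hev] with q hq
      exact le_Fk hq.1 hq.2
    · filter_upwards [hev] with q hq
      exact Fk_le hq.1 hq.2

lemma int1d {r : ℝ} (hr : 0 ≤ r) (c : ℝ) :
    IntegrableOn (fun x : ℝ => (Real.sqrt |x - c|)⁻¹) (Set.Icc (c - r) (c + r)) volume := by
  have h0 : ∀ y : ℝ, (Real.sqrt |y|)⁻¹ = |y| ^ (-(1/2) : ℝ) := by
    intro y
    rw [Real.rpow_neg (abs_nonneg y), Real.sqrt_eq_rpow]
  have base : IntervalIntegrable (fun x : ℝ => x ^ (-(1/2) : ℝ)) volume 0 r :=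
    intervalIntegral.intervalIntegrable_rpow' (by norm_num)
  have q1 : IntervalIntegrable (fun x : ℝ => |x| ^ (-(1/2) : ℝ)) volume 0 r := by
    rw [intervalIntegrable_iff] at base ⊢
    apply base.congr_fun ?_ measurableSet_uIoc
    intro x hx
    rw [Set.uIoc_of_le hr] at hx
    show x ^ (-(1/2) : ℝ) = |x| ^ (-(1/2) : ℝ)
    rw [abs_of_pos hx.1]
  have q2 : IntervalIntegrable (fun x : ℝ => |x| ^ (-(1/2) : ℝ)) volume (-r) 0 := by
    have := ((IntervalIntegrable.iff_comp_neg (f := fun x : ℝ => |x| ^ (-(1/2) : ℝ))).mp q1)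
    simp only [abs_neg, neg_zero] at this
    exact this.symm
  have q3 : IntervalIntegrable (fun x : ℝ => |x| ^ (-(1/2) : ℝ)) volume (-r) r := q2.trans q1
  have q4 := q3.comp_sub_right c
  have q5 : IntegrableOn (fun x : ℝ => |x - c| ^ (-(1/2) : ℝ)) (Set.Icc (-r + c) (r + c))
      volume := by
    rw [← intervalIntegrable_iff_integrableOn_Icc_of_le (by linarith)]
    exact q4
  have hset : Set.Icc (c - r) (c + r) = Set.Icc (-r + c) (r + c) := by
    congr 1 <;> ring
  rw [hset]
  exact q5.congr_fun (fun x _ => (h0 (x - c)).symm) measurableSet_Icc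

lemma int2d {r : ℝ} (hr : 0 ≤ r) (c : ℝ × ℝ) :
    IntegrableOn (fun a : ℝ × ℝ => (Real.sqrt |a.1 - c.1|)⁻¹ * (Real.sqrt |a.2 - c.2|)⁻¹)
      (Set.Icc (c.1 - r) (c.1 + r) ×ˢ Set.Icc (c.2 - r) (c.2 + r)) volume := by
  rw [IntegrableOn, Measure.volume_eq_prod, ← Measure.prod_restrict]
  exact Integrable.mul_prod (int1d hr c.1) (int1d hr c.2)

lemma vol_line1 (t : ℝ) : volume {a : ℝ × ℝ | a.1 = t} = 0 := by
  have : {a : ℝ × ℝ | a.1 = t} = ({t} : Set ℝ) ×ˢ (Set.univ : Set ℝ) := by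
    ext ⟨x, y⟩; simp [Set.mem_prod, eq_comm]
  rw [this, Measure.volume_eq_prod, Measure.prod_prod]
  simp

lemma vol_line2 (t : ℝ) : volume {a : ℝ × ℝ | a.2 = t} = 0 := by
  have : {a : ℝ × ℝ | a.2 = t} = (Set.univ : Set ℝ) ×ˢ ({t} : Set ℝ) := by
    ext ⟨x, y⟩; simp [Set.mem_prod, eq_comm]
  rw [this, Measure.volume_eq_prod, Measure.prod_prod]
  simp

lemma g_integrable (Q : Set (ℝ × ℝ)) (hQcomp : IsCompact Q) (hQmeas : MeasurableSet Q)
    (φ₀ : ℝ × ℝ → ℝ) (hφcont : ContinuousOn φ₀ Q)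
    (m₀ : ℝ) (hmin : ∀ a ∈ Q, m₀ ≤ φ₀ a) (hnd : Nondegenerate Q φ₀ m₀) :
    IntegrableOn (fun a => (Real.sqrt (φ₀ a - m₀))⁻¹) Q volume := by
  obtain ⟨S, hS, hSint, r, hr, c₁, c₂, hc₁, hc₁₂, hbound⟩ := hnd
  set g : ℝ × ℝ → ℝ := fun a => (Real.sqrt (φ₀ a - m₀))⁻¹ with hg
  have hfcont : ContinuousOn (fun a => φ₀ a - m₀) Q := hφcont.sub continuousOn_const
  set U : Set (ℝ × ℝ) := ⋃ i ∈ S, Metric.ball i r with hU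
  have hUopen : IsOpen U := isOpen_biUnion fun i _ => Metric.isOpen_ball
  -- integrable on the compact part away from minima
  have hfpos : ∀ a ∈ Q \ U, 0 < φ₀ a - m₀ := by
    intro a ha
    rcases lt_or_eq_of_le (hmin a ha.1) with h | h
    · linarith
    · exfalso
      apply ha.2
      have haS : a ∈ (↑S : Set (ℝ × ℝ)) := by
        rw [hS]; exact ⟨ha.1, h.symm⟩
      exact Set.mem_biUnion haS (Metric.mem_ball_self hr)
  have int1 : IntegrableOn g (Q \ U) volume := by
    apply ContinuousOn.integrableOn_compact (hQcomp.diff hUopen)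
    apply ContinuousOn.inv₀
    · exact ((hfcont.mono Set.diff_subset).sqrt)
    · intro a ha
      exact ne_of_gt (Real.sqrt_pos.mpr (hfpos a ha))
  -- integrable near each minimum
  have int2 : ∀ i ∈ S, IntegrableOn g (Q ∩ Metric.ball i r) volume := by
    intro i hi
    have hsub : Q ∩ Metric.ball i r ⊆
        Set.Icc (i.1 - r) (i.1 + r) ×ˢ Set.Icc (i.2 - r) (i.2 + r) := by
      intro a ha
      have hd : dist a i ≤ r := le_of_lt (Metric.mem_ball.mp ha.2)
      have h1 : dist a.1 i.1 ≤ r := le_trans (le_max_left _ _) (by rw [← Prod.dist_eq]; exact hd)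
      have h2 : dist a.2 i.2 ≤ r := le_trans (le_max_right _ _) (by rw [← Prod.dist_eq]; exact hd)
      rw [Real.dist_eq] at h1 h2
      constructor
      · constructor <;> [linarith [abs_le.mp h1]; linarith [(abs_le.mp h1).2]]
      · constructor <;> [linarith [abs_le.mp h2]; linarith [(abs_le.mp h2).2]]
    have hmeas_s : MeasurableSet (Q ∩ Metric.ball i r) :=
      hQmeas.inter Metric.isOpen_ball.measurableSet
    have hB : IntegrableOn
        (fun a : ℝ × ℝ => (Real.sqrt c₁)⁻¹ * ((Real.sqrt |a.1 - i.1|)⁻¹ * (Real.sqrt |a.2 - i.2|)⁻¹))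
        (Q ∩ Metric.ball i r) volume := by
      have h' : IntegrableOn
          (fun a : ℝ × ℝ => (Real.sqrt c₁)⁻¹ * ((Real.sqrt |a.1 - i.1|)⁻¹ * (Real.sqrt |a.2 - i.2|)⁻¹))
          (Set.Icc (i.1 - r) (i.1 + r) ×ˢ Set.Icc (i.2 - r) (i.2 + r)) volume :=
        (int2d (le_of_lt hr) i).const_mul _
      exact h'.mono_set hsub
    apply hB.mono'
    · -- a.e. strong measurability of g on the set
      have : ContinuousOn (fun a => Real.sqrt (φ₀ a - m₀)) (Q ∩ Metric.ball i r) :=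
        (hfcont.mono Set.inter_subset_left).sqrt
      exact (this.aemeasurable hmeas_s).inv.aestronglyMeasurable
    · -- a.e. bound
      have hae : ∀ᵐ a ∂(volume.restrict (Q ∩ Metric.ball i r)),
          a.1 ≠ i.1 ∧ a.2 ≠ i.2 := by
        apply Filter.Eventually.and
        · refine ae_restrict_of_ae ?_
          have := vol_line1 i.1
          exact (measure_eq_zero_iff_ae_notMem.mp this).mono (by intro a ha hb; exact ha hb)
        · refine ae_restrict_of_ae ?_
          have := vol_line2 i.2
          exact (measure_eq_zero_iff_ae_notMem.mp this).mono (by intro a ha hb; exact ha hb)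
      filter_upwards [hae, ae_restrict_mem hmeas_s] with a hne ha
      have haQ : a ∈ Q := ha.1
      have hfa0 : 0 ≤ φ₀ a - m₀ := sub_nonneg.mpr (hmin a haQ)
      have hnorm : ‖a - i‖ ≤ r := by
        rw [← dist_eq_norm]; exact le_of_lt (Metric.mem_ball.mp ha.2)
      have hlow := (hbound i hi a haQ hnorm).1
      have habs1 : 0 < |a.1 - i.1| := abs_pos.mpr (sub_ne_zero.mpr hne.1)
      have habs2 : 0 < |a.2 - i.2| := abs_pos.mpr (sub_ne_zero.mpr hne.2)
      have hprod : |a.1 - i.1| * |a.2 - i.2| ≤ ‖a - i‖ ^ 2 := by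
        have e : ‖a - i‖ = max ‖a.1 - i.1‖ ‖a.2 - i.2‖ := by
          rw [Prod.norm_def]; rfl
        rw [e]
        have h1 : ‖a.1 - i.1‖ ≤ max ‖a.1 - i.1‖ ‖a.2 - i.2‖ := le_max_left _ _
        have h2 : ‖a.2 - i.2‖ ≤ max ‖a.1 - i.1‖ ‖a.2 - i.2‖ := le_max_right _ _
        rw [Real.norm_eq_abs] at *
        calc |a.1 - i.1| * |a.2 - i.2| ≤ (max |a.1 - i.1| |a.2 - i.2|) * (max |a.1 - i.1| |a.2 - i.2|) := by
              apply mul_le_mul h1 h2 (abs_nonneg _) (le_trans (abs_nonneg _) h1)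
          _ = (max |a.1 - i.1| |a.2 - i.2|) ^ 2 := by ring
      have hkey : c₁ * (|a.1 - i.1| * |a.2 - i.2|) ≤ φ₀ a - m₀ := by
        calc c₁ * (|a.1 - i.1| * |a.2 - i.2|) ≤ c₁ * ‖a - i‖ ^ 2 := by
              apply mul_le_mul_of_nonneg_left hprod (le_of_lt hc₁)
          _ ≤ φ₀ a - m₀ := hlow
      have hsq : Real.sqrt c₁ * (Real.sqrt |a.1 - i.1| * Real.sqrt |a.2 - i.2|)
          ≤ Real.sqrt (φ₀ a - m₀) := by
        calc Real.sqrt c₁ * (Real.sqrt |a.1 - i.1| * Real.sqrt |a.2 - i.2|)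
            = Real.sqrt (c₁ * (|a.1 - i.1| * |a.2 - i.2|)) := by
              rw [Real.sqrt_mul (le_of_lt hc₁), Real.sqrt_mul (abs_nonneg _)]
          _ ≤ Real.sqrt (φ₀ a - m₀) := Real.sqrt_le_sqrt hkey
      have hposL : 0 < Real.sqrt c₁ * (Real.sqrt |a.1 - i.1| * Real.sqrt |a.2 - i.2|) := by
        have := Real.sqrt_pos.mpr hc₁
        have := Real.sqrt_pos.mpr habs1
        have := Real.sqrt_pos.mpr habs2
        positivity
      have : g a ≤ (Real.sqrt c₁)⁻¹ * ((Real.sqrt |a.1 - i.1|)⁻¹ * (Real.sqrt |a.2 - i.2|)⁻¹) := by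
        rw [hg]
        simp only
        rw [← mul_inv, ← mul_inv]
        exact inv_anti₀ hposL hsq
      calc ‖g a‖ = g a := by
            rw [Real.norm_eq_abs, abs_of_nonneg]; rw [hg]; positivity
        _ ≤ _ := this
  -- combine
  have intU : IntegrableOn g (Q ∩ U) volume := by
    rw [hU, Set.inter_iUnion₂]
    rw [integrableOn_finset_iUnion]
    intro i hi
    exact int2 i hi
  have : IntegrableOn g ((Q \ U) ∪ (Q ∩ U)) volume := int1.union intU
  apply this.mono_set
  intro a ha
  by_cases h : a ∈ U
  · exact Or.inr ⟨ha, h⟩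
  · exact Or.inl ⟨ha, h⟩

lemma Fk_smul {c x y : ℝ} (hc : c ≠ 0) : Fk (c * x) (c * y) = c⁻¹ * Fk x y := by
  unfold Fk
  rcases eq_or_ne x y with h | h
  · rw [h, if_neg (by simp), if_neg (by simp), mul_inv]
  · rw [if_pos (by exact fun hh => h (mul_left_cancel₀ hc hh)), if_pos h,
      mul_div_mul_left _ _ hc]
    rw [show c * x - c * y = c * (x - y) by ring]
    rw [mul_comm c (x - y), ← div_div, div_eq_inv_mul (Real.log (x/y) / (x-y)) c]

/-- Restating the iterated integral as a product integral. -/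
lemma iterated_eq (Q : Set (ℝ × ℝ)) (h : ℝ × ℝ → ℝ × ℝ → ℝ)
    (hint : IntegrableOn (fun p : (ℝ × ℝ) × (ℝ × ℝ) => h p.1 p.2) (Q ×ˢ Q) volume) :
    ∫ a in Q, ∫ b in Q, h a b = ∫ p in Q ×ˢ Q, h p.1 p.2 := by
  have h2 : Integrable (Function.uncurry h) ((volume.restrict Q).prod (volume.restrict Q)) := by
    rw [Measure.prod_restrict]
    exact hint
  have := MeasureTheory.integral_integral h2
  rw [Measure.prod_restrict] at this
  exact this


theorem stmt_6
    (L : ℝ) (hL : 0 < L)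
    (Q : Set (ℝ × ℝ)) (hQ : Q = Set.Icc (0, 0) (L, L))
    (φ₀ : ℝ × ℝ → ℝ) (hφcont : ContinuousOn φ₀ Q)
    (hmean : ∫ a in Q, φ₀ a = 0)
    (m₀ : ℝ) (hmin : ∀ a ∈ Q, m₀ ≤ φ₀ a) (hatt : ∃ a ∈ Q, φ₀ a = m₀)
    (hm₀ : m₀ < 0)
    (τstar : ℝ) (hτstar : τstar = -1 / m₀)
    (T : ℝ → ℝ)
    (hT : ∀ τ ∈ Set.Ico 0 τstar,
      T τ = (1 / L ^ 4) * ∫ a in Q, ∫ b in Q,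
        (if φ₀ a ≠ φ₀ b then
          Real.log ((1 + τ * φ₀ a) / (1 + τ * φ₀ b)) / (φ₀ a - φ₀ b)
        else τ / (1 + τ * φ₀ a)))
    (K : ℝ × ℝ → ℝ × ℝ → ℝ)
    (hK : ∀ a b, K a b =
      if φ₀ a ≠ φ₀ b then
        Real.log ((φ₀ a - m₀) / (φ₀ b - m₀)) / (φ₀ a - φ₀ b)
      else 1 / (φ₀ a - m₀))
    (hnd : Nondegenerate Q φ₀ m₀) :
    IntegrableOn (fun p : (ℝ × ℝ) × (ℝ × ℝ) => K p.1 p.2) (Q ×ˢ Q) ∧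
    Filter.Tendsto T (nhdsWithin τstar (Set.Ico 0 τstar))
      (nhds ((1 / L ^ 4) * ∫ a in Q, ∫ b in Q, K a b)) := by
  -- basic setup
  have hQcomp : IsCompact Q := by rw [hQ]; exact isCompact_Icc
  have hQmeas : MeasurableSet Q := by rw [hQ]; exact measurableSet_Icc
  have hQne : Q.Nonempty := ⟨(0, 0), by
    rw [hQ]; exact ⟨le_refl _, ⟨hL.le, hL.le⟩⟩⟩
  have hτpos : 0 < τstar := by
    rw [hτstar]; exact div_pos_of_neg_of_neg (by norm_num) hm₀
  have hm0ne : m₀ ≠ 0 := ne_of_lt hm₀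
  have hid : ∀ a, 1 + τstar * φ₀ a = τstar * (φ₀ a - m₀) := by
    intro a; rw [hτstar]; field_simp; ring
  set f : ℝ × ℝ → ℝ := fun a => φ₀ a - m₀ with hf
  have hf0 : ∀ a ∈ Q, 0 ≤ f a := fun a ha => sub_nonneg.mpr (hmin a ha)
  -- maximum of f
  obtain ⟨amax, hamaxQ, hamax⟩ := hQcomp.exists_isMaxOn hQne hφcont
  set M : ℝ := φ₀ amax - m₀ with hM
  have hfM : ∀ a ∈ Q, f a ≤ M := fun a ha => sub_le_sub_right (hamax ha) m₀
  have hMpos : 0 < M := by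
    by_contra hcon
    push_neg at hcon
    rw [hM] at hcon
    have hconst : ∀ a ∈ Q, φ₀ a = m₀ := by
      intro a ha
      have h1 : φ₀ a ≤ φ₀ amax := hamax ha
      have h2 := hmin a ha
      linarith
    have hvol : volume Q = ENNReal.ofReal L * ENNReal.ofReal L := by
      rw [hQ, Set.Icc_prod_eq, Measure.volume_eq_prod, Measure.prod_prod]
      simp [Real.volume_Icc]
    have : ∫ a in Q, φ₀ a = (volume Q).toReal * m₀ := by
      rw [setIntegral_congr_fun hQmeas hconst, setIntegral_const, smul_eq_mul]
      rfl
    rw [hmean] at this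
    rw [hvol, ENNReal.toReal_mul, ENNReal.toReal_ofReal hL.le] at this
    nlinarith [mul_pos hL hL]
  -- the uniform lower bound constant
  set Cc : ℝ := min M⁻¹ τstar with hCc
  have hCpos : 0 < Cc := lt_min (by positivity) hτpos
  have hCle : Cc ≤ τstar := min_le_right _ _
  have hlow : ∀ τ ∈ Set.Icc (0:ℝ) τstar, ∀ a ∈ Q, Cc * f a ≤ 1 + τ * φ₀ a := by
    intro τ hτ a ha
    rcases le_or_gt 0 (φ₀ a) with h | h
    · have h1 : Cc * f a ≤ M⁻¹ * M :=
        mul_le_mul (min_le_left _ _) (hfM a ha) (hf0 a ha) (by positivity)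
      rw [inv_mul_cancel₀ hMpos.ne'] at h1
      nlinarith [mul_nonneg hτ.1 h]
    · have h2 : τstar * φ₀ a ≤ τ * φ₀ a := mul_le_mul_of_nonpos_right hτ.2 h.le
      have h3 : Cc * f a ≤ τstar * f a := mul_le_mul_of_nonneg_right hCle (hf0 a ha)
      have h4 := hid a
      simp only [hf] at h3 h4 ⊢
      linarith
  have hXpos : ∀ τ ∈ Set.Ico (0:ℝ) τstar, ∀ a ∈ Q, 0 < 1 + τ * φ₀ a := by
    intro τ hτ a ha
    rcases le_or_gt 0 (φ₀ a) with h | h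
    · nlinarith [mul_nonneg hτ.1 h]
    · have h2 : τstar * φ₀ a < τ * φ₀ a := mul_lt_mul_of_neg_right hτ.2 h
      have h4 := hid a
      have h5 : 0 ≤ τstar * (φ₀ a - m₀) := mul_nonneg hτpos.le (hf0 a ha)
      linarith
  -- majorant
  set g : ℝ × ℝ → ℝ := fun a => (Real.sqrt (f a))⁻¹ with hgdef
  have hgint : IntegrableOn g Q volume := g_integrable Q hQcomp hQmeas φ₀ hφcont m₀ hmin hnd
  set B : (ℝ × ℝ) × (ℝ × ℝ) → ℝ := fun p => (τstar / Cc) * (g p.1 * g p.2) with hBdef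
  have hQQmeas : MeasurableSet (Q ×ˢ Q) := hQmeas.prod hQmeas
  have hBint : IntegrableOn B (Q ×ˢ Q) volume := by
    have hgg : IntegrableOn (fun p : (ℝ × ℝ) × (ℝ × ℝ) => g p.1 * g p.2) (Q ×ˢ Q) volume := by
      rw [IntegrableOn, Measure.volume_eq_prod, ← Measure.prod_restrict]
      exact hgint.mul_prod hgint
    exact hgg.const_mul _
  -- null set of minima
  obtain ⟨S, hS, hSint, r, hr, c₁, c₂, hc₁, hc₁₂, hbnd⟩ := hnd
  set N : Set ((ℝ × ℝ) × (ℝ × ℝ)) :=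
    ((S : Set (ℝ × ℝ)) ×ˢ (Set.univ : Set (ℝ × ℝ))) ∪
    ((Set.univ : Set (ℝ × ℝ)) ×ˢ (S : Set (ℝ × ℝ))) with hNdef
  have hSvol : volume (S : Set (ℝ × ℝ)) = 0 := S.finite_toSet.measure_zero volume
  have hNnull : volume N = 0 := by
    apply le_antisymm _ zero_le
    apply le_trans (measure_union_le _ _)
    rw [Measure.volume_eq_prod, Measure.prod_prod, Measure.prod_prod, hSvol]
    simp
  set Gs : Set ((ℝ × ℝ) × (ℝ × ℝ)) := (Q ×ˢ Q) \ N with hGdef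
  have hSclosed : IsClosed (S : Set (ℝ × ℝ)) := S.finite_toSet.isClosed
  have hNmeas : MeasurableSet N :=
    (hSclosed.measurableSet.prod MeasurableSet.univ).union
      (MeasurableSet.univ.prod hSclosed.measurableSet)
  have hGmeas : MeasurableSet Gs := hQQmeas.diff hNmeas
  have hrestr : volume.restrict (Q ×ˢ Q) = volume.restrict Gs := by
    apply Measure.restrict_congr_set
    rw [MeasureTheory.ae_eq_set]
    constructor
    · refine measure_mono_null ?_ hNnull
      intro p hp
      by_contra hN
      exact hp.2 ⟨hp.1, hN⟩
    · have : Gs \ (Q ×ˢ Q) = ∅ := by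
        rw [Set.diff_eq_empty]
        exact Set.diff_subset
      rw [this]; simp
  have hGpos : ∀ p ∈ Gs, p.1 ∈ Q ∧ p.2 ∈ Q ∧ 0 < f p.1 ∧ 0 < f p.2 := by
    intro p hp
    have hp1 : p.1 ∈ Q := hp.1.1
    have hp2 : p.2 ∈ Q := hp.1.2
    refine ⟨hp1, hp2, ?_, ?_⟩
    · rcases lt_or_eq_of_le (hmin _ hp1) with h | h
      · exact sub_pos.mpr h
      · exact absurd (Or.inl ⟨by rw [hS]; exact ⟨hp1, h.symm⟩, Set.mem_univ _⟩) hp.2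
    · rcases lt_or_eq_of_le (hmin _ hp2) with h | h
      · exact sub_pos.mpr h
      · exact absurd (Or.inr ⟨Set.mem_univ _, by rw [hS]; exact ⟨hp2, h.symm⟩⟩) hp.2
  have haeG : ∀ᵐ p ∂(volume.restrict (Q ×ˢ Q)), p ∈ Gs := by
    rw [hrestr]; exact ae_restrict_mem hGmeas
  -- K in terms of Fk
  have hKF : ∀ p : (ℝ × ℝ) × (ℝ × ℝ), K p.1 p.2 = Fk (f p.1) (f p.2) := by
    intro p
    rw [hK]
    unfold Fk
    rcases eq_or_ne (φ₀ p.1) (φ₀ p.2) with h | h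
    · rw [if_neg (by simpa using h), if_neg (by simp [hf, h]), one_div]
    · have hfne : f p.1 ≠ f p.2 := fun hh => h (by
        have : φ₀ p.1 - m₀ = φ₀ p.2 - m₀ := hh
        linarith)
      rw [if_pos h, if_pos hfne]
      have e1 : f p.1 - f p.2 = φ₀ p.1 - φ₀ p.2 := by simp only [hf]; ring
      have e2 : f p.1 = φ₀ p.1 - m₀ := rfl
      have e3 : f p.2 = φ₀ p.2 - m₀ := rfl
      rw [e1, e2, e3]
  -- continuity of K on Gs
  have hφf : ContinuousOn f Q := hφcont.sub continuousOn_const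
  have hmapQ : ContinuousOn (fun p : (ℝ × ℝ) × (ℝ × ℝ) => (f p.1, f p.2)) (Q ×ˢ Q) := by
    apply ContinuousOn.prodMk
    · exact hφf.comp continuous_fst.continuousOn (fun p hp => hp.1)
    · exact hφf.comp continuous_snd.continuousOn (fun p hp => hp.2)
  have hKcont : ContinuousOn (fun p : (ℝ × ℝ) × (ℝ × ℝ) => Fk (f p.1) (f p.2)) Gs := by
    intro p hp
    obtain ⟨h1, h2, h3, h4⟩ := hGpos p hp
    exact (Fk_continuousAt h3 h4).comp_continuousWithinAt
      ((hmapQ.mono Set.diff_subset) p hp)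
  have hKaesm : AEStronglyMeasurable (fun p : (ℝ × ℝ) × (ℝ × ℝ) => K p.1 p.2)
      (volume.restrict (Q ×ˢ Q)) := by
    rw [hrestr]
    apply (hKcont.aestronglyMeasurable hGmeas).congr
    filter_upwards [ae_restrict_mem hGmeas] with p hp
    exact (hKF p).symm
  -- bound for K
  have hτC : 1 ≤ τstar / Cc := (one_le_div hCpos).mpr hCle
  have hKbound : ∀ p ∈ Gs, ‖K p.1 p.2‖ ≤ B p := by
    intro p hp
    obtain ⟨h1, h2, h3, h4⟩ := hGpos p hp
    rw [hKF p, Real.norm_eq_abs, abs_of_nonneg (Fk_pos h3 h4).le]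
    have step1 : Fk (f p.1) (f p.2) ≤ (Real.sqrt (f p.1 * f p.2))⁻¹ := Fk_le h3 h4
    have step2 : (Real.sqrt (f p.1 * f p.2))⁻¹ = g p.1 * g p.2 := by
      rw [Real.sqrt_mul h3.le, mul_inv]
    have step3 : g p.1 * g p.2 ≤ B p := by
      simp only [hBdef]
      exact le_mul_of_one_le_left (by positivity) hτC
    calc Fk (f p.1) (f p.2) ≤ (Real.sqrt (f p.1 * f p.2))⁻¹ := step1
      _ = g p.1 * g p.2 := step2
      _ ≤ B p := step3
  have hKint : IntegrableOn (fun p : (ℝ × ℝ) × (ℝ × ℝ) => K p.1 p.2) (Q ×ˢ Q) volume := by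
    apply hBint.mono' hKaesm
    filter_upwards [haeG] with p hp
    exact hKbound p hp
  refine ⟨hKint, ?_⟩
  -- the approximating kernels
  set Gf : ℝ → (ℝ × ℝ) × (ℝ × ℝ) → ℝ := fun τ p =>
    if φ₀ p.1 ≠ φ₀ p.2 then
      Real.log ((1 + τ * φ₀ p.1) / (1 + τ * φ₀ p.2)) / (φ₀ p.1 - φ₀ p.2)
    else τ / (1 + τ * φ₀ p.1) with hGfdef
  have hGfFk : ∀ τ ∈ Set.Icc (0:ℝ) τstar, ∀ p : (ℝ × ℝ) × (ℝ × ℝ),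
      Gf τ p = τ * Fk (1 + τ * φ₀ p.1) (1 + τ * φ₀ p.2) := by
    intro τ hτ p
    rcases eq_or_lt_of_le hτ.1 with h0 | h0
    · by_cases h : φ₀ p.1 = φ₀ p.2 <;> simp [hGfdef, Fk, ← h0, h]
    · rcases eq_or_ne (φ₀ p.1) (φ₀ p.2) with h | h
      · have hXeq : 1 + τ * φ₀ p.2 = 1 + τ * φ₀ p.1 := by rw [h]
        have e2 : Fk (1 + τ * φ₀ p.1) (1 + τ * φ₀ p.2) = (1 + τ * φ₀ p.1)⁻¹ := by
          rw [hXeq, Fk, if_neg (not_ne_iff.mpr rfl)]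
        rw [e2]
        simp only [hGfdef]
        rw [if_neg (not_ne_iff.mpr h), div_eq_mul_inv]
      · have hXne : 1 + τ * φ₀ p.1 ≠ 1 + τ * φ₀ p.2 := by
          intro hh
          exact h (mul_left_cancel₀ (ne_of_gt h0) (by linarith))
        simp only [hGfdef]
        rw [if_pos h, Fk, if_pos hXne]
        have hΔ : φ₀ p.1 - φ₀ p.2 ≠ 0 := sub_ne_zero.mpr h
        have hXY : (1 + τ * φ₀ p.1) - (1 + τ * φ₀ p.2) = τ * (φ₀ p.1 - φ₀ p.2) := by ring
        rw [hXY]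
        field_simp
  have hGfcont : ∀ τ ∈ Set.Ico (0:ℝ) τstar, ContinuousOn (Gf τ) (Q ×ˢ Q) := by
    intro τ hτ
    have hcont2 : ContinuousOn
        (fun p : (ℝ × ℝ) × (ℝ × ℝ) => τ * Fk (1 + τ * φ₀ p.1) (1 + τ * φ₀ p.2)) (Q ×ˢ Q) := by
      apply ContinuousOn.mul continuousOn_const
      intro p hp
      have hm : ContinuousWithinAt
          (fun q : (ℝ × ℝ) × (ℝ × ℝ) => (1 + τ * φ₀ q.1, 1 + τ * φ₀ q.2)) (Q ×ˢ Q) p := by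
        apply ContinuousWithinAt.prodMk
        · exact (continuousWithinAt_const.add (continuousWithinAt_const.mul
            ((hφcont.comp continuous_fst.continuousOn (fun q hq => hq.1)) p hp)))
        · exact (continuousWithinAt_const.add (continuousWithinAt_const.mul
            ((hφcont.comp continuous_snd.continuousOn (fun q hq => hq.2)) p hp)))
      exact (Fk_continuousAt (hXpos τ hτ p.1 hp.1) (hXpos τ hτ p.2 hp.2)).comp_continuousWithinAt hm
    apply hcont2.congr
    intro p hp
    exact hGfFk τ (Set.Ico_subset_Icc_self hτ) p
  have hGfbound : ∀ τ ∈ Set.Ico (0:ℝ) τstar, ∀ p ∈ Gs, ‖Gf τ p‖ ≤ B p := by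
    intro τ hτ p hp
    obtain ⟨h1, h2, h3, h4⟩ := hGpos p hp
    have hX1 := hXpos τ hτ p.1 h1
    have hX2 := hXpos τ hτ p.2 h2
    rw [hGfFk τ (Set.Ico_subset_Icc_self hτ) p]
    have hpos : 0 ≤ τ * Fk (1 + τ * φ₀ p.1) (1 + τ * φ₀ p.2) :=
      mul_nonneg hτ.1 (Fk_pos hX1 hX2).le
    rw [Real.norm_eq_abs, abs_of_nonneg hpos]
    have hFb := Fk_le hX1 hX2
    have hsp : 0 < Real.sqrt (f p.1 * f p.2) := Real.sqrt_pos.mpr (by positivity)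
    have hge : Cc * Real.sqrt (f p.1 * f p.2)
        ≤ Real.sqrt ((1 + τ * φ₀ p.1) * (1 + τ * φ₀ p.2)) := by
      have e : Real.sqrt ((Cc * f p.1) * (Cc * f p.2))
          = Cc * Real.sqrt (f p.1 * f p.2) := by
        rw [show (Cc * f p.1) * (Cc * f p.2) = Cc ^ 2 * (f p.1 * f p.2) by ring,
          Real.sqrt_mul (sq_nonneg Cc), Real.sqrt_sq hCpos.le]
      rw [← e]
      apply Real.sqrt_le_sqrt
      apply mul_le_mul (hlow τ (Set.Ico_subset_Icc_self hτ) p.1 h1)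
        (hlow τ (Set.Ico_subset_Icc_self hτ) p.2 h2)
        (by positivity) hX1.le
    have hinv : (Real.sqrt ((1 + τ * φ₀ p.1) * (1 + τ * φ₀ p.2)))⁻¹
        ≤ (Cc * Real.sqrt (f p.1 * f p.2))⁻¹ :=
      inv_anti₀ (by positivity) hge
    calc τ * Fk (1 + τ * φ₀ p.1) (1 + τ * φ₀ p.2)
        ≤ τstar * (Cc * Real.sqrt (f p.1 * f p.2))⁻¹ :=
          mul_le_mul hτ.2.le (le_trans hFb hinv) (Fk_pos hX1 hX2).le hτpos.le
      _ = B p := by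
          simp only [hBdef, hgdef]
          rw [mul_inv, Real.sqrt_mul h3.le, mul_inv, div_eq_mul_inv]
          ring
  have hGfint : ∀ τ ∈ Set.Ico (0:ℝ) τstar, IntegrableOn (Gf τ) (Q ×ˢ Q) volume := by
    intro τ hτ
    apply hBint.mono' ((hGfcont τ hτ).aestronglyMeasurable hQQmeas)
    filter_upwards [haeG] with p hp
    exact hGfbound τ hτ p hp
  have hTrep : ∀ τ ∈ Set.Ico (0:ℝ) τstar, T τ = (1 / L ^ 4) * ∫ p in Q ×ˢ Q, Gf τ p := by
    intro τ hτ
    rw [hT τ hτ]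
    congr 1
    exact iterated_eq Q (fun a b =>
      if φ₀ a ≠ φ₀ b then
        Real.log ((1 + τ * φ₀ a) / (1 + τ * φ₀ b)) / (φ₀ a - φ₀ b)
      else τ / (1 + τ * φ₀ a)) (hGfint τ hτ)
  set l := nhdsWithin τstar (Set.Ico 0 τstar) with hldef
  have hmemIco : Set.Ico (0:ℝ) τstar ∈ l := self_mem_nhdsWithin
  have hptwise : ∀ p ∈ Gs, Tendsto (fun τ => Gf τ p) l (nhds (K p.1 p.2)) := by
    intro p hp
    obtain ⟨h1, h2, h3, h4⟩ := hGpos p hp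
    have hlim1 : Tendsto (fun τ : ℝ => τ * Fk (1 + τ * φ₀ p.1) (1 + τ * φ₀ p.2)) (nhds τstar)
        (nhds (τstar * Fk (1 + τstar * φ₀ p.1) (1 + τstar * φ₀ p.2))) := by
      apply Tendsto.mul tendsto_id
      have hposa : 0 < 1 + τstar * φ₀ p.1 := by rw [hid p.1]; exact mul_pos hτpos h3
      have hposb : 0 < 1 + τstar * φ₀ p.2 := by rw [hid p.2]; exact mul_pos hτpos h4
      have hc := Fk_continuousAt (p := (1 + τstar * φ₀ p.1, 1 + τstar * φ₀ p.2)) hposa hposb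
      have hmap : Tendsto (fun τ : ℝ => (1 + τ * φ₀ p.1, 1 + τ * φ₀ p.2)) (nhds τstar)
          (nhds (1 + τstar * φ₀ p.1, 1 + τstar * φ₀ p.2)) := by
        apply Tendsto.prodMk_nhds
        · exact (continuous_const.add (continuous_id.mul continuous_const)).tendsto τstar
        · exact (continuous_const.add (continuous_id.mul continuous_const)).tendsto τstar
      exact hc.tendsto.comp hmap
    have hval : τstar * Fk (1 + τstar * φ₀ p.1) (1 + τstar * φ₀ p.2) = K p.1 p.2 := by
      rw [hid p.1, hid p.2, Fk_smul hτpos.ne', hKF p, ← mul_assoc,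
        mul_inv_cancel₀ hτpos.ne', one_mul]
    have hlim2 : Tendsto (fun τ : ℝ => τ * Fk (1 + τ * φ₀ p.1) (1 + τ * φ₀ p.2)) l
        (nhds (K p.1 p.2)) := by
      rw [← hval]
      exact hlim1.mono_left nhdsWithin_le_nhds
    apply Filter.Tendsto.congr' ?_ hlim2
    filter_upwards [hmemIco] with τ hτ
    exact (hGfFk τ (Set.Ico_subset_Icc_self hτ) p).symm
  have hDCT : Tendsto (fun τ => ∫ p in Q ×ˢ Q, Gf τ p) l
      (nhds (∫ p in Q ×ˢ Q, K p.1 p.2)) := by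
    apply MeasureTheory.tendsto_integral_filter_of_dominated_convergence B
    · filter_upwards [hmemIco] with τ hτ
      exact (hGfcont τ hτ).aestronglyMeasurable hQQmeas
    · filter_upwards [hmemIco] with τ hτ
      filter_upwards [haeG] with p hp
      exact hGfbound τ hτ p hp
    · exact hBint
    · filter_upwards [haeG] with p hp
      exact hptwise p hp
  have hfinal : (1 / L ^ 4) * ∫ a in Q, ∫ b in Q, K a b
      = (1 / L ^ 4) * ∫ p in Q ×ˢ Q, K p.1 p.2 := by
    congr 1
    exact iterated_eq Q K hKint
  rw [hfinal]
  apply Filter.Tendsto.congr' ?_ (hDCT.const_mul (1 / L ^ 4))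
  filter_upwards [hmemIco] with τ hτ
  exact (hTrep τ hτ).symm
end

section
/- Assume lim_{τ→τ*⁻} F(τ) = +∞. If there exists a constant C > 0 such that α(τ)(φ₀(a)/(1+τφ₀(a)) − φ̄(τ)) ≤ C for all a ∈ Q and all τ ∈ [0,τ*), then α(τ) ≤ 2C(τ*−τ) for all τ ∈ [0,τ*) and ∫₀^{τ*} F(τ)² dτ = +∞; that is, the blow-up time in the original time variable is infinite, so there is no initial datum for which only the minimum of the solution diverges in finite time. -/
open MeasureTheory Real Set Filter

private lemma aux_deriv (Q : Set (ℝ × ℝ)) (hQmeas : MeasurableSet Q) (hQcomp : IsCompact Q)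
    (φ₀ : ℝ × ℝ → ℝ) (hφcont : ContinuousOn φ₀ Q)
    (m₀ : ℝ) (hmin : ∀ a ∈ Q, m₀ ≤ φ₀ a) (hm₀ : m₀ < 0)
    (τstar : ℝ) (hτm : τstar * m₀ = -1)
    (M : ℝ) (hMpos : 0 < M) (hM : ∀ a ∈ Q, |φ₀ a| ≤ M)
    (τ₀ : ℝ) (hτ₀ : τ₀ ∈ Set.Ico 0 τstar)
    (hint1 : IntegrableOn (fun a => 1 / (1 + τ₀ * φ₀ a)) Q) :
    HasDerivAt (fun τ => ∫ a in Q, 1 / (1 + τ * φ₀ a))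
      (-(∫ a in Q, φ₀ a / (1 + τ₀ * φ₀ a) ^ 2)) τ₀ := by
  obtain ⟨hτ₀0, hτ₀s⟩ := hτ₀
  set τ₁ : ℝ := (τ₀ + τstar) / 2 with hτ₁def
  have hτ₁lt : τ₁ < τstar := by rw [hτ₁def]; linarith
  have hτ₁ge : 0 ≤ τ₁ := by rw [hτ₁def]; linarith
  have hτ₁m : 0 < 1 + τ₁ * m₀ := by
    have h2 : τstar * m₀ < τ₁ * m₀ := mul_lt_mul_of_neg_right hτ₁lt hm₀
    nlinarith [hτm]
  set ε : ℝ := min ((τstar - τ₀) / 2) (1 / (2 * M)) with hεdef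
  have hεpos : 0 < ε := lt_min (by linarith) (by positivity)
  set c : ℝ := min (1 / 2) (1 + τ₁ * m₀) with hcdef
  have hcpos : 0 < c := lt_min one_half_pos hτ₁m
  have hball : ∀ τ ∈ Metric.ball τ₀ ε, ∀ a ∈ Q, c ≤ 1 + τ * φ₀ a := by
    intro τ hτ a ha
    rw [Metric.mem_ball, Real.dist_eq, abs_lt] at hτ
    have hτub : τ < τ₁ := by
      have h5 : ε ≤ (τstar - τ₀) / 2 := min_le_left _ _
      have := hτ.2
      rw [hτ₁def]; linarith
    have hMa := abs_le.mp (hM a ha)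
    rcases le_or_gt 0 τ with hτ0 | hτ0
    · have hlow : τ₁ * m₀ ≤ τ * φ₀ a := by
        rcases le_or_gt 0 (φ₀ a) with hφ | hφ
        · have h6 : 0 ≤ τ * φ₀ a := mul_nonneg hτ0 hφ
          nlinarith
        · nlinarith [hmin a ha]
      calc c ≤ 1 + τ₁ * m₀ := min_le_right _ _
      _ ≤ 1 + τ * φ₀ a := by linarith
    · have h5 : ε ≤ 1 / (2 * M) := min_le_right _ _
      have hτlb : -(1 / (2 * M)) < τ := by
        have := hτ.1; linarith
      have h7 : τ * M ≤ τ * φ₀ a := mul_le_mul_of_nonpos_left hMa.2 hτ0.le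
      have h8 : -(1 / 2) ≤ τ * M := by
        rw [neg_le]
        have h9 : -τ * M ≤ (1 / (2 * M)) * M := by
          apply mul_le_mul_of_nonneg_right _ hMpos.le
          linarith
        have h10 : (1 / (2 * M)) * M = 1 / 2 := by field_simp
        rw [neg_mul] at h9
        linarith
      calc c ≤ 1 / 2 := min_le_left _ _
      _ ≤ 1 + τ * φ₀ a := by linarith
  have hne : ∀ τ ∈ Metric.ball τ₀ ε, ∀ a ∈ Q, 1 + τ * φ₀ a ≠ 0 :=
    fun τ hτ a ha => (lt_of_lt_of_le hcpos (hball τ hτ a ha)).ne'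
  have hτ₀ball : τ₀ ∈ Metric.ball τ₀ ε := Metric.mem_ball_self hεpos
  have hres := hasDerivAt_integral_of_dominated_loc_of_deriv_le
    (μ := volume.restrict Q)
    (F := fun τ a => 1 / (1 + τ * φ₀ a))
    (F' := fun τ a => -(φ₀ a / (1 + τ * φ₀ a) ^ 2))
    (x₀ := τ₀) (bound := fun _ => M / c ^ 2) (Metric.ball_mem_nhds τ₀ hεpos)
    (by
      filter_upwards [Metric.ball_mem_nhds τ₀ hεpos] with τ hτ
      exact (continuousOn_const.div
        (continuousOn_const.add (continuousOn_const.mul hφcont))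
        (fun a ha => hne τ hτ a ha)).aestronglyMeasurable hQmeas)
    hint1
    (by
      refine ((hφcont.div
        (((continuousOn_const.add (continuousOn_const.mul hφcont)).pow 2))
        (fun a ha => pow_ne_zero 2 (hne τ₀ hτ₀ball a ha))).neg).aestronglyMeasurable hQmeas)
    (by
      apply ae_restrict_of_forall_mem hQmeas
      intro a ha τ hτ
      rw [norm_neg, Real.norm_eq_abs, abs_div]
      have hd : c ≤ 1 + τ * φ₀ a := hball τ hτ a ha
      have hd2 : |(1 + τ * φ₀ a) ^ 2| = (1 + τ * φ₀ a) ^ 2 := abs_of_nonneg (sq_nonneg _)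
      rw [hd2]
      exact div_le_div₀ hMpos.le (hM a ha) (by positivity)
        (pow_le_pow_left₀ hcpos.le hd 2))
    (integrableOn_const hQcomp.measure_lt_top.ne)
    (by
      apply ae_restrict_of_forall_mem hQmeas
      intro a ha τ hτ
      have hd : HasDerivAt (fun t : ℝ => 1 + t * φ₀ a) (φ₀ a) τ := by
        simpa using ((hasDerivAt_id τ).mul_const (φ₀ a)).const_add 1
      have := hd.inv (hne τ hτ a ha)
      simp only [one_div]
      exact this.congr_deriv (by ring))
  have heq : (∫ a in Q, -(φ₀ a / (1 + τ₀ * φ₀ a) ^ 2)) = -(∫ a in Q, φ₀ a / (1 + τ₀ * φ₀ a) ^ 2) :=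
    integral_neg _
  rw [heq] at hres
  exact hres.2


private lemma aux_lint (T C : ℝ) (hT : 0 < T) (hC : 0 < C) :
    ∫⁻ τ in Set.Ico 0 T, ENNReal.ofReal ((2 * C * (T - τ))⁻¹) = ⊤ := by
  by_contra hne
  set h : ℝ → ℝ := fun τ => (2 * C * (T - τ))⁻¹ with hhdef
  have hmeas : Measurable h :=
    ((measurable_const.mul (measurable_const.sub measurable_id))).inv
  have hae : 0 ≤ᵐ[volume.restrict (Set.Ico 0 T)] h := by
    apply ae_restrict_of_forall_mem measurableSet_Ico
    intro τ hτ
    have : (0:ℝ) ≤ 2 * C * (T - τ) := by nlinarith [hτ.2, hC]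
    positivity
  have hfin : HasFiniteIntegral h (volume.restrict (Set.Ico 0 T)) := by
    rw [hasFiniteIntegral_iff_ofReal hae]
    exact lt_top_iff_ne_top.mpr hne
  have hint : IntegrableOn h (Set.Ico 0 T) := ⟨hmeas.aestronglyMeasurable, hfin⟩
  have hint2 : IntervalIntegrable h volume 0 T :=
    (intervalIntegrable_iff_integrableOn_Ioo_of_le hT.le).mpr
      (hint.mono_set Ioo_subset_Ico_self)
  have hint3 : IntervalIntegrable (fun τ => (τ - T)⁻¹) volume 0 T := by
    have h4 := hint2.const_mul (-(2 * C))
    have hfun : ∀ τ : ℝ, -(2 * C) * h τ = (τ - T)⁻¹ := by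
      intro τ
      rcases eq_or_ne τ T with rfl | hne'
      · simp [hhdef]
      · rw [hhdef]
        have hsub : T - τ ≠ 0 := sub_ne_zero.mpr (fun e => hne' e.symm)
        have hsub2 : τ - T ≠ 0 := sub_ne_zero.mpr hne'
        field_simp
        ring
    exact h4.congr (fun τ _ => hfun τ)
  rw [intervalIntegrable_sub_inv_iff] at hint3
  rcases hint3 with h' | h'
  · exact hT.ne h'
  · exact h' right_mem_uIcc

/-- Assume `F(τ) → +∞` as `τ → τ*⁻`. If the solution is bounded above by a
constant `C > 0` on `Q × [0,τ*)`, then `α(τ) ≤ 2C(τ*−τ)` on `[0,τ*)` and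
`∫₀^{τ*} F(τ)² dτ = +∞`: the blow-up time in the original time variable is infinite, so no
initial datum produces a one-sided (minimum-only) blow up in finite time. -/
theorem stmt_9
    (L : ℝ) (hL : 0 < L)
    (Q : Set (ℝ × ℝ)) (hQ : Q = Set.Icc (0, 0) (L, L))
    (φ₀ : ℝ × ℝ → ℝ) (hφcont : ContinuousOn φ₀ Q)
    (hmean : ∫ a in Q, φ₀ a = 0)
    (m₀ : ℝ) (hmin : ∀ a ∈ Q, m₀ ≤ φ₀ a) (hatt : ∃ a ∈ Q, φ₀ a = m₀)
    (hm₀ : m₀ < 0)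
    (τstar : ℝ) (hτstar : τstar = -1 / m₀)
    (F φbar α : ℝ → ℝ)
    (hF : ∀ τ ∈ Set.Ico 0 τstar, F τ = (1 / L ^ 2) * ∫ a in Q, 1 / (1 + τ * φ₀ a))
    (hφbar : ∀ τ ∈ Set.Ico 0 τstar,
      φbar τ = (∫ a in Q, φ₀ a / (1 + τ * φ₀ a) ^ 2) / (∫ a in Q, 1 / (1 + τ * φ₀ a)))
    (hα : ∀ τ ∈ Set.Ico 0 τstar, α τ = ((F τ) ^ 2)⁻¹)
    (hFtop : Filter.Tendsto F (nhdsWithin τstar (Set.Ico 0 τstar)) Filter.atTop)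
    (C : ℝ) (hC : 0 < C)
    (hbound : ∀ a ∈ Q, ∀ τ ∈ Set.Ico 0 τstar,
      α τ * (φ₀ a / (1 + τ * φ₀ a) - φbar τ) ≤ C) :
    (∀ τ ∈ Set.Ico 0 τstar, α τ ≤ 2 * C * (τstar - τ)) ∧
    ∫⁻ τ in Set.Ico 0 τstar, ENNReal.ofReal ((F τ) ^ 2) = ⊤ := by
  have hQmeas : MeasurableSet Q := by rw [hQ]; exact measurableSet_Icc
  have hQcomp : IsCompact Q := by rw [hQ]; exact isCompact_Icc
  have hQne : Q.Nonempty := by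
    refine ⟨(0, 0), ?_⟩
    rw [hQ]
    exact ⟨le_refl _, ⟨hL.le, hL.le⟩⟩
  have hm₀ne : m₀ ≠ 0 := hm₀.ne
  have hτpos : 0 < τstar := by
    rw [hτstar]; exact div_pos_of_neg_of_neg (by norm_num) hm₀
  have hτm : τstar * m₀ = -1 := by
    rw [hτstar]; field_simp
  have hdenpos : ∀ τ ∈ Set.Ico 0 τstar, ∀ a ∈ Q, 0 < 1 + τ * φ₀ a := by
    intro τ hτ a ha
    have h1 : τ * m₀ ≤ τ * φ₀ a := mul_le_mul_of_nonneg_left (hmin a ha) hτ.1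
    have h2 : τstar * m₀ < τ * m₀ := by
      rcases eq_or_lt_of_le hτ.1 with h | h
      · rw [← h]; simpa [hτm] using by nlinarith
      · exact mul_lt_mul_of_neg_right hτ.2 hm₀
    nlinarith [hτm]
  -- bound on φ₀
  obtain ⟨M₀, hM₀⟩ := hQcomp.exists_bound_of_continuousOn hφcont
  set M : ℝ := max M₀ 1 with hMdef
  have hM1 : (1:ℝ) ≤ M := le_max_right _ _
  have hMpos : (0:ℝ) < M := lt_of_lt_of_le one_pos hM1
  have hM : ∀ a ∈ Q, |φ₀ a| ≤ M := fun a ha => le_trans (hM₀ a ha) (le_max_left _ _)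
  -- volume of Q
  have hvol : (volume Q).toReal = L * L := by
    rw [hQ, Icc_prod_eq, Measure.volume_eq_prod, Measure.prod_prod]
    simp [Real.volume_Icc, ENNReal.toReal_mul, ENNReal.toReal_ofReal hL.le]
  have hvolpos : 0 < (volume Q).toReal := by rw [hvol]; positivity
  have hvolne : volume Q ≠ ⊤ := hQcomp.measure_lt_top.ne
  -- the two basic integrals
  set G : ℝ → ℝ := fun τ => ∫ a in Q, 1 / (1 + τ * φ₀ a) with hGdef
  set D : ℝ → ℝ := fun τ => ∫ a in Q, φ₀ a / (1 + τ * φ₀ a) ^ 2 with hDdef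
  have hcont1 : ∀ τ ∈ Set.Ico 0 τstar, ContinuousOn (fun a => 1 / (1 + τ * φ₀ a)) Q := by
    intro τ hτ
    exact continuousOn_const.div
      (continuousOn_const.add (continuousOn_const.mul hφcont))
      (fun a ha => (hdenpos τ hτ a ha).ne')
  have hint1 : ∀ τ ∈ Set.Ico 0 τstar, IntegrableOn (fun a => 1 / (1 + τ * φ₀ a)) Q :=
    fun τ hτ => (hcont1 τ hτ).integrableOn_compact hQcomp
  -- positivity of G
  have hGpos : ∀ τ ∈ Set.Ico 0 τstar, 0 < G τ := by
    intro τ hτ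
    have hc : (0:ℝ) < (1 + τ * M)⁻¹ := by
      have : (0:ℝ) < 1 + τ * M := by nlinarith [hτ.1]
      positivity
    have hlow : ∀ a ∈ Q, (1 + τ * M)⁻¹ ≤ 1 / (1 + τ * φ₀ a) := by
      intro a ha
      rw [← one_div]
      apply one_div_le_one_div_of_le (hdenpos τ hτ a ha)
      have := (abs_le.mp (hM a ha)).2
      nlinarith [hτ.1]
    have := setIntegral_ge_of_const_le hQmeas hvolne hlow (hint1 τ hτ)
    calc (0:ℝ) < (1 + τ * M)⁻¹ * (volume Q).toReal := by positivity
    _ ≤ G τ := by rw [mul_comm]; exact this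
  -- relation between F and G
  have hFG : ∀ τ ∈ Set.Ico 0 τstar, F τ = (1 / L ^ 2) * G τ := hF
  have hFpos : ∀ τ ∈ Set.Ico 0 τstar, 0 < F τ := by
    intro τ hτ
    rw [hFG τ hτ]
    have := hGpos τ hτ
    positivity
  -- point where φ₀ vanishes
  have hQconn : IsPreconnected Q := by
    rw [hQ, Icc_prod_eq]
    exact isPreconnected_Icc.prod isPreconnected_Icc
  have hφ₀int : IntegrableOn φ₀ Q := hφcont.integrableOn_compact hQcomp
  obtain ⟨a₁, ha₁Q, ha₁max⟩ := hQcomp.exists_isMaxOn hQne hφcont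
  have hmax0 : 0 ≤ φ₀ a₁ := by
    by_contra h
    push_neg at h
    have hle : ∫ a in Q, φ₀ a ≤ ∫ _a in Q, φ₀ a₁ :=
      setIntegral_mono_on hφ₀int (integrableOn_const hQcomp.measure_lt_top.ne)
        hQmeas (fun a ha => ha₁max ha)
    rw [hmean, setIntegral_const, smul_eq_mul] at hle
    nlinarith [show volume.real Q = (volume Q).toReal from rfl]
  obtain ⟨astar, hastar, hastarval⟩ := hatt
  obtain ⟨a₀, ha₀Q, ha₀⟩ := hQconn.intermediate_value hastar ha₁Q hφcont
    (by rw [hastarval]; exact ⟨hm₀.le, hmax0⟩ : (0:ℝ) ∈ Icc (φ₀ astar) (φ₀ a₁))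
  -- derivative of G
  have key : ∀ τ₀ ∈ Set.Ico 0 τstar, HasDerivAt G (-(D τ₀)) τ₀ := by
    intro τ₀ hτ₀
    exact aux_deriv Q hQmeas hQcomp φ₀ hφcont m₀ hmin hm₀ τstar hτm M hMpos hM τ₀ hτ₀
      (hint1 τ₀ hτ₀)
  -- the differential inequality
  set K : ℝ := C / L ^ 4 with hKdef
  have hKpos : 0 < K := by positivity
  have hkey : ∀ τ ∈ Set.Ico 0 τstar, -(D τ) ≤ K * (G τ) ^ 3 := by
    intro τ hτ
    have hb := hbound a₀ ha₀Q τ hτ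
    rw [ha₀] at hb
    rw [hα τ hτ, hφbar τ hτ] at hb
    simp only [zero_div, mul_zero, zero_sub] at hb
    rw [hFG τ hτ] at hb
    have hG := hGpos τ hτ
    have e1 : (((1 / L ^ 2) * G τ) ^ 2)⁻¹ * -(D τ / G τ) = -(D τ) * L ^ 4 / (G τ) ^ 3 := by
      field_simp
    rw [e1] at hb
    rw [div_le_iff₀ (by positivity : (0:ℝ) < (G τ) ^ 3)] at hb
    rw [hKdef, div_mul_eq_mul_div, le_div_iff₀ (by positivity : (0:ℝ) < L ^ 4)]
    linarith
  -- the monotone function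
  set v : ℝ → ℝ := fun τ => K * τ + ((G τ) ^ 2)⁻¹ / 2 with hvdef
  have hvderiv : ∀ τ ∈ Set.Ico 0 τstar, HasDerivAt v (K - -(D τ) / (G τ) ^ 3) τ := by
    intro τ hτ
    have hG := hGpos τ hτ
    have h1 : HasDerivAt (fun t => (G t) ^ 2) ((2:ℕ) * (G τ) ^ 1 * -(D τ)) τ :=
      (key τ hτ).pow 2
    have h2 : HasDerivAt (fun t => ((G t) ^ 2)⁻¹)
        (-((2:ℕ) * (G τ) ^ 1 * -(D τ)) / ((G τ) ^ 2) ^ 2) τ :=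
      h1.inv (by positivity)
    have h3 : HasDerivAt v
        (K * 1 + (-((2:ℕ) * (G τ) ^ 1 * -(D τ)) / ((G τ) ^ 2) ^ 2) / 2) τ :=
      ((hasDerivAt_id τ).const_mul K).add (h2.div_const 2)
    convert h3 using 1
    field_simp
    ring
  have hvmono : MonotoneOn v (Set.Ico 0 τstar) := by
    apply monotoneOn_of_deriv_nonneg (convex_Ico 0 τstar)
    · exact fun τ hτ => ((hvderiv τ hτ).continuousAt).continuousWithinAt
    · rw [interior_Ico]
      exact fun τ hτ =>
        ((hvderiv τ (Ioo_subset_Ico_self hτ)).differentiableAt).differentiableWithinAt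
    · rw [interior_Ico]
      intro τ hτ
      have hτ' := Ioo_subset_Ico_self hτ
      rw [(hvderiv τ hτ').deriv]
      have hG := hGpos τ hτ'
      have := hkey τ hτ'
      rw [sub_nonneg, div_le_iff₀ (by positivity : (0:ℝ) < (G τ) ^ 3)]
      linarith [hkey τ hτ']
  -- the limit of v at τstar
  haveI hNB : (nhdsWithin τstar (Set.Ico 0 τstar)).NeBot := by
    apply mem_closure_iff_nhdsWithin_neBot.mp
    rw [closure_Ico hτpos.ne]
    exact ⟨hτpos.le, le_refl _⟩
  have hGtop : Tendsto G (nhdsWithin τstar (Set.Ico 0 τstar)) atTop := by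
    have h1 : Tendsto (fun τ => L ^ 2 * F τ) (nhdsWithin τstar (Set.Ico 0 τstar)) atTop :=
      hFtop.const_mul_atTop (by positivity)
    apply h1.congr'
    filter_upwards [self_mem_nhdsWithin] with τ hτ
    rw [hFG τ hτ]
    field_simp
  have hvlim : Tendsto v (nhdsWithin τstar (Set.Ico 0 τstar)) (nhds (K * τstar)) := by
    have h1 : Tendsto (fun τ => K * τ) (nhdsWithin τstar (Set.Ico 0 τstar)) (nhds (K * τstar)) :=
      ((continuous_const.mul continuous_id).tendsto τstar).mono_left nhdsWithin_le_nhds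
    have h2 : Tendsto (fun τ => ((G τ) ^ 2)⁻¹ / 2) (nhdsWithin τstar (Set.Ico 0 τstar))
        (nhds 0) := by
      have h3 : Tendsto (fun τ => (G τ) ^ 2) (nhdsWithin τstar (Set.Ico 0 τstar)) atTop := by
        have := hGtop.atTop_mul_atTop₀ hGtop
        apply this.congr
        intro τ; ring
      have h4 := (tendsto_inv_atTop_zero).comp h3
      have := h4.div_const 2
      simpa using this
    have := h1.add h2
    simpa using this
  -- conclusion of part 1
  have hpart1 : ∀ τ ∈ Set.Ico 0 τstar, α τ ≤ 2 * C * (τstar - τ) := by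
    intro τ hτ
    have hvle : v τ ≤ K * τstar := by
      apply ge_of_tendsto hvlim
      have hIoi : Ioi τ ∈ nhdsWithin τstar (Set.Ico 0 τstar) :=
        mem_nhdsWithin_of_mem_nhds (Ioi_mem_nhds hτ.2)
      filter_upwards [self_mem_nhdsWithin, hIoi] with σ hσ hστ
      exact hvmono hτ hσ (le_of_lt hστ)
    have hG := hGpos τ hτ
    have hGinv : ((G τ) ^ 2)⁻¹ ≤ 2 * K * (τstar - τ) := by
      have : K * τ + ((G τ) ^ 2)⁻¹ / 2 ≤ K * τstar := hvle
      linarith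
    rw [hα τ hτ, hFG τ hτ]
    have e2 : (((1 / L ^ 2) * G τ) ^ 2)⁻¹ = L ^ 4 * ((G τ) ^ 2)⁻¹ := by
      field_simp
    rw [e2]
    calc L ^ 4 * ((G τ) ^ 2)⁻¹ ≤ L ^ 4 * (2 * K * (τstar - τ)) := by
          apply mul_le_mul_of_nonneg_left hGinv (by positivity)
    _ = 2 * C * (τstar - τ) := by rw [hKdef]; field_simp; try ring
  refine ⟨hpart1, ?_⟩
  -- part 2
  have hFsq : ∀ τ ∈ Set.Ico 0 τstar, (2 * C * (τstar - τ))⁻¹ ≤ (F τ) ^ 2 := by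
    intro τ hτ
    have hFp := hFpos τ hτ
    have h1 : ((F τ) ^ 2)⁻¹ ≤ 2 * C * (τstar - τ) := by
      rw [← hα τ hτ]; exact hpart1 τ hτ
    have h2 : (2 * C * (τstar - τ))⁻¹ ≤ (((F τ) ^ 2)⁻¹)⁻¹ :=
      inv_anti₀ (by positivity) h1
    rwa [inv_inv] at h2
  have hItop : ∫⁻ τ in Set.Ico 0 τstar, ENNReal.ofReal ((2 * C * (τstar - τ))⁻¹) = ⊤ :=
    aux_lint τstar C hτpos hC
  rw [eq_top_iff, ← hItop]
  apply lintegral_mono_ae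
  apply ae_restrict_of_forall_mem measurableSet_Ico
  intro τ hτ
  exact ENNReal.ofReal_le_ofReal (hFsq τ hτ)
end

section
/- If φ₀ is nondegenerate, then there exist constants c, C > 0 and ε₀ ∈ (0,1) such that for all ε with 0 < ε < ε₀: c·log(1/ε) ≤ ∫_Q da/(ε² + φ₀(a) − m₀) ≤ C·log(1/ε). -/
open MeasureTheory Real Set Filter

lemma oneD (c ε R : ℝ) (hc : 0 < c) (hε : 0 < ε) (hR : 0 ≤ R) :
    ∫ y in (0:ℝ)..R, y / (ε ^ 2 + c * y ^ 2)
      = (1 / (2 * c)) * (Real.log (ε ^ 2 + c * R ^ 2) - Real.log (ε ^ 2)) := by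
  have hpos : ∀ y : ℝ, 0 < ε ^ 2 + c * y ^ 2 := fun y => by positivity
  have hderiv : ∀ y ∈ Set.uIcc (0:ℝ) R,
      HasDerivAt (fun t => (1 / (2 * c)) * Real.log (ε ^ 2 + c * t ^ 2))
        (y / (ε ^ 2 + c * y ^ 2)) y := by
    intro y _
    have h1 : HasDerivAt (fun t : ℝ => ε ^ 2 + c * t ^ 2) (c * (2 * y)) y := by
      simpa using ((hasDerivAt_pow 2 y).const_mul c).const_add (ε ^ 2)
    have h2 := (h1.log (hpos y).ne').const_mul (1 / (2 * c))
    refine h2.congr_deriv ?_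
    field_simp
  have hci : ContinuousOn (fun y : ℝ => y / (ε ^ 2 + c * y ^ 2)) (Set.uIcc 0 R) := by
    apply ContinuousOn.div continuousOn_id (by fun_prop) (fun y _ => (hpos y).ne')
  have := intervalIntegral.integral_eq_sub_of_hasDerivAt hderiv
    (hci.intervalIntegrable)
  rw [this]
  ring_nf

lemma ballInt (c ε R : ℝ) (hc : 0 < c) (hε : 0 < ε) (hR : 0 ≤ R) :
    ∫ a in Metric.closedBall (0 : ℝ × ℝ) R, 1 / (ε ^ 2 + c * ‖a‖ ^ 2)
      = (4 / c) * (Real.log (ε ^ 2 + c * R ^ 2) - Real.log (ε ^ 2)) := by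
  have key : ∫ a in Metric.closedBall (0 : ℝ × ℝ) R, 1 / (ε ^ 2 + c * ‖a‖ ^ 2)
      = ∫ a : ℝ × ℝ, Set.indicator (Set.Iic R) (fun t => 1 / (ε ^ 2 + c * t ^ 2)) ‖a‖ := by
    rw [← integral_indicator measurableSet_closedBall]
    congr 1; funext a
    by_cases h : ‖a‖ ≤ R <;>
      simp [Set.indicator, Metric.mem_closedBall, dist_zero_right, h]
  rw [key, integral_fun_norm_addHaar volume
    (Set.indicator (Set.Iic R) fun t => 1 / (ε ^ 2 + c * t ^ 2))]
  have hdim : Module.finrank ℝ (ℝ × ℝ) = 2 := by simp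
  have hvol : (volume (Metric.ball (0 : ℝ × ℝ) 1)).toReal = 4 := by
    have : Metric.ball ((0:ℝ), (0:ℝ)) 1 = Metric.ball (0:ℝ) 1 ×ˢ Metric.ball (0:ℝ) 1 :=
      (ball_prod_same 0 0 1).symm
    rw [show (0 : ℝ × ℝ) = ((0:ℝ),(0:ℝ)) from rfl, this, Measure.volume_eq_prod,
      Measure.prod_prod, Real.volume_ball]
    norm_num [ENNReal.toReal_mul]
  rw [hdim, measureReal_def, hvol]
  have hind : ∫ y in Set.Ioi (0:ℝ),
      y ^ (2 - 1) • Set.indicator (Set.Iic R) (fun t => 1 / (ε ^ 2 + c * t ^ 2)) y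
      = ∫ y in (0:ℝ)..R, y / (ε ^ 2 + c * y ^ 2) := by
    have : ∀ y : ℝ, y ^ (2 - 1) • Set.indicator (Set.Iic R) (fun t => 1 / (ε ^ 2 + c * t ^ 2)) y
        = Set.indicator (Set.Iic R) (fun t => t / (ε ^ 2 + c * t ^ 2)) y := by
      intro y
      by_cases h : y ∈ Set.Iic R <;> simp [Set.indicator, h, smul_eq_mul] <;> ring
    simp_rw [this]
    rw [integral_indicator measurableSet_Iic, intervalIntegral.integral_of_le hR]
    congr 1
    rw [Measure.restrict_restrict measurableSet_Iic, Set.Iic_inter_Ioi]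
  rw [hind, oneD c ε R hc hε hR]
  simp only [nsmul_eq_mul, smul_eq_mul]
  field_simp
  ring

lemma ballIntT (c ε R : ℝ) (a₀ : ℝ × ℝ) (hc : 0 < c) (hε : 0 < ε) (hR : 0 ≤ R) :
    ∫ a in Metric.closedBall a₀ R, 1 / (ε ^ 2 + c * ‖a - a₀‖ ^ 2)
      = (4 / c) * (Real.log (ε ^ 2 + c * R ^ 2) - Real.log (ε ^ 2)) := by
  have h1 : ∫ a in Metric.closedBall a₀ R, 1 / (ε ^ 2 + c * ‖a - a₀‖ ^ 2)
      = ∫ a : ℝ × ℝ, Set.indicator (Metric.closedBall (0 : ℝ × ℝ) R)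
          (fun y => 1 / (ε ^ 2 + c * ‖y‖ ^ 2)) (a - a₀) := by
    rw [← integral_indicator measurableSet_closedBall]
    congr 1; funext a
    have hmem : a ∈ Metric.closedBall a₀ R ↔ a - a₀ ∈ Metric.closedBall (0 : ℝ × ℝ) R := by
      simp [Metric.mem_closedBall, dist_eq_norm]
    by_cases h : a ∈ Metric.closedBall a₀ R
    · rw [Set.indicator_of_mem h, Set.indicator_of_mem (hmem.mp h)]
    · rw [Set.indicator_of_notMem h, Set.indicator_of_notMem (fun hh => h (hmem.mpr hh))]
  rw [h1, integral_sub_right_eq_self _ a₀, integral_indicator measurableSet_closedBall,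
    ballInt c ε R hc hε hR]

lemma unionLe {f : ℝ × ℝ → ℝ} {s t : Set (ℝ × ℝ)} (hs : MeasurableSet s)
    (ht : MeasurableSet t)
    (hf : ∀ x ∈ t, 0 ≤ f x) (hfs : IntegrableOn f s) (hft : IntegrableOn f t) :
    ∫ x in s ∪ t, f x ≤ (∫ x in s, f x) + ∫ x in t, f x := by
  rw [show s ∪ t = s ∪ (t \ s) by rw [Set.union_diff_self],
    setIntegral_union disjoint_sdiff_self_right (ht.diff hs) hfs (hft.mono_set Set.diff_subset)]
  gcongr
  · exact (ae_restrict_mem ht).mono fun x hx => hf x hx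
  · exact Set.diff_subset

lemma biUnionLe {ι : Type*} (f : ℝ × ℝ → ℝ)
    (S : Finset ι) (g : ι → Set (ℝ × ℝ)) (hf : ∀ i ∈ S, ∀ x ∈ g i, 0 ≤ f x)
    (hg : ∀ i ∈ S, MeasurableSet (g i))
    (hfi : ∀ i ∈ S, IntegrableOn f (g i)) :
    ∫ x in ⋃ i ∈ S, g i, f x ≤ ∑ i ∈ S, ∫ x in g i, f x := by
  classical
  induction S using Finset.induction_on with
  | empty => simp
  | @insert a s hnot ih =>
    have hgs : ∀ i ∈ s, MeasurableSet (g i) := fun i hi => hg i (Finset.mem_insert_of_mem hi)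
    have hfnn : ∀ i ∈ s, ∀ x ∈ g i, 0 ≤ f x := fun i hi => hf i (Finset.mem_insert_of_mem hi)
    have hfs : ∀ i ∈ s, IntegrableOn f (g i) := fun i hi => hfi i (Finset.mem_insert_of_mem hi)
    rw [Finset.set_biUnion_insert, Finset.sum_insert hnot]
    calc ∫ x in g a ∪ ⋃ i ∈ s, g i, f x
        ≤ (∫ x in g a, f x) + ∫ x in ⋃ i ∈ s, g i, f x := by
          apply unionLe (hg a (Finset.mem_insert_self a s))
            (s.measurableSet_biUnion hgs) ?_ (hfi a (Finset.mem_insert_self a s))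
          · exact integrableOn_finset_iUnion.mpr hfs
          · intro x hx
            obtain ⟨i, hi, hxi⟩ := Set.mem_iUnion₂.mp hx
            exact hfnn i hi x hxi
      _ ≤ (∫ x in g a, f x) + ∑ i ∈ s, ∫ x in g i, f x := by
          gcongr; exact ih hfnn hgs hfs


/-- If `φ₀` is nondegenerate, there exist `c, C > 0` and `ε₀ ∈ (0,1)` with
`c·log(1/ε) ≤ ∫_Q da/(ε² + φ₀(a) − m₀) ≤ C·log(1/ε)` for all `0 < ε < ε₀`. -/
theorem stmt_11
    (L : ℝ) (hL : 0 < L)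
    (Q : Set (ℝ × ℝ)) (hQ : Q = Set.Icc (0, 0) (L, L))
    (φ₀ : ℝ × ℝ → ℝ) (hφcont : ContinuousOn φ₀ Q)
    (m₀ : ℝ) (hmin : ∀ a ∈ Q, m₀ ≤ φ₀ a) (hatt : ∃ a ∈ Q, φ₀ a = m₀)
    (hnd : Nondegenerate Q φ₀ m₀) :
    ∃ c > (0 : ℝ), ∃ C > (0 : ℝ), ∃ ε₀ ∈ Set.Ioo (0 : ℝ) 1,
      ∀ ε : ℝ, 0 < ε → ε < ε₀ →
        c * Real.log (1 / ε) ≤ (∫ a in Q, 1 / (ε ^ 2 + φ₀ a - m₀)) ∧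
        (∫ a in Q, 1 / (ε ^ 2 + φ₀ a - m₀)) ≤ C * Real.log (1 / ε) := by
  obtain ⟨S, hS, hSint, r, hr, c₁, c₂, hc₁, hc12, hcomp⟩ := hnd
  have hc₂ : (0:ℝ) < c₂ := lt_of_lt_of_le hc₁ hc12
  obtain ⟨a₀, ha₀Q, ha₀m⟩ := hatt
  have ha₀S : a₀ ∈ S := by
    have : a₀ ∈ (↑S : Set (ℝ × ℝ)) := by rw [hS]; exact ⟨ha₀Q, ha₀m⟩
    exact_mod_cast this
  have ha₀int : a₀ ∈ interior Q := hSint (by exact_mod_cast ha₀S)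
  obtain ⟨ρ, hρ, hball⟩ := Metric.isOpen_iff.mp isOpen_interior a₀ ha₀int
  set R := min r (ρ / 2) with hRdef
  have hR : 0 < R := lt_min hr (by linarith)
  have hRr : R ≤ r := min_le_left _ _
  have hBQ : Metric.closedBall a₀ R ⊆ Q := by
    intro x hx
    have h1 : dist x a₀ ≤ R := Metric.mem_closedBall.mp hx
    have h2 : R ≤ ρ / 2 := min_le_right _ _
    exact interior_subset (hball (Metric.mem_ball.mpr (by linarith)))
  have hQcomp : IsCompact Q := hQ ▸ isCompact_Icc
  have hQmeas : MeasurableSet Q := hQ ▸ measurableSet_Icc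
  have hQclosed : IsClosed Q := hQ ▸ isClosed_Icc
  have hQvol : volume Q = ENNReal.ofReal L * ENNReal.ofReal L := by
    rw [hQ, show Set.Icc ((0:ℝ),(0:ℝ)) (L, L)
        = Set.Icc (0:ℝ) L ×ˢ Set.Icc (0:ℝ) L from (Set.Icc_prod_eq _ _),
      Measure.volume_eq_prod, Measure.prod_prod, Real.volume_Icc, sub_zero]
  have hQvolfin : volume Q < ⊤ := by
    rw [hQvol]; exact ENNReal.mul_lt_top ENNReal.ofReal_lt_top ENNReal.ofReal_lt_top
  have hQvolR : (volume Q).toReal = L * L := by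
    rw [hQvol, ENNReal.toReal_mul, ENNReal.toReal_ofReal hL.le]
  set U := ⋃ i ∈ S, Metric.ball i r with hU
  set K := Q \ U with hK
  have hUopen : IsOpen U := isOpen_biUnion fun i _ => Metric.isOpen_ball
  have hKcomp : IsCompact K := hQcomp.diff hUopen
  have hKQ : K ⊆ Q := Set.diff_subset
  have hKmeas : MeasurableSet K := hQmeas.diff hUopen.measurableSet
  obtain ⟨δ, hδ0, hδK⟩ : ∃ δ > (0:ℝ), ∀ a ∈ K, δ ≤ φ₀ a - m₀ := by
    rcases Set.eq_empty_or_nonempty K with h | h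
    · exact ⟨1, one_pos, by rw [h]; intro a ha; simp at ha⟩
    · obtain ⟨b, hbK, hbmin⟩ := hKcomp.exists_isMinOn h (hφcont.mono hKQ)
      have hbne : φ₀ b ≠ m₀ := by
        intro hb
        have hbS : b ∈ (↑S : Set (ℝ × ℝ)) := by rw [hS]; exact ⟨hKQ hbK, hb⟩
        exact hbK.2 (Set.mem_biUnion (by exact_mod_cast hbS) (Metric.mem_ball_self hr))
      have hble := hmin b (hKQ hbK)
      refine ⟨φ₀ b - m₀, by cases lt_or_eq_of_le hble with
        | inl h => linarith
        | inr h => exact absurd h.symm hbne, fun a ha => ?_⟩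
      have := hbmin ha
      simp only [Set.mem_setOf_eq] at this
      linarith
  refine ⟨4 / c₂, by positivity,
    L ^ 2 / δ + (S.card : ℝ) * ((4 / c₁) * (Real.log (1 + c₁ * r ^ 2) + 2)), ?_,
    min (Real.exp (-1)) (c₂ * R ^ 2), ⟨lt_min (Real.exp_pos _) (by positivity),
      lt_of_le_of_lt (min_le_left _ _) (by
        rw [show (1:ℝ) = Real.exp 0 by simp]; exact Real.exp_lt_exp.mpr (by norm_num))⟩,
    ?_⟩
  · have h1 : (0:ℝ) < L ^ 2 / δ := by positivity
    have h2 : (0:ℝ) ≤ Real.log (1 + c₁ * r ^ 2) :=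
      Real.log_nonneg (by nlinarith)
    have h3 : (0:ℝ) ≤ (S.card : ℝ) * ((4 / c₁) * (Real.log (1 + c₁ * r ^ 2) + 2)) := by
      positivity
    linarith
  intro ε hε hεlt
  have hεexp : ε < Real.exp (-1) := lt_of_lt_of_le hεlt (min_le_left _ _)
  have hεc₂ : ε < c₂ * R ^ 2 := lt_of_lt_of_le hεlt (min_le_right _ _)
  have hε1 : ε < 1 := lt_trans hεexp (by
    rw [show (1:ℝ) = Real.exp 0 by simp]; exact Real.exp_lt_exp.mpr (by norm_num))
  have hX1 : 1 ≤ Real.log (1 / ε) := by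
    rw [one_div, Real.log_inv]
    have : Real.log ε ≤ Real.log (Real.exp (-1)) := Real.log_le_log hε hεexp.le
    rw [Real.log_exp] at this; linarith
  have hXlog : Real.log (1 / ε) = -Real.log ε := by rw [one_div, Real.log_inv]
  -- positivity of denominators on Q
  have hpos : ∀ a ∈ Q, 0 < ε ^ 2 + φ₀ a - m₀ := fun a ha => by
    have := hmin a ha; have := pow_pos hε 2; linarith
  -- integrability of f on Q
  set f : ℝ × ℝ → ℝ := fun a => 1 / (ε ^ 2 + φ₀ a - m₀) with hf
  have hfcont : ContinuousOn f Q := by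
    apply ContinuousOn.div continuousOn_const
      ((continuousOn_const.add hφcont).sub continuousOn_const)
    exact fun a ha => (hpos a ha).ne'
  have hfint : IntegrableOn f Q := hfcont.integrableOn_compact hQcomp
  have hfnnQ : ∀ a ∈ Q, 0 ≤ f a := fun a ha => le_of_lt (by
    rw [hf]; exact one_div_pos.mpr (hpos a ha))
  constructor
  · -- LOWER BOUND
    set g : ℝ × ℝ → ℝ := fun a => 1 / (ε ^ 2 + c₂ * ‖a - a₀‖ ^ 2) with hg
    have hgpos : ∀ a, 0 < ε ^ 2 + c₂ * ‖a - a₀‖ ^ 2 := fun a => by positivity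
    have hgcont : Continuous g := by
      rw [hg]
      exact continuous_const.div (by fun_prop) (fun a => (hgpos a).ne')
    have step1 : ∫ a in Metric.closedBall a₀ R, g a ≤ ∫ a in Metric.closedBall a₀ R, f a := by
      apply setIntegral_mono_on
      · exact hgcont.continuousOn.integrableOn_compact (isCompact_closedBall _ _)
      · exact hfint.mono_set hBQ
      · exact measurableSet_closedBall
      · intro a ha
        have haQ : a ∈ Q := hBQ ha
        have hdist : ‖a - a₀‖ ≤ r := by
          have := Metric.mem_closedBall.mp ha
          rw [dist_eq_norm] at this; linarith
        have hle := (hcomp a₀ ha₀S a haQ hdist).2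
        rw [hg, hf]
        apply one_div_le_one_div_of_le (hpos a haQ) (by linarith)
    have step2 : ∫ a in Metric.closedBall a₀ R, f a ≤ ∫ a in Q, f a := by
      apply setIntegral_mono_set hfint ((ae_restrict_mem hQmeas).mono fun x hx => hfnnQ x hx)
        (HasSubset.Subset.eventuallyLE hBQ)
    have step3 : ∫ a in Metric.closedBall a₀ R, g a
        = (4 / c₂) * (Real.log (ε ^ 2 + c₂ * R ^ 2) - Real.log (ε ^ 2)) :=
      ballIntT c₂ ε R a₀ hc₂ hε hR.le
    have step4 : (4 / c₂) * Real.log (1 / ε)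
        ≤ (4 / c₂) * (Real.log (ε ^ 2 + c₂ * R ^ 2) - Real.log (ε ^ 2)) := by
      apply mul_le_mul_of_nonneg_left _ (by positivity)
      have hl : Real.log ε ≤ Real.log (ε ^ 2 + c₂ * R ^ 2) :=
        Real.log_le_log hε (by nlinarith)
      rw [hXlog, Real.log_pow]
      push_cast
      linarith
    calc (4 / c₂) * Real.log (1 / ε)
        ≤ ∫ a in Metric.closedBall a₀ R, g a := by rw [step3]; exact step4
      _ ≤ ∫ a in Metric.closedBall a₀ R, f a := step1
      _ ≤ ∫ a in Q, f a := step2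
  · -- UPPER BOUND
    classical
    set B : ℝ × ℝ → Set (ℝ × ℝ) := fun i => Q ∩ Metric.closedBall i r with hB
    have hBmeas : ∀ i ∈ S, MeasurableSet (B i) :=
      fun i _ => hQmeas.inter measurableSet_closedBall
    have hBsub : ∀ i, B i ⊆ Q := fun i => Set.inter_subset_left
    have hcover : Q = K ∪ ⋃ i ∈ S, B i := by
      apply Set.Subset.antisymm
      · intro a ha
        by_cases h : a ∈ U
        · obtain ⟨i, hi, hai⟩ := Set.mem_iUnion₂.mp h
          refine Or.inr (Set.mem_iUnion₂.mpr ⟨i, hi, ha, ?_⟩)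
          exact Metric.ball_subset_closedBall hai
        · exact Or.inl ⟨ha, h⟩
      · rintro a (h | h)
        · exact hKQ h
        · obtain ⟨i, hi, hai⟩ := Set.mem_iUnion₂.mp h
          exact hai.1
    have hsplit : ∫ a in Q, f a ≤ (∫ a in K, f a) + ∑ i ∈ S, ∫ a in B i, f a := by
      calc ∫ a in Q, f a = ∫ a in K ∪ ⋃ i ∈ S, B i, f a := by rw [← hcover]
        _ ≤ (∫ a in K, f a) + ∫ a in ⋃ i ∈ S, B i, f a := by
            apply unionLe hKmeas (S.measurableSet_biUnion hBmeas) _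
              (hfint.mono_set hKQ)
            · apply hfint.mono_set
              intro a ha
              obtain ⟨i, hi, hai⟩ := Set.mem_iUnion₂.mp ha
              exact hBsub i hai
            · intro x hx
              obtain ⟨i, hi, hai⟩ := Set.mem_iUnion₂.mp hx
              exact hfnnQ x (hBsub i hai)
        _ ≤ (∫ a in K, f a) + ∑ i ∈ S, ∫ a in B i, f a := by
            gcongr
            exact biUnionLe f S B (fun i _ x hx => hfnnQ x (hBsub i hx)) hBmeas
              (fun i _ => hfint.mono_set (hBsub i))
    have hKbound : ∫ a in K, f a ≤ L ^ 2 / δ := by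
      have hKfin : volume K ≠ ⊤ := (lt_of_le_of_lt (measure_mono hKQ) hQvolfin).ne
      calc ∫ a in K, f a ≤ ∫ _ in K, 1 / δ := by
            apply setIntegral_mono_on (hfint.mono_set hKQ)
              (integrableOn_const (lt_of_le_of_lt (measure_mono hKQ) hQvolfin).ne)
              hKmeas
            intro a ha
            have h1 := hδK a ha
            have h2 := sq_nonneg ε
            rw [hf]
            exact one_div_le_one_div_of_le hδ0 (by linarith)
        _ = (volume K).toReal * (1 / δ) := by rw [setIntegral_const, smul_eq_mul, measureReal_def]
        _ ≤ (L * L) * (1 / δ) := by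
            apply mul_le_mul_of_nonneg_right _ (by positivity)
            rw [← hQvolR]
            exact ENNReal.toReal_mono hQvolfin.ne (measure_mono hKQ)
        _ = L ^ 2 / δ := by ring
    have hBbound : ∀ i ∈ S, ∫ a in B i, f a
        ≤ (4 / c₁) * (Real.log (ε ^ 2 + c₁ * r ^ 2) - Real.log (ε ^ 2)) := by
      intro i hiS
      set g : ℝ × ℝ → ℝ := fun a => 1 / (ε ^ 2 + c₁ * ‖a - i‖ ^ 2) with hg
      have hgpos : ∀ a, 0 < ε ^ 2 + c₁ * ‖a - i‖ ^ 2 := fun a => by positivity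
      have hgcont : Continuous g := by
        rw [hg]; exact continuous_const.div (by fun_prop) (fun a => (hgpos a).ne')
      have hgint : IntegrableOn g (Metric.closedBall i r) :=
        hgcont.continuousOn.integrableOn_compact (isCompact_closedBall _ _)
      calc ∫ a in B i, f a ≤ ∫ a in B i, g a := by
            apply setIntegral_mono_on (hfint.mono_set (hBsub i))
              (hgint.mono_set Set.inter_subset_right) (hBmeas i hiS)
            intro a ha
            have haQ : a ∈ Q := ha.1
            have hdist : ‖a - i‖ ≤ r := by
              have := Metric.mem_closedBall.mp ha.2
              rw [dist_eq_norm] at this; linarith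
            have hle := (hcomp i hiS a haQ hdist).1
            rw [hf, hg]
            exact one_div_le_one_div_of_le (hgpos a) (by linarith)
        _ ≤ ∫ a in Metric.closedBall i r, g a := by
            apply setIntegral_mono_set hgint
              (Filter.Eventually.of_forall (fun a => le_of_lt (one_div_pos.mpr (hgpos a))))
              (HasSubset.Subset.eventuallyLE Set.inter_subset_right)
        _ = (4 / c₁) * (Real.log (ε ^ 2 + c₁ * r ^ 2) - Real.log (ε ^ 2)) :=
            ballIntT c₁ ε r i hc₁ hε hr.le
    have hsum : ∑ i ∈ S, ∫ a in B i, f a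
        ≤ (S.card : ℝ) * ((4 / c₁) * (Real.log (ε ^ 2 + c₁ * r ^ 2) - Real.log (ε ^ 2))) := by
      calc ∑ i ∈ S, ∫ a in B i, f a
          ≤ ∑ _i ∈ S, (4 / c₁) * (Real.log (ε ^ 2 + c₁ * r ^ 2) - Real.log (ε ^ 2)) :=
            Finset.sum_le_sum hBbound
        _ = S.card • ((4 / c₁) * (Real.log (ε ^ 2 + c₁ * r ^ 2) - Real.log (ε ^ 2))) :=
            Finset.sum_const _
        _ = (S.card : ℝ) * _ := by rw [nsmul_eq_mul]
    -- final arithmetic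
    set X := Real.log (1 / ε) with hXdef
    have hbra : Real.log (ε ^ 2 + c₁ * r ^ 2) - Real.log (ε ^ 2)
        ≤ (Real.log (1 + c₁ * r ^ 2) + 2) * X := by
      have hε2 : ε ^ 2 ≤ 1 := by nlinarith [hε.le, hε1.le]
      have h1 : Real.log (ε ^ 2 + c₁ * r ^ 2) ≤ Real.log (1 + c₁ * r ^ 2) :=
        Real.log_le_log (by positivity) (by linarith)
      have h2 : Real.log (ε ^ 2) = 2 * Real.log ε := by
        rw [Real.log_pow]; push_cast; ring
      have h3 : (0:ℝ) ≤ Real.log (1 + c₁ * r ^ 2) :=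
        Real.log_nonneg (le_add_of_nonneg_right (by positivity))
      have h4 : -Real.log ε = X := hXlog.symm
      have h5 : Real.log (1 + c₁ * r ^ 2) ≤ Real.log (1 + c₁ * r ^ 2) * X :=
        le_mul_of_one_le_right h3 hX1
      have hexpand : (Real.log (1 + c₁ * r ^ 2) + 2) * X
          = Real.log (1 + c₁ * r ^ 2) * X + 2 * X := by ring
      rw [hexpand, h2]
      linarith
    have hcnt : (0:ℝ) ≤ (S.card : ℝ) := Nat.cast_nonneg _
    calc ∫ a in Q, f a
        ≤ (∫ a in K, f a) + ∑ i ∈ S, ∫ a in B i, f a := hsplit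
      _ ≤ L ^ 2 / δ + (S.card : ℝ)
            * ((4 / c₁) * (Real.log (ε ^ 2 + c₁ * r ^ 2) - Real.log (ε ^ 2))) := by
          gcongr
      _ ≤ (L ^ 2 / δ) * X + (S.card : ℝ) * ((4 / c₁) * ((Real.log (1 + c₁ * r ^ 2) + 2) * X)) := by
          apply add_le_add
          · exact le_mul_of_one_le_right (by positivity) hX1
          · apply mul_le_mul_of_nonneg_left _ hcnt
            exact mul_le_mul_of_nonneg_left hbra (by positivity)
      _ = (L ^ 2 / δ + (S.card : ℝ) * ((4 / c₁) * (Real.log (1 + c₁ * r ^ 2) + 2))) * X := by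
          ring
end

section
/- If φ₀ is nondegenerate, then there exist constants c, C > 0 and ε₀ ∈ (0,1) such that for all ε with 0 < ε < ε₀: c/ε² ≤ ∫_Q da/(ε² + φ₀(a) − m₀)² ≤ C/ε². -/
open MeasureTheory Real Set Filter

set_option maxHeartbeats 1000000

lemma aux_one_dim {ε c : ℝ} (hε : 0 < ε) (hc : 0 < c) :
    Integrable (fun t : ℝ => (ε^2 + c*t^2)⁻¹) ∧
    (∫ t : ℝ, (ε^2 + c*t^2)⁻¹) = π / (Real.sqrt c * ε) := by
  have hsc : (0:ℝ) < Real.sqrt c := Real.sqrt_pos.2 hc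
  set b : ℝ := Real.sqrt c / ε with hbdef
  have hb : (0:ℝ) < b := div_pos hsc hε
  have key : ∀ t : ℝ, (ε^2 + c*t^2)⁻¹ = ε⁻¹^2 * (1 + (b*t)^2)⁻¹ := by
    intro t
    have h1 : ε^2 * (1 + (b*t)^2) = ε^2 + c*t^2 := by
      have : Real.sqrt c ^ 2 = c := Real.sq_sqrt hc.le
      rw [hbdef, mul_pow, div_pow, this]
      field_simp
    rw [← h1, mul_inv, ← inv_pow]
  have hint : Integrable (fun t : ℝ => (ε^2 + c*t^2)⁻¹) := by
    simp_rw [key]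
    exact ((integrable_comp_mul_left_iff (fun x : ℝ => (1+x^2)⁻¹) hb.ne').2
      integrable_inv_one_add_sq).const_mul _
  refine ⟨hint, ?_⟩
  simp_rw [key]
  rw [integral_const_mul, MeasureTheory.Measure.integral_comp_mul_left (fun x : ℝ => (1+x^2)⁻¹) b,
    integral_univ_inv_one_add_sq]
  rw [abs_of_pos (inv_pos.2 hb), smul_eq_mul, hbdef]
  field_simp

lemma aux_planar {ε c : ℝ} (hε : 0 < ε) (hc : 0 < c) (p : ℝ × ℝ) :
    Integrable (fun a : ℝ × ℝ => (ε^2 + c*(a.1-p.1)^2)⁻¹ * (ε^2 + c*(a.2-p.2)^2)⁻¹) ∧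
    (∫ a : ℝ × ℝ, (ε^2 + c*(a.1-p.1)^2)⁻¹ * (ε^2 + c*(a.2-p.2)^2)⁻¹) = π^2 / (c * ε^2) := by
  obtain ⟨hint, hval⟩ := aux_one_dim hε hc
  have h1 : Integrable (fun t : ℝ => (ε^2 + c*(t-p.1)^2)⁻¹) := hint.comp_sub_right p.1
  have h2 : Integrable (fun t : ℝ => (ε^2 + c*(t-p.2)^2)⁻¹) := hint.comp_sub_right p.2
  have hv1 : (∫ t : ℝ, (ε^2 + c*(t-p.1)^2)⁻¹) = π / (Real.sqrt c * ε) := by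
    rw [integral_sub_right_eq_self (fun t : ℝ => (ε^2 + c*t^2)⁻¹) p.1]; exact hval
  have hv2 : (∫ t : ℝ, (ε^2 + c*(t-p.2)^2)⁻¹) = π / (Real.sqrt c * ε) := by
    rw [integral_sub_right_eq_self (fun t : ℝ => (ε^2 + c*t^2)⁻¹) p.2]; exact hval
  have hvol : (volume : Measure (ℝ × ℝ)) = (volume : Measure ℝ).prod volume :=
    Measure.volume_eq_prod ℝ ℝ
  constructor
  · rw [hvol]; exact h1.mul_prod h2
  · rw [hvol,
      integral_prod_mul (f := fun t : ℝ => (ε^2 + c*(t-p.1)^2)⁻¹)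
        (g := fun t : ℝ => (ε^2 + c*(t-p.2)^2)⁻¹), hv1, hv2]
    have h : Real.sqrt c * Real.sqrt c = c := Real.mul_self_sqrt hc.le
    rw [div_mul_div_comm]
    congr 1
    · ring
    · rw [show Real.sqrt c * ε * (Real.sqrt c * ε) = (Real.sqrt c * Real.sqrt c) * ε^2 by ring, h]

/-- If `φ₀` is nondegenerate, there exist `c, C > 0` and `ε₀ ∈ (0,1)` with
`c/ε² ≤ ∫_Q da/(ε² + φ₀(a) − m₀)² ≤ C/ε²` for all `0 < ε < ε₀`. -/
theorem stmt_12
    (L : ℝ) (hL : 0 < L)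
    (Q : Set (ℝ × ℝ)) (hQ : Q = Set.Icc (0, 0) (L, L))
    (φ₀ : ℝ × ℝ → ℝ) (hφcont : ContinuousOn φ₀ Q)
    (m₀ : ℝ) (hmin : ∀ a ∈ Q, m₀ ≤ φ₀ a) (hatt : ∃ a ∈ Q, φ₀ a = m₀)
    (hnd : Nondegenerate Q φ₀ m₀) :
    ∃ c > (0 : ℝ), ∃ C > (0 : ℝ), ∃ ε₀ ∈ Set.Ioo (0 : ℝ) 1,
      ∀ ε : ℝ, 0 < ε → ε < ε₀ →
        c / ε ^ 2 ≤ (∫ a in Q, 1 / (ε ^ 2 + φ₀ a - m₀) ^ 2) ∧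
        (∫ a in Q, 1 / (ε ^ 2 + φ₀ a - m₀) ^ 2) ≤ C / ε ^ 2 := by
  obtain ⟨S, hS, hSint, r, hr, c₁, c₂, hc₁, hc₁₂, hbound⟩ := hnd
  have hc₂ : 0 < c₂ := lt_of_lt_of_le hc₁ hc₁₂
  have hQc : IsCompact Q := hQ ▸ isCompact_Icc
  have hQm : MeasurableSet Q := hQ ▸ measurableSet_Icc
  -- the minimum point
  obtain ⟨a₀, ha₀Q, ha₀⟩ := hatt
  have ha₀S : a₀ ∈ S := by
    have : a₀ ∈ (↑S : Set (ℝ × ℝ)) := by rw [hS]; exact ⟨ha₀Q, ha₀⟩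
    exact_mod_cast this
  have ha₀int : a₀ ∈ interior Q := hSint (by exact_mod_cast ha₀S)
  obtain ⟨ρ, hρ, hball⟩ := Metric.isOpen_iff.1 isOpen_interior a₀ ha₀int
  -- the bad set and the positive lower bound δ away from minima
  set U : Set (ℝ × ℝ) := ⋃ p ∈ S, Metric.ball p r with hU
  have hUopen : IsOpen U := isOpen_biUnion fun p _ => Metric.isOpen_ball
  have hKc : IsCompact (Q \ U) := hQc.diff hUopen
  obtain ⟨δ, hδpos, hδ⟩ : ∃ δ > 0, ∀ a ∈ Q \ U, δ ≤ φ₀ a - m₀ := by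
    rcases (Q \ U).eq_empty_or_nonempty with h | h
    · exact ⟨1, one_pos, by rw [h]; simp⟩
    · obtain ⟨x₀, hx₀, hmin'⟩ := hKc.exists_isMinOn h
        ((hφcont.mono diff_subset).sub continuousOn_const)
      refine ⟨φ₀ x₀ - m₀, ?_, fun a ha => hmin' ha⟩
      rcases lt_or_eq_of_le (hmin x₀ hx₀.1) with h' | h'
      · linarith
      · exfalso
        have hx₀S : x₀ ∈ S := by
          have : x₀ ∈ (↑S : Set (ℝ × ℝ)) := by rw [hS]; exact ⟨hx₀.1, h'.symm⟩
          exact_mod_cast this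
        exact hx₀.2 (Set.mem_biUnion hx₀S (Metric.mem_ball_self hr))
  -- constants
  refine ⟨4 / (1 + c₂) ^ 2, by positivity, L ^ 2 / δ ^ 2 + S.card * π ^ 2 / c₁, ?_,
    min (min (ρ / 2) r) (1 / 2), ⟨?_, ?_⟩, ?_⟩
  · positivity
  · simp only [lt_min_iff]
    exact ⟨⟨by linarith, hr⟩, by norm_num⟩
  · calc min (min (ρ / 2) r) (1 / 2) ≤ 1 / 2 := min_le_right _ _
      _ < 1 := by norm_num
  intro ε hε hεlt
  have hερ : ε < ρ / 2 := lt_of_lt_of_le hεlt ((min_le_left _ _).trans (min_le_left _ _))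
  have hεr : ε < r := lt_of_lt_of_le hεlt ((min_le_left _ _).trans (min_le_right _ _))
  have hε1 : ε < 1 := lt_of_lt_of_le hεlt ((min_le_right _ _).trans (by norm_num))
  have hpos : ∀ a ∈ Q, 0 < ε ^ 2 + φ₀ a - m₀ := by
    intro a ha
    have := hmin a ha
    nlinarith
  -- integrability of f on Q
  have hfc : ContinuousOn (fun a => 1 / (ε ^ 2 + φ₀ a - m₀) ^ 2) Q := by
    apply ContinuousOn.div continuousOn_const
    · exact ((continuousOn_const.add hφcont).sub continuousOn_const).pow 2
    · intro a ha
      exact pow_ne_zero 2 (hpos a ha).ne'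
  have hfQ : IntegrableOn (fun a => 1 / (ε ^ 2 + φ₀ a - m₀) ^ 2) Q :=
    hfc.integrableOn_compact hQc
  constructor
  -- LOWER BOUND
  · have hsub : Metric.closedBall a₀ ε ⊆ Q := by
      refine fun x hx => interior_subset (hball ?_)
      have := Metric.mem_closedBall.1 hx
      exact Metric.mem_ball.2 (lt_of_le_of_lt this (by linarith))
    have hlow1 : ∀ a ∈ Metric.closedBall a₀ ε,
        1 / ((1 + c₂) ^ 2 * ε ^ 4) ≤ 1 / (ε ^ 2 + φ₀ a - m₀) ^ 2 := by
      intro a ha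
      have haQ := hsub ha
      have hdist : ‖a - a₀‖ ≤ ε := by
        rw [← dist_eq_norm]; exact Metric.mem_closedBall.1 ha
      obtain ⟨-, hup⟩ := hbound a₀ ha₀S a haQ (hdist.trans hεr.le)
      have hno : (0:ℝ) ≤ ‖a - a₀‖ := norm_nonneg _
      have hsq : ‖a - a₀‖ ^ 2 ≤ ε ^ 2 := by nlinarith
      have hc₂sq := mul_le_mul_of_nonneg_left hsq hc₂.le
      have h1 : ε ^ 2 + φ₀ a - m₀ ≤ (1 + c₂) * ε ^ 2 := by nlinarith
      have h2 := hpos a haQ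
      apply one_div_le_one_div_of_le (by positivity)
      calc (ε ^ 2 + φ₀ a - m₀) ^ 2 ≤ ((1 + c₂) * ε ^ 2) ^ 2 :=
            pow_le_pow_left₀ h2.le h1 2
        _ = (1 + c₂) ^ 2 * ε ^ 4 := by ring
    have hμB : (volume (Metric.closedBall a₀ ε)).toReal = (2 * ε) * (2 * ε) := by
      rw [show Metric.closedBall a₀ ε
            = Metric.closedBall a₀.1 ε ×ˢ Metric.closedBall a₀.2 ε by
          rw [closedBall_prod_same]]
      rw [Measure.volume_eq_prod, Measure.prod_prod, Real.volume_closedBall,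
        Real.volume_closedBall, ← ENNReal.ofReal_mul (by linarith), ENNReal.toReal_ofReal
        (by nlinarith)]
    have hne : volume (Metric.closedBall a₀ ε) ≠ ⊤ :=
      ((hQc.measure_lt_top).trans_le' (measure_mono hsub)).ne
    have hlow := setIntegral_ge_of_const_le measurableSet_closedBall hne hlow1
      (hfQ.mono_set hsub)
    have hmono : (∫ a in Metric.closedBall a₀ ε, 1 / (ε ^ 2 + φ₀ a - m₀) ^ 2)
        ≤ ∫ a in Q, 1 / (ε ^ 2 + φ₀ a - m₀) ^ 2 := by
      apply setIntegral_mono_set hfQ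
      · filter_upwards [ae_restrict_mem hQm] with a ha
        positivity
      · exact HasSubset.Subset.eventuallyLE hsub
    refine le_trans ?_ (le_trans hlow hmono)
    rw [measureReal_def, hμB]
    rw [div_le_iff₀ (by positivity)] at *
    field_simp
    rw [smul_eq_mul, mul_one_div, ← mul_div_assoc, le_div_iff₀ (by positivity)]
    ring_nf
    nlinarith [sq_nonneg ε, sq_nonneg (1+c₂)]
  -- UPPER BOUND
  · set g : ℝ × ℝ → ℝ := fun a => 1 / (ε ^ 2 + δ) ^ 2 +
      ∑ p ∈ S, (ε ^ 2 + c₁ * (a.1 - p.1) ^ 2)⁻¹ * (ε ^ 2 + c₁ * (a.2 - p.2) ^ 2)⁻¹ with hg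
    have hterm_nonneg : ∀ p : ℝ × ℝ, ∀ a : ℝ × ℝ,
        (0:ℝ) ≤ (ε ^ 2 + c₁ * (a.1 - p.1) ^ 2)⁻¹ * (ε ^ 2 + c₁ * (a.2 - p.2) ^ 2)⁻¹ := by
      intro p a; positivity
    have hfg : ∀ a ∈ Q, 1 / (ε ^ 2 + φ₀ a - m₀) ^ 2 ≤ g a := by
      intro a haQ
      by_cases haU : a ∈ U
      · obtain ⟨p, hpS, hap⟩ := Set.mem_iUnion₂.1 haU
        have hdist : ‖a - p‖ ≤ r := by
          rw [← dist_eq_norm]; exact (Metric.mem_ball.1 hap).le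
        obtain ⟨hlo, -⟩ := hbound p hpS a haQ hdist
        have hx : (a.1 - p.1) ^ 2 ≤ ‖a - p‖ ^ 2 := by
          have h1 : |a.1 - p.1| ≤ ‖a - p‖ := by
            rw [Prod.norm_def]
            simpa using le_max_left ‖(a - p).1‖ ‖(a - p).2‖
          calc (a.1 - p.1) ^ 2 = |a.1 - p.1| ^ 2 := (sq_abs _).symm
            _ ≤ ‖a - p‖ ^ 2 := pow_le_pow_left₀ (abs_nonneg _) h1 2
        have hy : (a.2 - p.2) ^ 2 ≤ ‖a - p‖ ^ 2 := by
          have h1 : |a.2 - p.2| ≤ ‖a - p‖ := by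
            rw [Prod.norm_def]
            simpa using le_max_right ‖(a - p).1‖ ‖(a - p).2‖
          calc (a.2 - p.2) ^ 2 = |a.2 - p.2| ^ 2 := (sq_abs _).symm
            _ ≤ ‖a - p‖ ^ 2 := pow_le_pow_left₀ (abs_nonneg _) h1 2
        have hd1 : 0 < ε ^ 2 + c₁ * (a.1 - p.1) ^ 2 := by positivity
        have hd2 : 0 < ε ^ 2 + c₁ * (a.2 - p.2) ^ 2 := by positivity
        have hprod : (ε ^ 2 + c₁ * (a.1 - p.1) ^ 2) * (ε ^ 2 + c₁ * (a.2 - p.2) ^ 2)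
            ≤ (ε ^ 2 + φ₀ a - m₀) ^ 2 := by
          have e1 : ε ^ 2 + c₁ * (a.1 - p.1) ^ 2 ≤ ε ^ 2 + φ₀ a - m₀ := by nlinarith
          have e2 : ε ^ 2 + c₁ * (a.2 - p.2) ^ 2 ≤ ε ^ 2 + φ₀ a - m₀ := by nlinarith
          calc (ε ^ 2 + c₁ * (a.1 - p.1) ^ 2) * (ε ^ 2 + c₁ * (a.2 - p.2) ^ 2)
              ≤ (ε ^ 2 + φ₀ a - m₀) * (ε ^ 2 + φ₀ a - m₀) :=
                mul_le_mul e1 e2 hd2.le (hpos a haQ).le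
            _ = (ε ^ 2 + φ₀ a - m₀) ^ 2 := (sq _).symm
        have hstep : 1 / (ε ^ 2 + φ₀ a - m₀) ^ 2
            ≤ (ε ^ 2 + c₁ * (a.1 - p.1) ^ 2)⁻¹ * (ε ^ 2 + c₁ * (a.2 - p.2) ^ 2)⁻¹ := by
          rw [← mul_inv, one_div]
          exact inv_anti₀ (by positivity) hprod
        have hsum : (ε ^ 2 + c₁ * (a.1 - p.1) ^ 2)⁻¹ * (ε ^ 2 + c₁ * (a.2 - p.2) ^ 2)⁻¹
            ≤ ∑ q ∈ S, (ε ^ 2 + c₁ * (a.1 - q.1) ^ 2)⁻¹ * (ε ^ 2 + c₁ * (a.2 - q.2) ^ 2)⁻¹ :=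
          Finset.single_le_sum (fun q _ => hterm_nonneg q a) hpS
        have hcn : (0:ℝ) ≤ 1 / (ε ^ 2 + δ) ^ 2 := by positivity
        exact (hstep.trans hsum).trans (le_add_of_nonneg_left hcn)
      · have hδa := hδ a ⟨haQ, haU⟩
        have h1 : 1 / (ε ^ 2 + φ₀ a - m₀) ^ 2 ≤ 1 / (ε ^ 2 + δ) ^ 2 := by
          apply one_div_le_one_div_of_le (by positivity)
          have h := pow_le_pow_left₀ (by positivity : (0:ℝ) ≤ ε ^ 2 + δ)
            (by linarith : ε ^ 2 + δ ≤ ε ^ 2 + φ₀ a - m₀) 2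
          exact h
        have h2 : (0:ℝ) ≤ ∑ q ∈ S,
            (ε ^ 2 + c₁ * (a.1 - q.1) ^ 2)⁻¹ * (ε ^ 2 + c₁ * (a.2 - q.2) ^ 2)⁻¹ :=
          Finset.sum_nonneg fun q _ => hterm_nonneg q a
        exact h1.trans (le_add_of_nonneg_right h2)
    -- integrability of g and each term
    have hterm_int : ∀ p : ℝ × ℝ, Integrable
        (fun a : ℝ × ℝ => (ε ^ 2 + c₁ * (a.1 - p.1) ^ 2)⁻¹ * (ε ^ 2 + c₁ * (a.2 - p.2) ^ 2)⁻¹) :=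
      fun p => (aux_planar hε hc₁ p).1
    have hsum_int : Integrable (fun a : ℝ × ℝ => ∑ p ∈ S,
        (ε ^ 2 + c₁ * (a.1 - p.1) ^ 2)⁻¹ * (ε ^ 2 + c₁ * (a.2 - p.2) ^ 2)⁻¹) :=
      integrable_finset_sum S fun p _ => hterm_int p
    have hgQ : IntegrableOn g Q := by
      rw [hg]
      exact (integrableOn_const hQc.measure_lt_top.ne).add hsum_int.integrableOn
    have hQle : (∫ a in Q, 1 / (ε ^ 2 + φ₀ a - m₀) ^ 2) ≤ ∫ a in Q, g a :=
      setIntegral_mono_on hfQ hgQ hQm hfg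
    have hvolQ : (volume Q).toReal = L ^ 2 := by
      rw [hQ, ← Set.Icc_prod_Icc, Measure.volume_eq_prod, Measure.prod_prod,
        Real.volume_Icc, sub_zero, ← ENNReal.ofReal_mul hL.le,
        ENNReal.toReal_ofReal (by nlinarith), sq]
    have hgval : (∫ a in Q, g a) ≤ 1 / (ε ^ 2 + δ) ^ 2 * L ^ 2 + S.card * (π ^ 2 / (c₁ * ε ^ 2)) := by
      rw [hg]
      rw [integral_add (integrableOn_const (C := 1 / (ε ^ 2 + δ) ^ 2) (μ := volume) hQc.measure_lt_top.ne).integrable hsum_int.integrableOn]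
      gcongr
      · rw [setIntegral_const, measureReal_def, hvolQ, smul_eq_mul, mul_comm]
      · rw [integral_finset_sum S fun p _ => (hterm_int p).integrableOn]
        have hle : ∀ p ∈ S, (∫ a in Q,
            (ε ^ 2 + c₁ * (a.1 - p.1) ^ 2)⁻¹ * (ε ^ 2 + c₁ * (a.2 - p.2) ^ 2)⁻¹)
            ≤ π ^ 2 / (c₁ * ε ^ 2) := by
          intro p _
          calc (∫ a in Q, (ε ^ 2 + c₁ * (a.1 - p.1) ^ 2)⁻¹ * (ε ^ 2 + c₁ * (a.2 - p.2) ^ 2)⁻¹)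
              ≤ ∫ a : ℝ × ℝ, (ε ^ 2 + c₁ * (a.1 - p.1) ^ 2)⁻¹ * (ε ^ 2 + c₁ * (a.2 - p.2) ^ 2)⁻¹ :=
                setIntegral_le_integral (hterm_int p)
                  (Eventually.of_forall fun a => hterm_nonneg p a)
            _ = π ^ 2 / (c₁ * ε ^ 2) := (aux_planar hε hc₁ p).2
        calc (∑ p ∈ S, ∫ a in Q,
            (ε ^ 2 + c₁ * (a.1 - p.1) ^ 2)⁻¹ * (ε ^ 2 + c₁ * (a.2 - p.2) ^ 2)⁻¹)
            ≤ ∑ p ∈ S, π ^ 2 / (c₁ * ε ^ 2) := Finset.sum_le_sum hle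
          _ = S.card * (π ^ 2 / (c₁ * ε ^ 2)) := by rw [Finset.sum_const, nsmul_eq_mul]
    refine (hQle.trans hgval).trans ?_
    have hδε : 1 / (ε ^ 2 + δ) ^ 2 ≤ 1 / (δ ^ 2 * ε ^ 2) := by
      apply one_div_le_one_div_of_le (by positivity)
      nlinarith [mul_nonneg (sq_nonneg δ) (by nlinarith : (0:ℝ) ≤ 1 - ε ^ 2), sq_nonneg ε,
        sq_nonneg (ε ^ 2), hδpos, hε, mul_pos hε hε]
    have h1 : 1 / (ε ^ 2 + δ) ^ 2 * L ^ 2 ≤ L ^ 2 / δ ^ 2 / ε ^ 2 := by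
      calc 1 / (ε ^ 2 + δ) ^ 2 * L ^ 2 ≤ 1 / (δ ^ 2 * ε ^ 2) * L ^ 2 := by
            gcongr
        _ = L ^ 2 / δ ^ 2 / ε ^ 2 := by field_simp
    have h2 : (S.card : ℝ) * (π ^ 2 / (c₁ * ε ^ 2)) = S.card * π ^ 2 / c₁ / ε ^ 2 := by
      field_simp
    rw [h2] at *
    have : L ^ 2 / δ ^ 2 / ε ^ 2 + S.card * π ^ 2 / c₁ / ε ^ 2
        = (L ^ 2 / δ ^ 2 + S.card * π ^ 2 / c₁) / ε ^ 2 := by ring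
    linarith
end
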